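/- arXiv:2209.13347 — 8 statements merged into one kernel-verified Lean document; each statement's English description precedes it below -/
import Mathlib

section
/- If f and g are nonzero univariate real polynomials that are non-negative on all of ℝ, then gcd(f,g), f/gcd(f,g), and g/gcd(f,g) are also non-negative on all of ℝ. -/
open Polynomial Filter


lemma my_even_mult {f : Polynomial ℝ} (hf : f ≠ 0) (hpos : ∀ x : ℝ, 0 ≤ f.eval x)
    (x : ℝ) : Even (rootMultiplicity x f) := by
  by_contra hodd
  rw [Nat.not_even_iff_odd] at hodd
  set m := rootMultiplicity x f with hm
  set q := f /ₘ (X - C x) ^ m with hq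
  have heq : (X - C x) ^ m * q = f := f.pow_mul_divByMonic_rootMultiplicity_eq x
  have hqx : q.eval x ≠ 0 := eval_divByMonic_pow_rootMultiplicity_ne_zero x hf
  set c := q.eval x with hc
  have hcont : ContinuousAt (fun y => q.eval y) x := (Polynomial.continuous q).continuousAt
  rw [Metric.continuousAt_iff] at hcont
  obtain ⟨δ, hδ, hball⟩ := hcont (|c|) (abs_pos.mpr hqx)
  have hsign : ∀ y : ℝ, 0 ≤ (y - x) ^ m * q.eval y := by
    intro y
    have := hpos y
    rw [← heq] at this
    simpa using this
  have hd1 : dist (x + δ/2) x < δ := by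
    rw [Real.dist_eq, show x + δ/2 - x = δ/2 by ring, abs_of_pos (by linarith)]; linarith
  have hd2 : dist (x - δ/2) x < δ := by
    rw [Real.dist_eq, show x - δ/2 - x = -(δ/2) by ring, abs_neg,
      abs_of_pos (by linarith)]; linarith
  have h1 : 0 ≤ q.eval (x + δ/2) := by
    have := hsign (x + δ/2)
    have hp : 0 < (x + δ/2 - x) ^ m := by
      rw [show x + δ/2 - x = δ/2 by ring]; positivity
    nlinarith
  have h2 : q.eval (x - δ/2) ≤ 0 := by
    have := hsign (x - δ/2)
    have hp : (x - δ/2 - x) ^ m < 0 := by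
      rw [show x - δ/2 - x = -(δ/2) by ring]
      exact Odd.pow_neg hodd (by linarith)
    nlinarith
  have hb1 := hball hd1
  have hb2 := hball hd2
  rw [Real.dist_eq, abs_lt] at hb1 hb2
  rcases abs_cases c with ⟨hac, _⟩ | ⟨hac, _⟩ <;> rw [hac] at hb1 hb2 <;> linarith

lemma my_pos_lead {f : Polynomial ℝ} (hf : f ≠ 0) (hpos : ∀ x : ℝ, 0 ≤ f.eval x) :
    0 < f.leadingCoeff := by
  have hne : f.leadingCoeff ≠ 0 := fun h => hf (Polynomial.leadingCoeff_eq_zero.mp h)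
  rcases Nat.eq_zero_or_pos f.natDegree with h0 | h0
  · have hC : f = C (f.coeff 0) := Polynomial.eq_C_of_natDegree_eq_zero h0
    have h00 := hpos 0
    rw [hC] at h00 ⊢
    simp only [Polynomial.eval_C] at h00
    rw [Polynomial.leadingCoeff_C]
    rcases h00.lt_or_eq with h | h
    · exact h
    · exact absurd (hC ▸ h ▸ Polynomial.leadingCoeff_C _) hne
  · rcases (lt_or_ge 0 f.leadingCoeff) with h | h
    · exact h
    · exfalso
      have hdeg : 0 < f.degree := by
        rw [Polynomial.degree_eq_natDegree hf]
        exact_mod_cast h0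
      have := Polynomial.tendsto_atBot_of_leadingCoeff_nonpos f hdeg h
      obtain ⟨x, hx⟩ := (this.eventually (eventually_lt_atBot 0)).exists
      exact absurd (hpos x) (not_le.mpr hx)

lemma my_nonneg_of (n : ℕ) : ∀ (f : Polynomial ℝ), f.natDegree = n → f ≠ 0 →
    0 < f.leadingCoeff → (∀ x : ℝ, Even (rootMultiplicity x f)) →
    ∀ x : ℝ, 0 ≤ f.eval x := by
  induction n using Nat.strong_induction_on with
  | _ n ih =>
    intro f hdeg hf hlead hmult x
    by_cases hroot : ∃ z : ℝ, f.eval z = 0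
    · -- f has a root z; factor it out
      obtain ⟨z, hz⟩ := hroot
      set m := rootMultiplicity z f with hm
      have hmpos : 0 < m := (Polynomial.rootMultiplicity_pos hf).mpr hz
      set q := f /ₘ (X - C z) ^ m with hq
      have heq : (X - C z) ^ m * q = f := f.pow_mul_divByMonic_rootMultiplicity_eq z
      have hqz : q.eval z ≠ 0 := eval_divByMonic_pow_rootMultiplicity_ne_zero z hf
      have hq0 : q ≠ 0 := fun h => hqz (by simp [h])
      have hXm : ((X - C z) ^ m : Polynomial ℝ) ≠ 0 := pow_ne_zero _ (X_sub_C_ne_zero z)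
      have hdq : m + q.natDegree = n := by
        rw [← hdeg, ← heq, Polynomial.natDegree_mul hXm hq0,
          Polynomial.natDegree_pow, Polynomial.natDegree_X_sub_C, mul_one]
      have hlt : q.natDegree < n := by omega
      have hleadq : 0 < q.leadingCoeff := by
        have : f.leadingCoeff = ((X - C z) ^ m).leadingCoeff * q.leadingCoeff := by
          rw [← heq, Polynomial.leadingCoeff_mul]
        rw [((Polynomial.monic_X_sub_C z).pow m).leadingCoeff, one_mul] at this
        exact this ▸ hlead
      have hmultq : ∀ y : ℝ, Even (rootMultiplicity y q) := by
        intro y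
        by_cases hy : y = z
        · subst hy
          rw [Polynomial.rootMultiplicity_eq_zero hqz]
          exact Even.zero
        · have := hmult y
          rw [← heq, Polynomial.rootMultiplicity_mul (heq ▸ hf)] at this
          rwa [Polynomial.rootMultiplicity_eq_zero (p := (X - C z) ^ m) ?_, zero_add] at this
          intro hr
          rw [Polynomial.IsRoot, Polynomial.eval_pow, Polynomial.eval_sub,
            Polynomial.eval_X, Polynomial.eval_C, pow_eq_zero_iff hmpos.ne', sub_eq_zero] at hr
          exact hy hr
      have hqpos := ih _ hlt q rfl hq0 hleadq hmultq
      have hmeven : Even m := hmult z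
      calc (0:ℝ) ≤ (x - z) ^ m * q.eval x := by
              have : 0 ≤ (x - z) ^ m := hmeven.pow_nonneg _
              exact mul_nonneg this (hqpos x)
        _ = f.eval x := by rw [← heq]; simp
    · -- f has no root: constant sign, positive at +infinity
      push_neg at hroot
      by_contra hneg
      push_neg at hneg
      rcases Nat.eq_zero_or_pos f.natDegree with h0 | h0
      · have hC : f = C (f.coeff 0) := Polynomial.eq_C_of_natDegree_eq_zero h0
        rw [hC, Polynomial.eval_C] at hneg
        rw [hC, Polynomial.leadingCoeff_C] at hlead
        linarith
      · have hdeg' : 0 < f.degree := by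
          rw [Polynomial.degree_eq_natDegree hf]; exact_mod_cast h0
        have htop := Polynomial.tendsto_atTop_of_leadingCoeff_nonneg f hdeg' hlead.le
        obtain ⟨y, hy1, hy2⟩ := ((htop.eventually (eventually_gt_atTop 0)).and
          (eventually_ge_atTop x)).exists
        have hcont : ContinuousOn (fun t => f.eval t) (Set.Icc x y) :=
          (Polynomial.continuous f).continuousOn
        have h0mem : (0:ℝ) ∈ Set.Icc (f.eval x) (f.eval y) := ⟨hneg.le, hy1.le⟩
        obtain ⟨z, _, hz⟩ := intermediate_value_Icc hy2 hcont h0mem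
        exact hroot z hz

lemma my_quot_nonneg {f d : Polynomial ℝ} (hf : f ≠ 0) (hd : d ≠ 0)
    (hdvd : d ∣ f) (hmonic : d.Monic)
    (hfpos : ∀ x : ℝ, 0 ≤ f.eval x)
    (hevenf : ∀ x : ℝ, Even (rootMultiplicity x f))
    (hevend : ∀ x : ℝ, Even (rootMultiplicity x d)) :
    (∀ x : ℝ, 0 ≤ (f / d).eval x) := by
  set a := f / d with ha
  have heq : d * a = f := EuclideanDomain.mul_div_cancel' hd hdvd
  have ha0 : a ≠ 0 := by
    intro h; rw [h, mul_zero] at heq; exact hf heq.symm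
  have hlead : 0 < a.leadingCoeff := by
    have : f.leadingCoeff = d.leadingCoeff * a.leadingCoeff := by
      rw [← heq, Polynomial.leadingCoeff_mul]
    rw [hmonic.leadingCoeff, one_mul] at this
    exact this ▸ my_pos_lead hf hfpos
  have hmult : ∀ x : ℝ, Even (rootMultiplicity x a) := by
    intro x
    have hsum : rootMultiplicity x f = rootMultiplicity x d + rootMultiplicity x a := by
      rw [← heq, Polynomial.rootMultiplicity_mul (heq ▸ hf)]
    obtain ⟨i, hi⟩ := hevenf x
    obtain ⟨j, hj⟩ := hevend x
    exact ⟨i - j, by omega⟩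
  exact my_nonneg_of a.natDegree a rfl ha0 hlead hmult

theorem stmt0 (f g : Polynomial ℝ) (hf : f ≠ 0) (hg : g ≠ 0)
    (hfpos : ∀ x : ℝ, 0 ≤ f.eval x) (hgpos : ∀ x : ℝ, 0 ≤ g.eval x) :
    (∀ x : ℝ, 0 ≤ (gcd f g).eval x) ∧
    (∀ x : ℝ, 0 ≤ (f / gcd f g).eval x) ∧
    (∀ x : ℝ, 0 ≤ (g / gcd f g).eval x) := by
  set d := gcd f g with hd
  have hd0 : d ≠ 0 := by
    intro h
    exact hf ((gcd_eq_zero_iff f g).mp h).1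
  have hmonic : d.Monic := by
    rw [hd, ← normalize_gcd]
    exact Polynomial.monic_normalize hd0
  have hevenf := fun x => my_even_mult hf hfpos x
  have heveng := fun x => my_even_mult hg hgpos x
  have hevend : ∀ x : ℝ, Even (rootMultiplicity x d) := by
    intro x
    have h1 : rootMultiplicity x d ≤ rootMultiplicity x f :=
      (Polynomial.le_rootMultiplicity_iff hf).mpr
        ((Polynomial.pow_rootMultiplicity_dvd d x).trans (gcd_dvd_left f g))
    have h2 : rootMultiplicity x d ≤ rootMultiplicity x g :=
      (Polynomial.le_rootMultiplicity_iff hg).mpr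
        ((Polynomial.pow_rootMultiplicity_dvd d x).trans (gcd_dvd_right f g))
    have h3 : min (rootMultiplicity x f) (rootMultiplicity x g) ≤ rootMultiplicity x d :=
      (Polynomial.le_rootMultiplicity_iff hd0).mpr
        (dvd_gcd
          ((pow_dvd_pow _ (min_le_left _ _)).trans (Polynomial.pow_rootMultiplicity_dvd f x))
          ((pow_dvd_pow _ (min_le_right _ _)).trans (Polynomial.pow_rootMultiplicity_dvd g x)))
    obtain ⟨i, hi⟩ := hevenf x
    obtain ⟨j, hj⟩ := heveng x
    exact ⟨min i j, by omega⟩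
  refine ⟨?_, ?_, ?_⟩
  · exact my_nonneg_of d.natDegree d rfl hd0 (hmonic.leadingCoeff ▸ one_pos) hevend
  · exact my_quot_nonneg hf hd0 (gcd_dvd_left f g) hmonic hfpos hevenf hevend
  · exact my_quot_nonneg hg hd0 (gcd_dvd_right f g) hmonic hgpos heveng hevend
end

section
/- Let h₁, ..., hₙ ∈ ℝ[X] with gcd(h₁,...,hₙ) = 1, and let B ⊆ ℝ. If the equation f₁h₁ + ⋯ + fₙhₙ = 0 has no solution with all fᵢ strictly positive on B, then there exists t in the closure of B such that h₁(t), ..., hₙ(t) are all non-negative or all non-positive. -/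
open Polynomial Filter Set

set_option maxHeartbeats 1600000

/-- A polynomial with no zeros on `[a, ∞)` has constant sign there. -/
lemma tail_sign_right (p : Polynomial ℝ) (a : ℝ)
    (hnz : ∀ x, a ≤ x → p.eval x ≠ 0) :
    (∀ x, a ≤ x → 0 < p.eval x) ∨ (∀ x, a ≤ x → p.eval x < 0) := by
  rcases lt_or_gt_of_ne (hnz a le_rfl) with hneg | hpos
  · right
    intro x hx
    by_contra hcon
    push_neg at hcon
    have hx0 : 0 < p.eval x := lt_of_le_of_ne hcon (Ne.symm (hnz x hx))
    have := intermediate_value_Icc hx (p.continuous.continuousOn (s := Set.Icc a x))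
    have h0 : (0:ℝ) ∈ Set.Icc (p.eval a) (p.eval x) := ⟨le_of_lt hneg, le_of_lt hx0⟩
    obtain ⟨y, hy, hy0⟩ := this h0
    exact hnz y (hy.1) hy0
  · left
    intro x hx
    by_contra hcon
    push_neg at hcon
    have hx0 : p.eval x < 0 := lt_of_le_of_ne hcon (hnz x hx)
    have := intermediate_value_Icc' hx (p.continuous.continuousOn (s := Set.Icc a x))
    have h0 : (0:ℝ) ∈ Set.Icc (p.eval x) (p.eval a) := ⟨le_of_lt hx0, le_of_lt hpos⟩
    obtain ⟨y, hy, hy0⟩ := this h0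
    exact hnz y (hy.1) hy0

/-- A polynomial with no zeros on `(-∞, a]` has constant sign there. -/
lemma tail_sign_left (p : Polynomial ℝ) (a : ℝ)
    (hnz : ∀ x, x ≤ a → p.eval x ≠ 0) :
    (∀ x, x ≤ a → 0 < p.eval x) ∨ (∀ x, x ≤ a → p.eval x < 0) := by
  have hq : ∀ x, -a ≤ x → (p.comp (-X)).eval x ≠ 0 := by
    intro x hx
    simpa using hnz (-x) (by linarith)
  rcases tail_sign_right (p.comp (-X)) (-a) hq with H | H
  · left; intro x hx
    have := H (-x) (by linarith); simpa using this
  · right; intro x hx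
    have := H (-x) (by linarith); simpa using this

/-- A polynomial positive on `[a, ∞)` is bounded below by a positive constant there. -/
lemma tail_lb_right (p : Polynomial ℝ) (a : ℝ)
    (hp : ∀ x, a ≤ x → 0 < p.eval x) :
    ∃ c : ℝ, 0 < c ∧ ∀ x, a ≤ x → c ≤ p.eval x := by
  by_cases hdeg : 0 < p.degree
  · have := (Polynomial.abs_tendsto_atTop p hdeg).eventually_ge_atTop 1
    rw [Filter.eventually_atTop] at this
    obtain ⟨b, hb⟩ := this
    -- on [a, max a b] use compactness
    have hK : IsCompact (Set.Icc a (max a b)) := isCompact_Icc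
    have hne : (Set.Icc a (max a b)).Nonempty := ⟨a, le_refl a, le_max_left _ _⟩
    obtain ⟨x₀, hx₀, hmin⟩ := hK.exists_isMinOn hne (p.continuous.continuousOn)
    refine ⟨min (p.eval x₀) 1, lt_min (hp x₀ hx₀.1) one_pos, ?_⟩
    intro x hx
    rcases le_or_gt x (max a b) with hxb | hxb
    · exact le_trans (min_le_left _ _) (hmin ⟨hx, hxb⟩)
    · have h1 : 1 ≤ |p.eval x| := hb x (le_trans (le_max_right _ _) hxb.le)
      have := hp x hx
      rw [abs_of_pos this] at h1
      exact le_trans (min_le_right _ _) h1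
  · -- p is a constant
    push_neg at hdeg
    have hnd : p.natDegree = 0 := Polynomial.natDegree_eq_zero_iff_degree_le_zero.2 hdeg
    have hc := Polynomial.eq_C_of_natDegree_eq_zero hnd
    refine ⟨p.eval a, hp a le_rfl, ?_⟩
    intro x hx
    have e1 : p.eval a = p.coeff 0 := by rw [hc]; simp
    have e2 : p.eval x = p.coeff 0 := by rw [hc]; simp
    rw [e1, e2]

lemma tail_lb_left (p : Polynomial ℝ) (a : ℝ)
    (hp : ∀ x, x ≤ a → 0 < p.eval x) :
    ∃ c : ℝ, 0 < c ∧ ∀ x, x ≤ a → c ≤ p.eval x := by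
  have hq : ∀ x, -a ≤ x → 0 < (p.comp (-X)).eval x := by
    intro x hx; simpa using hp (-x) (by linarith)
  obtain ⟨c, hc, H⟩ := tail_lb_right (p.comp (-X)) (-a) hq
  refine ⟨c, hc, fun x hx => ?_⟩
  have := H (-x) (by linarith); simpa using this

/-- global bound for a polynomial by `C * (1+x^2)^D`. -/
lemma poly_bound (p : Polynomial ℝ) :
    ∃ C : ℝ, 0 < C ∧ ∀ x : ℝ, |p.eval x| ≤ C * (1 + x^2) ^ p.natDegree := by
  refine ⟨(∑ i ∈ Finset.range (p.natDegree + 1), |p.coeff i|) + 1, by positivity, ?_⟩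
  intro x
  have h1 : (1:ℝ) ≤ 1 + x^2 := by nlinarith
  have hx : |x| ≤ 1 + x^2 := by
    rcases abs_nonneg x with h
    nlinarith [abs_nonneg x, sq_abs x]
  rw [Polynomial.eval_eq_sum_range]
  calc |∑ i ∈ Finset.range (p.natDegree + 1), p.coeff i * x ^ i|
      ≤ ∑ i ∈ Finset.range (p.natDegree + 1), |p.coeff i * x ^ i| :=
        Finset.abs_sum_le_sum_abs _ _
    _ ≤ ∑ i ∈ Finset.range (p.natDegree + 1), |p.coeff i| * (1 + x^2) ^ p.natDegree := by
        apply Finset.sum_le_sum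
        intro i hi
        rw [abs_mul, abs_pow]
        have h2 : |x| ^ i ≤ (1 + x^2) ^ i := pow_le_pow_left₀ (abs_nonneg x) hx i
        have h3 : (1 + x^2) ^ i ≤ (1 + x^2) ^ p.natDegree := by
          apply pow_le_pow_right₀ h1
          exact Nat.lt_succ_iff.mp (Finset.mem_range.mp hi)
        exact mul_le_mul_of_nonneg_left (le_trans h2 h3) (abs_nonneg _)
    _ = (∑ i ∈ Finset.range (p.natDegree + 1), |p.coeff i|) * (1 + x^2) ^ p.natDegree := by
        rw [Finset.sum_mul]
    _ ≤ ((∑ i ∈ Finset.range (p.natDegree + 1), |p.coeff i|) + 1) * (1 + x^2) ^ p.natDegree := by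
        apply mul_le_mul_of_nonneg_right _ (by positivity)
        linarith

/-- bound for the roots of a nonzero polynomial -/
lemma roots_bound (p : Polynomial ℝ) (hp : p ≠ 0) :
    ∃ a : ℝ, 0 < a ∧ ∀ x : ℝ, a ≤ |x| → p.eval x ≠ 0 := by
  have hfin : {x : ℝ | p.IsRoot x}.Finite := Polynomial.finite_setOf_isRoot hp
  have hb : BddAbove {x : ℝ | p.IsRoot x} := hfin.bddAbove
  have hb' : BddBelow {x : ℝ | p.IsRoot x} := hfin.bddBelow
  obtain ⟨M, hM⟩ := hb
  obtain ⟨M', hM'⟩ := hb'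
  refine ⟨max (|M| + 1) (|M'| + 1), by positivity, ?_⟩
  intro x hx hroot
  have h1 : x ≤ M := hM hroot
  have h2 : M' ≤ x := hM' hroot
  rcases abs_cases x with ⟨he, _⟩ | ⟨he, _⟩
  · have := le_trans (le_max_left (|M| + 1) (|M'| + 1)) hx
    rw [he] at this
    have := le_trans this h1
    have := le_abs_self M
    linarith
  · have := le_trans (le_max_right (|M| + 1) (|M'| + 1)) hx
    rw [he] at this
    have : x ≤ -(|M'| + 1) := by linarith
    have h3 := neg_abs_le M'
    linarith

lemma exists_big (n : ℕ) (hn : 0 < n) (v : Fin n → ℝ) (γ : ℝ)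
    (hγ : γ ≤ ∑ i, (max (v i) 0)^2) (hγ0 : 0 < γ) :
    ∃ i, Real.sqrt (γ / n) ≤ v i := by
  by_contra hc
  push_neg at hc
  set η := Real.sqrt (γ / n) with hηdef
  have hn' : (0:ℝ) < n := by exact_mod_cast hn
  have hη : 0 < η := Real.sqrt_pos.2 (by positivity)
  have hterm : ∀ i, (max (v i) 0)^2 < η^2 := by
    intro i
    have h1 : max (v i) 0 < η := max_lt (hc i) hη
    have h2 : 0 ≤ max (v i) 0 := le_max_right _ _
    nlinarith
  have hne : (Finset.univ : Finset (Fin n)).Nonempty := ⟨⟨0, hn⟩, Finset.mem_univ _⟩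
  have hlt : ∑ i, (max (v i) 0)^2 < ∑ _i : Fin n, η^2 :=
    Finset.sum_lt_sum_of_nonempty hne (fun i _ => hterm i)
  have hsum : ∑ _i : Fin n, η^2 = (n:ℝ) * η^2 := by
    simp [Finset.sum_const, nsmul_eq_mul]
  have hη2 : η^2 = γ / n := Real.sq_sqrt (by positivity)
  rw [hsum, hη2] at hlt
  have : (n:ℝ) * (γ / n) = γ := by field_simp
  rw [this] at hlt
  linarith

lemma middle (n : ℕ) (h : Fin n → Polynomial ℝ) (B : Set ℝ)
    (hmix : ∀ t ∈ closure B, (∃ i, (h i).eval t < 0) ∧ (∃ i, 0 < (h i).eval t))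
    (S : ℝ) :
    ∃ (m : Fin n → Polynomial ℝ) (δ : ℝ), 0 < δ ∧ (∑ j, m j * h j) = 0 ∧
      ∀ t ∈ closure B, |t| ≤ S → ∀ j, δ ≤ (m j).eval t := by
  classical
  set K : Set ℝ := closure B ∩ Set.Icc (-S) S with hKdef
  by_cases hne : K.Nonempty
  swap
  · refine ⟨fun _ => 0, 1, one_pos, by simp, ?_⟩
    intro t ht hts j
    exact absurd ⟨t, ht, abs_le.mp hts⟩ hne
  -- K is nonempty compact
  obtain ⟨t₀, ht₀⟩ := hne
  have hn : 0 < n := by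
    obtain ⟨i, _⟩ := (hmix t₀ ht₀.1).2
    exact i.pos
  have hn' : (0:ℝ) < n := by exact_mod_cast hn
  have hKc : IsCompact K :=
    isCompact_Icc.of_isClosed_subset (isClosed_closure.inter isClosed_Icc)
      inter_subset_right
  have hKne : K.Nonempty := ⟨t₀, ht₀⟩
  -- bound on |h i| over K
  have hGcont : Continuous (fun t => ∑ i, |(h i).eval t|) :=
    continuous_finset_sum _ fun i _ => ((h i).continuous).abs
  obtain ⟨t₁, ht₁, hmax⟩ := hKc.exists_isMaxOn hKne hGcont.continuousOn
  set Cb : ℝ := (∑ i, |(h i).eval t₁|) + 1 with hCbdef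
  have hCb0 : 0 < Cb := by positivity
  have hCb1 : 1 ≤ Cb := by
    have : (0:ℝ) ≤ ∑ i, |(h i).eval t₁| := Finset.sum_nonneg fun i _ => abs_nonneg _
    linarith
  have hCb : ∀ t ∈ K, ∀ i, |(h i).eval t| ≤ Cb := by
    intro t ht i
    have h1 : |(h i).eval t| ≤ ∑ i, |(h i).eval t| :=
      Finset.single_le_sum (f := fun i => |(h i).eval t|)
        (fun i _ => abs_nonneg _) (Finset.mem_univ i)
    have h2 := hmax ht
    simp only [] at h2
    calc |(h i).eval t| ≤ ∑ i, |(h i).eval t| := h1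
      _ ≤ ∑ i, |(h i).eval t₁| := h2
      _ ≤ Cb := by linarith
  -- positive-side margin
  have hgpcont : Continuous (fun t => ∑ i, (max ((h i).eval t) 0)^2) :=
    continuous_finset_sum _ fun i _ => (((h i).continuous).max continuous_const).pow 2
  obtain ⟨t₂, ht₂, hminp⟩ := hKc.exists_isMinOn hKne hgpcont.continuousOn
  set γp : ℝ := ∑ i, (max ((h i).eval t₂) 0)^2 with hγpdef
  have hγp0 : 0 < γp := by
    obtain ⟨i, hi⟩ := (hmix t₂ ht₂.1).2
    refine Finset.sum_pos' (fun i _ => by positivity) ⟨i, Finset.mem_univ i, ?_⟩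
    have : max ((h i).eval t₂) 0 = (h i).eval t₂ := max_eq_left hi.le
    rw [this]
    positivity
  set ηp : ℝ := Real.sqrt (γp / n) with hηpdef
  have hηp0 : 0 < ηp := Real.sqrt_pos.2 (by positivity)
  have hP : ∀ t ∈ K, ∃ i, ηp ≤ (h i).eval t := by
    intro t ht
    refine exists_big n hn _ γp ?_ hγp0
    exact hminp ht
  -- negative-side margin
  have hgmcont : Continuous (fun t => ∑ i, (max (-(h i).eval t) 0)^2) :=
    continuous_finset_sum _ fun i _ => (((h i).continuous.neg).max continuous_const).pow 2
  obtain ⟨t₃, ht₃, hminm⟩ := hKc.exists_isMinOn hKne hgmcont.continuousOn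
  set γm : ℝ := ∑ i, (max (-(h i).eval t₃) 0)^2 with hγmdef
  have hγm0 : 0 < γm := by
    obtain ⟨i, hi⟩ := (hmix t₃ ht₃.1).1
    refine Finset.sum_pos' (fun i _ => by positivity) ⟨i, Finset.mem_univ i, ?_⟩
    have h1 : (0:ℝ) < -(h i).eval t₃ := by linarith
    have : max (-(h i).eval t₃) 0 = -(h i).eval t₃ := max_eq_left h1.le
    rw [this]
    positivity
  set ηm : ℝ := Real.sqrt (γm / n) with hηmdef
  have hηm0 : 0 < ηm := Real.sqrt_pos.2 (by positivity)
  have hNeg : ∀ t ∈ K, ∃ i, (h i).eval t ≤ -ηm := by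
    intro t ht
    obtain ⟨i, hi⟩ := exists_big n hn (fun i => -(h i).eval t) γm (hminm ht) hγm0
    exact ⟨i, by linarith⟩
  -- the soft indicator polynomial θ
  set η : ℝ := min ηp ηm with hηdef
  have hη0 : 0 < η := lt_min hηp0 hηm0
  set εv : ℝ := η / (2 * n * Cb) with hεvdef
  have hεv0 : 0 < εv := by positivity
  have hbgt1 : (1:ℝ) < 1 + η/(2*Cb) := by
    have : 0 < η/(2*Cb) := by positivity
    linarith
  obtain ⟨N, hN⟩ := pow_unbounded_of_one_lt (1/εv) hbgt1
  set θ : Polynomial ℝ := Polynomial.C εv * (1 + Polynomial.C (1/(2*Cb)) * X)^N with hθdef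
  have hθeval : ∀ s : ℝ, θ.eval s = εv * (1 + 1/(2*Cb) * s)^N := by
    intro s; simp [hθdef]
  clear_value K Cb γp ηp γm ηm η εv θ
  have hbase : ∀ s : ℝ, |s| ≤ Cb → (1:ℝ)/2 ≤ 1 + 1/(2*Cb) * s := by
    intro s hs
    have h1 : -Cb ≤ s := (abs_le.mp hs).1
    have key : 1/(2*Cb) * Cb = 1/2 := by field_simp
    have h2 : 1/(2*Cb) * (-Cb) ≤ 1/(2*Cb) * s :=
      mul_le_mul_of_nonneg_left h1 (by positivity)
    nlinarith
  have hθpos : ∀ s : ℝ, |s| ≤ Cb → εv*(1/2)^N ≤ θ.eval s := by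
    intro s hs
    rw [hθeval]
    have h1 := hbase s hs
    have h2 : ((1:ℝ)/2)^N ≤ (1 + 1/(2*Cb) * s)^N := pow_le_pow_left₀ (by norm_num) h1 N
    nlinarith [pow_pos (show (0:ℝ) < 1/2 by norm_num) N]
  have hθnonneg : ∀ s : ℝ, |s| ≤ Cb → 0 ≤ θ.eval s := by
    intro s hs
    have := hθpos s hs
    nlinarith [pow_pos (show (0:ℝ) < 1/2 by norm_num) N]
  have hθsmall : ∀ s : ℝ, |s| ≤ Cb → s ≤ 0 → θ.eval s ≤ εv := by
    intro s hs hs0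
    rw [hθeval]
    have h1 := hbase s hs
    have h2 : 1 + 1/(2*Cb) * s ≤ 1 := by
      have : 1/(2*Cb) * s ≤ 0 := mul_nonpos_of_nonneg_of_nonpos (by positivity) hs0
      linarith
    have h3 : (1 + 1/(2*Cb) * s)^N ≤ 1 := pow_le_one₀ (by linarith) h2
    nlinarith
  have hθbig : ∀ s : ℝ, |s| ≤ Cb → η ≤ s → 1 ≤ θ.eval s := by
    intro s hs hηs
    rw [hθeval]
    have h1 : 1 + η/(2*Cb) ≤ 1 + 1/(2*Cb) * s := by
      have e : η/(2*Cb) = 1/(2*Cb) * η := by ring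
      have h2 : 1/(2*Cb) * η ≤ 1/(2*Cb) * s :=
        mul_le_mul_of_nonneg_left hηs (by positivity)
      linarith [e ▸ h2]
    have h2 : (1 + η/(2*Cb))^N ≤ (1 + 1/(2*Cb) * s)^N :=
      pow_le_pow_left₀ (by linarith) h1 N
    have h3 : 1/εv < (1 + 1/(2*Cb) * s)^N := lt_of_lt_of_le hN h2
    have h4 : εv * (1/εv) ≤ εv * (1 + 1/(2*Cb) * s)^N :=
      mul_le_mul_of_nonneg_left h3.le hεv0.le
    have h5 : εv * (1/εv) = 1 := by field_simp
    linarith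
  -- the polynomials
  obtain ⟨Mp, hMpdef⟩ : ∃ Mp : Polynomial ℝ, Mp = ∑ i, h i * (θ.comp (h i)) := ⟨_, rfl⟩
  obtain ⟨Mm, hMmdef⟩ : ∃ Mm : Polynomial ℝ, Mm = -∑ i, h i * (θ.comp (-(h i))) := ⟨_, rfl⟩
  refine ⟨fun j => θ.comp (h j) * Mm + θ.comp (-(h j)) * Mp,
    (εv*(1/2)^N) * (η/2), by positivity, ?_, ?_⟩
  · -- syzygy
    calc ∑ j, (θ.comp (h j) * Mm + θ.comp (-(h j)) * Mp) * h j
        = Mm * (∑ j, h j * θ.comp (h j)) + Mp * (∑ j, h j * θ.comp (-(h j))) := by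
          rw [Finset.mul_sum, Finset.mul_sum, ← Finset.sum_add_distrib]
          exact Finset.sum_congr rfl fun j _ => by ring
      _ = Mm * Mp + Mp * (-Mm) := by rw [hMpdef, hMmdef, neg_neg]
      _ = 0 := by ring
  · -- positivity
    intro t ht hts j
    have htK : t ∈ K := by rw [hKdef]; exact ⟨ht, abs_le.mp hts⟩
    have hCbt : ∀ i, |(h i).eval t| ≤ Cb := hCb t htK
    have hMpev : Mp.eval t = ∑ i, (h i).eval t * θ.eval ((h i).eval t) := by
      rw [hMpdef]
      simp [eval_finset_sum, Polynomial.eval_comp]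
    have hMmev : Mm.eval t = ∑ i, -((h i).eval t * θ.eval (-(h i).eval t)) := by
      rw [hMmdef]
      simp [eval_finset_sum, Polynomial.eval_comp]
    -- lower bound for Mp at t
    have hMp : η/2 ≤ Mp.eval t := by
      obtain ⟨i₀, hi₀⟩ := hP t htK
      have hi₀' : η ≤ (h i₀).eval t :=
        le_trans (by rw [hηdef]; exact min_le_left _ _) hi₀
      rw [hMpev, ← Finset.add_sum_erase _ _ (Finset.mem_univ i₀)]
      have hterm : η ≤ (h i₀).eval t * θ.eval ((h i₀).eval t) := by
        have h1 := hθbig _ (hCbt i₀) hi₀'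
        nlinarith
      have hrest : ((Finset.univ.erase i₀).card : ℝ) * (-(Cb*εv)) ≤
          ∑ i ∈ Finset.univ.erase i₀, (h i).eval t * θ.eval ((h i).eval t) := by
        rw [← nsmul_eq_mul]
        apply Finset.card_nsmul_le_sum
        intro i _
        rcases le_or_gt 0 ((h i).eval t) with hpos | hneg
        · have := hθnonneg _ (hCbt i)
          nlinarith
        · have h1 := hθsmall _ (hCbt i) hneg.le
          have h2 := hθnonneg _ (hCbt i)
          have h3 : -(h i).eval t ≤ Cb := by linarith [(abs_le.mp (hCbt i)).1]
          nlinarith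
      have hcard : ((Finset.univ.erase i₀).card : ℝ) ≤ n := by
        have := Finset.card_erase_of_mem (Finset.mem_univ i₀)
        rw [this]
        simp only [Finset.card_univ, Fintype.card_fin]
        exact_mod_cast Nat.sub_le n 1
      have hkey : (n:ℝ) * (Cb * εv) = η/2 := by
        rw [hεvdef]; field_simp
      have : ((Finset.univ.erase i₀).card : ℝ) * (-(Cb*εv)) ≥ (n:ℝ) * (-(Cb*εv)) := by
        apply mul_le_mul_of_nonpos_right hcard
        nlinarith
      nlinarith
    -- lower bound for Mm at t
    have hMm : η/2 ≤ Mm.eval t := by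
      obtain ⟨i₁, hi₁⟩ := hNeg t htK
      have hi₁' : (h i₁).eval t ≤ -η := by
        have := min_le_right ηp ηm
        have : η ≤ ηm := by rw [hηdef]; exact min_le_right _ _
        linarith
      rw [hMmev, ← Finset.add_sum_erase _ _ (Finset.mem_univ i₁)]
      have habs : |-(h i₁).eval t| ≤ Cb := by rw [abs_neg]; exact hCbt i₁
      have hterm : η ≤ -((h i₁).eval t * θ.eval (-(h i₁).eval t)) := by
        have h1 := hθbig _ habs (by linarith : η ≤ -(h i₁).eval t)
        nlinarith
      have hrest : ((Finset.univ.erase i₁).card : ℝ) * (-(Cb*εv)) ≤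
          ∑ i ∈ Finset.univ.erase i₁, -((h i).eval t * θ.eval (-(h i).eval t)) := by
        rw [← nsmul_eq_mul]
        apply Finset.card_nsmul_le_sum
        intro i _
        have habs' : |-(h i).eval t| ≤ Cb := by rw [abs_neg]; exact hCbt i
        rcases le_or_gt ((h i).eval t) 0 with hneg | hpos
        · have h2 := hθnonneg _ habs'
          nlinarith
        · have h1 := hθsmall _ habs' (by linarith)
          have h2 := hθnonneg _ habs'
          have h3 : (h i).eval t ≤ Cb := (abs_le.mp (hCbt i)).2
          nlinarith
      have hcard : ((Finset.univ.erase i₁).card : ℝ) ≤ n := by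
        rw [Finset.card_erase_of_mem (Finset.mem_univ i₁)]
        simp only [Finset.card_univ, Fintype.card_fin]
        exact_mod_cast Nat.sub_le n 1
      have hkey : (n:ℝ) * (Cb * εv) = η/2 := by
        rw [hεvdef]; field_simp
      have : ((Finset.univ.erase i₁).card : ℝ) * (-(Cb*εv)) ≥ (n:ℝ) * (-(Cb*εv)) := by
        apply mul_le_mul_of_nonpos_right hcard
        nlinarith
      nlinarith
    -- conclude
    have hev : ((fun j => θ.comp (h j) * Mm + θ.comp (-(h j)) * Mp) j).eval t
        = θ.eval ((h j).eval t) * Mm.eval t + θ.eval (-(h j).eval t) * Mp.eval t := by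
      simp [Polynomial.eval_comp]
    rw [hev]
    have habs' : |-(h j).eval t| ≤ Cb := by rw [abs_neg]; exact hCbt j
    have h1 := hθpos _ (hCbt j)
    have h2 := hθnonneg _ habs'
    have hδ0 : (0:ℝ) < εv*(1/2)^N := by positivity
    have e1 : (0:ℝ) ≤ η/2 := by linarith
    have e2 : (0:ℝ) ≤ θ.eval ((h j).eval t) := by linarith
    have e3 : (0:ℝ) ≤ Mp.eval t := le_trans e1 hMp
    have hA : (εv*(1/2)^N) * (η/2) ≤ θ.eval ((h j).eval t) * Mm.eval t :=
      mul_le_mul h1 hMm e1 e2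
    have hB : 0 ≤ θ.eval (-(h j).eval t) * Mp.eval t := mul_nonneg h2 e3
    linarith

lemma tail_sol (n : ℕ) (h : Fin n → Polynomial ℝ) (B : Set ℝ) (i₀ : Fin n)
    (hmix : ∀ t ∈ closure B, (∃ i, (h i).eval t < 0) ∧ (∃ i, 0 < (h i).eval t))
    (T : ℝ) (hT1 : 1 ≤ T)
    (hroot : ∀ i, h i ≠ 0 → ∀ x : ℝ, T ≤ |x| → (h i).eval x ≠ 0)
    (hup : BddAbove B → ∀ x ∈ B, x ≤ T - 1)
    (hlo : BddBelow B → ∀ x ∈ B, -(T-1) ≤ x) :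
    ∃ (U : Fin n → Polynomial ℝ) (c : ℝ), 0 < c ∧ (∑ j, U j * h j) = 0 ∧
      ∀ j, ∀ x ∈ B, T ≤ |x| → c ≤ (U j).eval x := by
  classical
  have hT0 : (0:ℝ) < T := by linarith
  -- trichotomies
  have htriR : ∀ i, h i = 0 ∨ (∀ x, T ≤ x → 0 < (h i).eval x) ∨
      (∀ x, T ≤ x → (h i).eval x < 0) := by
    intro i
    by_cases h0 : h i = 0
    · exact Or.inl h0
    · refine Or.inr (tail_sign_right (h i) T fun x hx => hroot i h0 x ?_)
      rw [abs_of_nonneg (by linarith)]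
      exact hx
  have htriL : ∀ i, h i = 0 ∨ (∀ x, x ≤ -T → 0 < (h i).eval x) ∨
      (∀ x, x ≤ -T → (h i).eval x < 0) := by
    intro i
    by_cases h0 : h i = 0
    · exact Or.inl h0
    · refine Or.inr (tail_sign_left (h i) (-T) fun x hx => hroot i h0 x ?_)
      rw [abs_of_nonpos (by linarith)]
      linarith
  -- witnesses on the right when B is unbounded above
  have hwitR : ¬BddAbove B → (∃ a, ∀ x, T ≤ x → 0 < (h a).eval x) ∧
      (∃ b, ∀ x, T ≤ x → (h b).eval x < 0) := by
    intro hBA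
    rw [not_bddAbove_iff] at hBA
    obtain ⟨tp, htpB, htp⟩ := hBA T
    obtain ⟨⟨ineg, hneg⟩, ⟨ipos, hpos⟩⟩ := hmix tp (subset_closure htpB)
    constructor
    · rcases htriR ipos with h0 | hp | hm
      · rw [h0] at hpos; simp at hpos
      · exact ⟨ipos, hp⟩
      · exact absurd hpos (by have := hm tp htp.le; linarith)
    · rcases htriR ineg with h0 | hp | hm
      · rw [h0] at hneg; simp at hneg
      · exact absurd hneg (by have := hp tp htp.le; linarith)
      · exact ⟨ineg, hm⟩
  have hwitL : ¬BddBelow B → (∃ a, ∀ x, x ≤ -T → 0 < (h a).eval x) ∧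
      (∃ b, ∀ x, x ≤ -T → (h b).eval x < 0) := by
    intro hBB
    rw [not_bddBelow_iff] at hBB
    obtain ⟨tm, htmB, htm⟩ := hBB (-T)
    obtain ⟨⟨ineg, hneg⟩, ⟨ipos, hpos⟩⟩ := hmix tm (subset_closure htmB)
    constructor
    · rcases htriL ipos with h0 | hp | hm
      · rw [h0] at hpos; simp at hpos
      · exact ⟨ipos, hp⟩
      · exact absurd hpos (by have := hm tm htm.le; linarith)
    · rcases htriL ineg with h0 | hp | hm
      · rw [h0] at hneg; simp at hneg
      · exact absurd hneg (by have := hp tm htm.le; linarith)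
      · exact ⟨ineg, hm⟩
  -- generic one-sided pattern solutions
  have oneside_left : (∃ a, ∀ x, x ≤ -T → 0 < (h a).eval x) →
      (∃ b, ∀ x, x ≤ -T → (h b).eval x < 0) →
      ∃ U : Fin n → Polynomial ℝ, (∑ j, U j * h j) = 0 ∧
        ∀ j, ∀ x : ℝ, x ≤ -T → 0 < (U j).eval x := by
    rintro ⟨a, ha⟩ ⟨b, hb⟩
    set P : Finset (Fin n) := Finset.univ.filter
      (fun i => ∀ x, x ≤ -T → 0 < (h i).eval x) with hPdef
    obtain ⟨SP, hSP⟩ : ∃ q : Polynomial ℝ, q = ∑ i ∈ P, h i := ⟨_, rfl⟩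
    obtain ⟨SN, hSN⟩ : ∃ q : Polynomial ℝ,
      q = ∑ i ∈ Finset.univ.filter (fun i => ¬ i ∈ P), h i := ⟨_, rfl⟩
    refine ⟨fun j => if j ∈ P then -SN else SP, ?_, ?_⟩
    · have hsplit := Finset.sum_filter_add_sum_filter_not Finset.univ
        (fun j => j ∈ P) (fun j => (if j ∈ P then -SN else SP) * h j)
      have e1 : ∑ j ∈ Finset.univ.filter (fun j => j ∈ P),
          (if j ∈ P then -SN else SP) * h j = (-SN) * ∑ j ∈ P, h j := by
        rw [Finset.mul_sum, Finset.filter_univ_mem]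
        exact Finset.sum_congr rfl fun j hj => by rw [if_pos hj]
      have e2 : ∑ j ∈ Finset.univ.filter (fun j => ¬ j ∈ P),
          (if j ∈ P then -SN else SP) * h j
          = SP * ∑ j ∈ Finset.univ.filter (fun j => ¬ j ∈ P), h j := by
        rw [Finset.mul_sum]
        refine Finset.sum_congr rfl fun j hj => ?_
        rw [Finset.mem_filter] at hj
        rw [if_neg hj.2]
      rw [← hsplit, e1, e2, ← hSP, ← hSN]
      ring
    · intro j x hx
      show (0:ℝ) < (if j ∈ P then -SN else SP).eval x
      by_cases hjP : j ∈ P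
      · rw [if_pos hjP]
        rw [hSN]
        simp only [Polynomial.eval_neg, eval_finset_sum, neg_pos]
        have hble : ∀ i ∈ Finset.univ.filter (fun i => ¬ i ∈ P), (h i).eval x ≤ (0:ℝ) := by
          intro i hi
          rw [Finset.mem_filter] at hi
          rcases htriL i with h0 | hp | hm
          · rw [h0]; simp
          · exact absurd (by rw [hPdef, Finset.mem_filter]; exact ⟨Finset.mem_univ i, hp⟩) hi.2
          · exact (hm x hx).le
        have hbmem : b ∈ Finset.univ.filter (fun i => ¬ i ∈ P) := by
          rw [Finset.mem_filter]
          refine ⟨Finset.mem_univ b, fun hbP => ?_⟩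
          rw [hPdef, Finset.mem_filter] at hbP
          have h1 := hbP.2 (-T) le_rfl
          have h2 := hb (-T) le_rfl
          linarith
        calc ∑ i ∈ Finset.univ.filter (fun i => ¬ i ∈ P), (h i).eval x
            < ∑ i ∈ Finset.univ.filter (fun i => ¬ i ∈ P), 0 := by
              refine Finset.sum_lt_sum hble ⟨b, hbmem, ?_⟩
              have := hb x hx
              linarith
          _ = 0 := by simp
      · rw [if_neg hjP, hSP]
        simp only [eval_finset_sum]
        refine Finset.sum_pos ?_ ⟨a, ?_⟩
        · intro i hi
          rw [hPdef, Finset.mem_filter] at hi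
          exact hi.2 x hx
        · rw [hPdef, Finset.mem_filter]
          exact ⟨Finset.mem_univ a, ha⟩
  have oneside_right : (∃ a, ∀ x, T ≤ x → 0 < (h a).eval x) →
      (∃ b, ∀ x, T ≤ x → (h b).eval x < 0) →
      ∃ U : Fin n → Polynomial ℝ, (∑ j, U j * h j) = 0 ∧
        ∀ j, ∀ x : ℝ, T ≤ x → 0 < (U j).eval x := by
    rintro ⟨a, ha⟩ ⟨b, hb⟩
    set P : Finset (Fin n) := Finset.univ.filter
      (fun i => ∀ x, T ≤ x → 0 < (h i).eval x) with hPdef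
    obtain ⟨SP, hSP⟩ : ∃ q : Polynomial ℝ, q = ∑ i ∈ P, h i := ⟨_, rfl⟩
    obtain ⟨SN, hSN⟩ : ∃ q : Polynomial ℝ,
      q = ∑ i ∈ Finset.univ.filter (fun i => ¬ i ∈ P), h i := ⟨_, rfl⟩
    refine ⟨fun j => if j ∈ P then -SN else SP, ?_, ?_⟩
    · have hsplit := Finset.sum_filter_add_sum_filter_not Finset.univ
        (fun j => j ∈ P) (fun j => (if j ∈ P then -SN else SP) * h j)
      have e1 : ∑ j ∈ Finset.univ.filter (fun j => j ∈ P),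
          (if j ∈ P then -SN else SP) * h j = (-SN) * ∑ j ∈ P, h j := by
        rw [Finset.mul_sum, Finset.filter_univ_mem]
        exact Finset.sum_congr rfl fun j hj => by rw [if_pos hj]
      have e2 : ∑ j ∈ Finset.univ.filter (fun j => ¬ j ∈ P),
          (if j ∈ P then -SN else SP) * h j
          = SP * ∑ j ∈ Finset.univ.filter (fun j => ¬ j ∈ P), h j := by
        rw [Finset.mul_sum]
        refine Finset.sum_congr rfl fun j hj => ?_
        rw [Finset.mem_filter] at hj
        rw [if_neg hj.2]
      rw [← hsplit, e1, e2, ← hSP, ← hSN]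
      ring
    · intro j x hx
      show (0:ℝ) < (if j ∈ P then -SN else SP).eval x
      by_cases hjP : j ∈ P
      · rw [if_pos hjP]
        rw [hSN]
        simp only [Polynomial.eval_neg, eval_finset_sum, neg_pos]
        have hble : ∀ i ∈ Finset.univ.filter (fun i => ¬ i ∈ P), (h i).eval x ≤ (0:ℝ) := by
          intro i hi
          rw [Finset.mem_filter] at hi
          rcases htriR i with h0 | hp | hm
          · rw [h0]; simp
          · exact absurd (by rw [hPdef, Finset.mem_filter]; exact ⟨Finset.mem_univ i, hp⟩) hi.2
          · exact (hm x hx).le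
        have hbmem : b ∈ Finset.univ.filter (fun i => ¬ i ∈ P) := by
          rw [Finset.mem_filter]
          refine ⟨Finset.mem_univ b, fun hbP => ?_⟩
          rw [hPdef, Finset.mem_filter] at hbP
          have h1 := hbP.2 T le_rfl
          have h2 := hb T le_rfl
          linarith
        calc ∑ i ∈ Finset.univ.filter (fun i => ¬ i ∈ P), (h i).eval x
            < ∑ i ∈ Finset.univ.filter (fun i => ¬ i ∈ P), 0 := by
              refine Finset.sum_lt_sum hble ⟨b, hbmem, ?_⟩
              have := hb x hx
              linarith
          _ = 0 := by simp
      · rw [if_neg hjP, hSP]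
        simp only [eval_finset_sum]
        refine Finset.sum_pos ?_ ⟨a, ?_⟩
        · intro i hi
          rw [hPdef, Finset.mem_filter] at hi
          exact hi.2 x hx
        · rw [hPdef, Finset.mem_filter]
          exact ⟨Finset.mem_univ a, ha⟩
  by_cases hBA : BddAbove B
  · by_cases hBB : BddBelow B
    · -- B bounded : trivial solution
      refine ⟨fun _ => 0, 1, one_pos, by simp, ?_⟩
      intro j x hx hTx
      exfalso
      have h1 := hup hBA x hx
      have h2 := hlo hBB x hx
      rcases abs_cases x with ⟨he, _⟩ | ⟨he, _⟩ <;> rw [he] at hTx <;> linarith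
    · -- B unbounded below only
      obtain ⟨hwa, hwb⟩ := hwitL hBB
      obtain ⟨U, hUsyz, hUpos⟩ := oneside_left hwa hwb
      choose cf hcf0 hcf using fun j => tail_lb_left (U j) (-T) (fun x hx => hUpos j x hx)
      obtain ⟨j₀, _, hj₀⟩ := Finset.exists_min_image Finset.univ cf ⟨i₀, Finset.mem_univ i₀⟩
      refine ⟨U, cf j₀, hcf0 j₀, hUsyz, ?_⟩
      intro j x hx hTx
      have hxle : x ≤ -T := by
        have h1 := hup hBA x hx
        rcases abs_cases x with ⟨he, _⟩ | ⟨he, _⟩ <;> rw [he] at hTx <;> linarith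
      exact le_trans (hj₀ j (Finset.mem_univ j)) (hcf j x hxle)
  · by_cases hBB : BddBelow B
    · -- B unbounded above only
      obtain ⟨hwa, hwb⟩ := hwitR hBA
      obtain ⟨U, hUsyz, hUpos⟩ := oneside_right hwa hwb
      choose cf hcf0 hcf using fun j => tail_lb_right (U j) T (fun x hx => hUpos j x hx)
      obtain ⟨j₀, _, hj₀⟩ := Finset.exists_min_image Finset.univ cf ⟨i₀, Finset.mem_univ i₀⟩
      refine ⟨U, cf j₀, hcf0 j₀, hUsyz, ?_⟩
      intro j x hx hTx
      have hxge : T ≤ x := by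
        have h1 := hlo hBB x hx
        rcases abs_cases x with ⟨he, _⟩ | ⟨he, _⟩ <;> rw [he] at hTx <;> linarith
      exact le_trans (hj₀ j (Finset.mem_univ j)) (hcf j x hxge)
    · -- B unbounded on both sides : the pair construction
      obtain ⟨⟨ra, hra⟩, ⟨rb, hrb⟩⟩ := hwitR hBA
      obtain ⟨⟨la, hla⟩, ⟨lb, hlb⟩⟩ := hwitL hBB
      have habsR : ∀ x : ℝ, T ≤ x → T ≤ |x| := by
        intro x hx; rw [abs_of_nonneg (by linarith)]; exact hx
      have habsL : ∀ x : ℝ, x ≤ -T → T ≤ |x| := by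
        intro x hx; rw [abs_of_nonpos (by linarith)]; linarith
      have hpair : ∃ i k : Fin n, ∀ x : ℝ, T ≤ |x| →
          (h i).eval x * (h k).eval x < 0 := by
        by_cases hbp : ∃ i, (∀ x, T ≤ x → 0 < (h i).eval x) ∧
            (∀ x, x ≤ -T → 0 < (h i).eval x)
        · by_cases hbn : ∃ k, (∀ x, T ≤ x → (h k).eval x < 0) ∧
              (∀ x, x ≤ -T → (h k).eval x < 0)
          · obtain ⟨i, hi1, hi2⟩ := hbp
            obtain ⟨k, hk1, hk2⟩ := hbn
            refine ⟨i, k, fun x hx => ?_⟩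
            rcases abs_cases x with ⟨he, _⟩ | ⟨he, _⟩
            · rw [he] at hx
              exact mul_neg_of_pos_of_neg (hi1 x hx) (hk1 x hx)
            · rw [he] at hx
              exact mul_neg_of_pos_of_neg (hi2 x (by linarith)) (hk2 x (by linarith))
          · have hrbne : h rb ≠ 0 := by
              intro h0
              have := hrb T le_rfl
              rw [h0] at this; simp at this
            have hrbL : ∀ x, x ≤ -T → 0 < (h rb).eval x := by
              rcases htriL rb with h0 | hp | hm
              · exact absurd h0 hrbne
              · exact hp
              · exact (hbn ⟨rb, hrb, hm⟩).elim
            have hlbne : h lb ≠ 0 := by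
              intro h0
              have := hlb (-T) le_rfl
              rw [h0] at this; simp at this
            have hlbR : ∀ x, T ≤ x → 0 < (h lb).eval x := by
              rcases htriR lb with h0 | hp | hm
              · exact absurd h0 hlbne
              · exact hp
              · exact (hbn ⟨lb, hm, hlb⟩).elim
            refine ⟨lb, rb, fun x hx => ?_⟩
            rcases abs_cases x with ⟨he, _⟩ | ⟨he, _⟩
            · rw [he] at hx
              exact mul_neg_of_pos_of_neg (hlbR x hx) (hrb x hx)
            · rw [he] at hx
              exact mul_neg_of_neg_of_pos (hlb x (by linarith)) (hrbL x (by linarith))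
        · have hrane : h ra ≠ 0 := by
            intro h0
            have := hra T le_rfl
            rw [h0] at this; simp at this
          have hraL : ∀ x, x ≤ -T → (h ra).eval x < 0 := by
            rcases htriL ra with h0 | hp | hm
            · exact absurd h0 hrane
            · exact (hbp ⟨ra, hra, hp⟩).elim
            · exact hm
          have hlane : h la ≠ 0 := by
            intro h0
            have := hla (-T) le_rfl
            rw [h0] at this; simp at this
          have hlaR : ∀ x, T ≤ x → (h la).eval x < 0 := by
            rcases htriR la with h0 | hp | hm
            · exact absurd h0 hlane
            · exact (hbp ⟨la, hp, hla⟩).elim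
            · exact hm
          refine ⟨ra, la, fun x hx => ?_⟩
          rcases abs_cases x with ⟨he, _⟩ | ⟨he, _⟩
          · rw [he] at hx
            exact mul_neg_of_pos_of_neg (hra x hx) (hlaR x hx)
          · rw [he] at hx
            exact mul_neg_of_neg_of_pos (hraL x (by linarith)) (hla x (by linarith))
      obtain ⟨i, k, hik⟩ := hpair
      have hinek : i ≠ k := by
        intro he
        have := hik T (by rw [abs_of_pos hT0])
        rw [he] at this
        nlinarith
      -- the auxiliary positive polynomial g = -(h i * h k)
      have hgR : ∀ x, T ≤ x → 0 < (-(h i * h k)).eval x := by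
        intro x hx
        have := hik x (habsR x hx)
        simp only [Polynomial.eval_neg, Polynomial.eval_mul]
        linarith
      have hgL : ∀ x, x ≤ -T → 0 < (-(h i * h k)).eval x := by
        intro x hx
        have := hik x (habsL x hx)
        simp only [Polynomial.eval_neg, Polynomial.eval_mul]
        linarith
      obtain ⟨cgR, hcgR0, hcgR⟩ := tail_lb_right (-(h i * h k)) T hgR
      obtain ⟨cgL, hcgL0, hcgL⟩ := tail_lb_left (-(h i * h k)) (-T) hgL
      -- lower bound for |h k| on the tails
      have hknz : h k ≠ 0 := by
        intro h0
        have := hik T (by rw [abs_of_pos hT0])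
        rw [h0] at this; simp at this
      have hckR : ∃ c : ℝ, 0 < c ∧ ∀ x, T ≤ x → c ≤ |(h k).eval x| := by
        rcases tail_sign_right (h k) T (fun x hx => hroot k hknz x (habsR x hx)) with hp | hm
        · obtain ⟨c, hc0, hc⟩ := tail_lb_right (h k) T hp
          exact ⟨c, hc0, fun x hx => le_trans (hc x hx) (le_abs_self _)⟩
        · obtain ⟨c, hc0, hc⟩ := tail_lb_right (-(h k)) T
            (fun x hx => by simp only [Polynomial.eval_neg]; linarith [hm x hx])
          refine ⟨c, hc0, fun x hx => ?_⟩
          have := hc x hx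
          simp only [Polynomial.eval_neg] at this
          calc c ≤ -(h k).eval x := this
            _ ≤ |(h k).eval x| := neg_le_abs _
      have hckL : ∃ c : ℝ, 0 < c ∧ ∀ x, x ≤ -T → c ≤ |(h k).eval x| := by
        rcases tail_sign_left (h k) (-T) (fun x hx => hroot k hknz x (habsL x hx)) with hp | hm
        · obtain ⟨c, hc0, hc⟩ := tail_lb_left (h k) (-T) hp
          exact ⟨c, hc0, fun x hx => le_trans (hc x hx) (le_abs_self _)⟩
        · obtain ⟨c, hc0, hc⟩ := tail_lb_left (-(h k)) (-T)
            (fun x hx => by simp only [Polynomial.eval_neg]; linarith [hm x hx])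
          refine ⟨c, hc0, fun x hx => ?_⟩
          have := hc x hx
          simp only [Polynomial.eval_neg] at this
          calc c ≤ -(h k).eval x := this
            _ ≤ |(h k).eval x| := neg_le_abs _
      obtain ⟨ckR, hckR0, hckR⟩ := hckR
      obtain ⟨ckL, hckL0, hckL⟩ := hckL
      set ck : ℝ := min ckR ckL with hckdef
      have hck0 : 0 < ck := lt_min hckR0 hckL0
      have hck : ∀ x : ℝ, T ≤ |x| → ck ≤ |(h k).eval x| := by
        intro x hx
        rcases abs_cases x with ⟨he, _⟩ | ⟨he, _⟩
        · rw [he] at hx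
          exact le_trans (min_le_left _ _) (hckR x hx)
        · rw [he] at hx
          exact le_trans (min_le_right _ _) (hckL x (by linarith))
      -- the correction term Σ
      obtain ⟨Sig, hSigdef⟩ : ∃ q : Polynomial ℝ, q = (∑ j, h j) - h i - h k := ⟨_, rfl⟩
      obtain ⟨CS, hCS0, hCS⟩ := poly_bound Sig
      set DS : ℕ := Sig.natDegree with hDSdef
      obtain ⟨s, hs⟩ := pow_unbounded_of_one_lt ((CS + 1)/ck)
        (show (1:ℝ) < 1 + T^2 by nlinarith)
      set m : ℕ := DS + s with hmdef
      set M : Polynomial ℝ := (1 + X^2)^m with hMdef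
      have hMev : ∀ x : ℝ, M.eval x = (1 + x^2)^m := by
        intro x; rw [hMdef]; simp
      -- the solution
      refine ⟨fun j => if j = i then M * (h k)^2 + (h k) * Sig
        else if j = k then M * (-(h i * h k)) else -(h i * h k),
        min (min cgR cgL) ck, by positivity, ?_, ?_⟩
      · -- syzygy
        have hkmem : k ∈ Finset.univ.erase i := by
          rw [Finset.mem_erase]; exact ⟨Ne.symm hinek, Finset.mem_univ k⟩
        have hsplit : ∀ f : Fin n → Polynomial ℝ,
            ∑ j, f j = f i + (f k + ∑ j ∈ (Finset.univ.erase i).erase k, f j) := by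
          intro f
          rw [Finset.add_sum_erase _ f hkmem, Finset.add_sum_erase _ f (Finset.mem_univ i)]
        have hki : ¬(k = i) := fun he => hinek he.symm
        rw [hsplit (fun j => (if j = i then M * (h k)^2 + (h k) * Sig
          else if j = k then M * (-(h i * h k)) else -(h i * h k)) * h j)]
        rw [if_pos rfl, if_neg hki, if_pos rfl]
        have hee : ∑ j ∈ (Finset.univ.erase i).erase k,
            (if j = i then M * (h k)^2 + (h k) * Sig
              else if j = k then M * (-(h i * h k)) else -(h i * h k)) * h j
            = (-(h i * h k)) * ∑ j ∈ (Finset.univ.erase i).erase k, h j := by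
          rw [Finset.mul_sum]
          refine Finset.sum_congr rfl fun j hj => ?_
          rw [Finset.mem_erase] at hj
          obtain ⟨hjk, hji'⟩ := hj
          rw [Finset.mem_erase] at hji'
          rw [if_neg hji'.1, if_neg hjk]
        rw [hee]
        have hSig2 : ∑ j ∈ (Finset.univ.erase i).erase k, h j = Sig := by
          rw [hSigdef]
          have := hsplit h
          rw [this]
          ring
        rw [hSig2]
        ring
      · -- positivity
        intro j x hx hTx
        have hx2 : T^2 ≤ x^2 := by
          have h1 : |T| ≤ |x| := by rw [abs_of_pos hT0]; exact hTx
          calc T^2 = |T|^2 := (sq_abs T).symm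
            _ ≤ |x|^2 := by nlinarith [abs_nonneg T, abs_nonneg x]
            _ = x^2 := sq_abs x
        have hMx1 : (1:ℝ) ≤ (1 + x^2)^m := one_le_pow₀ (by nlinarith)
        have hgx : 0 < (-(h i * h k)).eval x := by
          have := hik x hTx
          simp only [Polynomial.eval_neg, Polynomial.eval_mul]
          linarith
        have hcg : min (min cgR cgL) ck ≤ (-(h i * h k)).eval x := by
          rcases abs_cases x with ⟨he, _⟩ | ⟨he, _⟩
          · rw [he] at hTx
            calc min (min cgR cgL) ck ≤ min cgR cgL := min_le_left _ _
              _ ≤ cgR := min_le_left _ _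
              _ ≤ _ := hcgR x hTx
          · rw [he] at hTx
            calc min (min cgR cgL) ck ≤ min cgR cgL := min_le_left _ _
              _ ≤ cgL := min_le_right _ _
              _ ≤ _ := hcgL x (by linarith)
        show min (min cgR cgL) ck ≤ (if j = i then M * (h k)^2 + (h k) * Sig
          else if j = k then M * (-(h i * h k)) else -(h i * h k)).eval x
        by_cases hji : j = i
        · rw [if_pos hji]
          -- the delicate bound
          have hev : (M * (h k)^2 + (h k) * Sig).eval x
              = (1 + x^2)^m * ((h k).eval x)^2 + (h k).eval x * Sig.eval x := by
            simp [hMev]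
          rw [hev]
          have habsk := hck x hTx
          have hSx := hCS x
          have h1 : (h k).eval x * Sig.eval x ≥ -(|(h k).eval x| * |Sig.eval x|) := by
            rw [← abs_mul]
            exact neg_abs_le _
          have h2 : ((h k).eval x)^2 = |(h k).eval x|^2 := (sq_abs _).symm
          have h3 : (1 + x^2)^m ≥ (1 + T^2)^(s:ℕ) * (1 + x^2)^DS := by
            rw [hmdef, pow_add]
            have e1 : (1 + T^2)^(s:ℕ) ≤ (1 + x^2)^s :=
              pow_le_pow_left₀ (by nlinarith) (by nlinarith) s
            have e2 : (0:ℝ) ≤ (1 + x^2)^DS := by positivity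
            calc (1 + x^2)^DS * (1 + x^2)^s ≥ (1 + x^2)^DS * (1 + T^2)^s := by
                  exact mul_le_mul_of_nonneg_left e1 e2
              _ = (1 + T^2)^(s:ℕ) * (1 + x^2)^DS := by ring
          have hkey : (1 + T^2)^(s:ℕ) * ck ≥ CS + 1 := by
            have := hs
            rw [div_lt_iff₀ hck0] at this
            nlinarith [pow_pos (show (0:ℝ) < 1 + T^2 by nlinarith) s]
          -- chain of inequalities
          have hc1 : (1 + x^2)^m * ((h k).eval x)^2
              ≥ (1 + x^2)^m * ck * |(h k).eval x| := by
            rw [h2]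
            have e0 : (0:ℝ) ≤ (1 + x^2)^m := by positivity
            have hstep : ck * |(h k).eval x| ≤ |(h k).eval x| * |(h k).eval x| :=
              mul_le_mul_of_nonneg_right habsk (abs_nonneg _)
            have := mul_le_mul_of_nonneg_left hstep e0
            nlinarith [this]
          have hc2 : (1 + x^2)^m * ck ≥ (CS + 1) * (1 + x^2)^DS := by
            have e2 : (0:ℝ) ≤ (1 + x^2)^DS := by positivity
            nlinarith [h3, hkey, hck0]
          have hc3 : |Sig.eval x| ≤ CS * (1 + x^2)^DS := by
            rw [hDSdef]; exact hSx
          have habs0 : (0:ℝ) ≤ |(h k).eval x| := abs_nonneg _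
          have hfin : (1 + x^2)^m * ((h k).eval x)^2 + (h k).eval x * Sig.eval x
              ≥ |(h k).eval x| * ((1 + x^2)^DS) := by
            have e2 : (0:ℝ) ≤ (1 + x^2)^DS := by positivity
            nlinarith [hc1, hc2, hc3, h1, habs0]
          have hone : (1:ℝ) ≤ (1 + x^2)^DS := one_le_pow₀ (by nlinarith)
          calc min (min cgR cgL) ck ≤ ck := min_le_right _ _
            _ ≤ |(h k).eval x| := habsk
            _ ≤ |(h k).eval x| * ((1 + x^2)^DS) := le_mul_of_one_le_right habs0 hone
            _ ≤ _ := hfin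
        · rw [if_neg hji]
          by_cases hjk : j = k
          · rw [if_pos hjk]
            have hev : (M * (-(h i * h k))).eval x
                = (1 + x^2)^m * (-(h i * h k)).eval x := by simp [hMev]
            rw [hev]
            calc min (min cgR cgL) ck ≤ (-(h i * h k)).eval x := hcg
              _ ≤ (1 + x^2)^m * (-(h i * h k)).eval x :=
                  le_mul_of_one_le_left hgx.le hMx1
          · rw [if_neg hjk]
            exact hcg

theorem stmt1 (n : ℕ) (h : Fin n → Polynomial ℝ)
    (hgcd : Finset.univ.gcd h = 1) (B : Set ℝ)
    (hnosol : ¬ ∃ f : Fin n → Polynomial ℝ,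
      (∀ i, ∀ x ∈ B, 0 < (f i).eval x) ∧ ∑ i, f i * h i = 0) :
    ∃ t ∈ closure B,
      (∀ i, 0 ≤ (h i).eval t) ∨ (∀ i, (h i).eval t ≤ 0) := by
  classical
  by_contra hcon
  push_neg at hcon
  apply hnosol
  have hmix : ∀ t ∈ closure B, (∃ i, (h i).eval t < 0) ∧ (∃ i, 0 < (h i).eval t) := by
    intro t ht
    obtain ⟨h1, h2⟩ := hcon t ht
    exact ⟨h1, h2⟩
  rcases Nat.eq_zero_or_pos n with hn0 | hn
  · subst hn0
    exact ⟨fun _ => 0, fun i => i.elim0, by simp⟩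
  by_cases hBne : B.Nonempty
  swap
  · refine ⟨fun _ => 0, ?_, by simp⟩
    intro i x hx
    exact absurd ⟨x, hx⟩ hBne
  set i₀ : Fin n := ⟨0, hn⟩ with hi₀def
  -- choose the threshold T
  have hroots : ∀ i, ∃ a : ℝ, 0 < a ∧ (h i ≠ 0 → ∀ x : ℝ, a ≤ |x| → (h i).eval x ≠ 0) := by
    intro i
    by_cases h0 : h i = 0
    · exact ⟨1, one_pos, fun hc => absurd h0 hc⟩
    · obtain ⟨a, ha0, ha⟩ := roots_bound (h i) h0
      exact ⟨a, ha0, fun _ => ha⟩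
  choose af haf0 hafr using hroots
  obtain ⟨ub, hub⟩ : ∃ ub : ℝ, BddAbove B → ∀ x ∈ B, x ≤ ub := by
    by_cases hBA : BddAbove B
    · obtain ⟨u, hu⟩ := hBA
      exact ⟨u, fun _ x hx => hu hx⟩
    · exact ⟨0, fun hc => absurd hc hBA⟩
  obtain ⟨lb, hlb⟩ : ∃ lb : ℝ, BddBelow B → ∀ x ∈ B, lb ≤ x := by
    by_cases hBB : BddBelow B
    · obtain ⟨u, hu⟩ := hBB
      exact ⟨u, fun _ x hx => hu hx⟩
    · exact ⟨0, fun hc => absurd hc hBB⟩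
  set T : ℝ := max (max 1 (∑ i, af i)) (max (ub + 1) (-lb + 1)) with hTdef
  have hT1 : (1:ℝ) ≤ T := le_trans (le_max_left _ _) (le_max_left _ _)
  have hroot : ∀ i, h i ≠ 0 → ∀ x : ℝ, T ≤ |x| → (h i).eval x ≠ 0 := by
    intro i h0 x hx
    refine hafr i h0 x ?_
    have h1 : af i ≤ ∑ i, af i :=
      Finset.single_le_sum (f := af) (fun i _ => (haf0 i).le) (Finset.mem_univ i)
    have h2 : (∑ i, af i) ≤ T := le_trans (le_max_right _ _) (le_max_left _ _)
    linarith
  have hup : BddAbove B → ∀ x ∈ B, x ≤ T - 1 := by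
    intro hBA x hx
    have h1 := hub hBA x hx
    have h2 : ub + 1 ≤ T := le_trans (le_max_left _ _) (le_max_right _ _)
    linarith
  have hlo : BddBelow B → ∀ x ∈ B, -(T-1) ≤ x := by
    intro hBB x hx
    have h1 := hlb hBB x hx
    have h2 : -lb + 1 ≤ T := le_trans (le_max_right _ _) (le_max_right _ _)
    linarith
  clear_value T
  -- middle and tail solutions
  obtain ⟨msol, δ, hδ0, hmsyz, hmpos⟩ := middle n h B hmix (T + 2)
  obtain ⟨U, c, hc0, hUsyz, hUpos⟩ := tail_sol n h B i₀ hmix T hT1 hroot hup hlo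
  -- global bound for msol
  choose Cm hCm0 hCm using fun j => poly_bound (msol j)
  set D : ℕ := Finset.univ.sup (fun j => (msol j).natDegree) with hDdef
  set CF : ℝ := ∑ j, Cm j with hCFdef
  have hCF0 : 0 < CF := Finset.sum_pos (fun j _ => hCm0 j) ⟨i₀, Finset.mem_univ i₀⟩
  have hCmall : ∀ j, ∀ x : ℝ, |(msol j).eval x| ≤ CF * (1 + x^2)^D := by
    intro j x
    have h1 := hCm j x
    have h2 : (1 + x^2) ^ (msol j).natDegree ≤ (1 + x^2)^D := by
      apply pow_le_pow_right₀ (by nlinarith)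
      rw [hDdef]
      exact Finset.le_sup (f := fun j => (msol j).natDegree) (Finset.mem_univ j)
    have h3 : Cm j ≤ CF := Finset.single_le_sum (f := Cm)
      (fun j _ => (hCm0 j).le) (Finset.mem_univ j)
    have h4 : (0:ℝ) ≤ (1 + x^2)^D := by positivity
    calc |(msol j).eval x| ≤ Cm j * (1 + x^2) ^ (msol j).natDegree := h1
      _ ≤ Cm j * (1 + x^2)^D := mul_le_mul_of_nonneg_left h2 (hCm0 j).le
      _ ≤ CF * (1 + x^2)^D := mul_le_mul_of_nonneg_right h3 h4
  -- bound for U on the middle zone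
  choose Cu hCu0 hCu using fun j => poly_bound (U j)
  set CU : ℝ := ∑ j, Cu j * (1 + (T+1)^2)^((U j).natDegree) with hCUdef
  have hCU0 : 0 < CU :=
    Finset.sum_pos (fun j _ => mul_pos (hCu0 j) (by positivity)) ⟨i₀, Finset.mem_univ i₀⟩
  have hCUall : ∀ j, ∀ x : ℝ, |x| ≤ T + 1 → |(U j).eval x| ≤ CU := by
    intro j x hx
    have hx2 : x^2 ≤ (T+1)^2 := by
      have h1 : |x|^2 ≤ (T+1)^2 := by nlinarith [abs_nonneg x]
      calc x^2 = |x|^2 := (sq_abs x).symm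
        _ ≤ _ := h1
    have h2 : (1 + x^2) ^ (U j).natDegree ≤ (1 + (T+1)^2)^((U j).natDegree) :=
      pow_le_pow_left₀ (by nlinarith) (by nlinarith) _
    have h3 : Cu j * (1 + (T+1)^2)^((U j).natDegree) ≤ CU :=
      Finset.single_le_sum (f := fun j => Cu j * (1 + (T+1)^2)^((U j).natDegree))
        (fun j _ => (mul_pos (hCu0 j) (by positivity)).le) (Finset.mem_univ j)
    calc |(U j).eval x| ≤ Cu j * (1 + x^2) ^ (U j).natDegree := hCu j x
      _ ≤ Cu j * (1 + (T+1)^2)^((U j).natDegree) :=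
          mul_le_mul_of_nonneg_left h2 (hCu0 j).le
      _ ≤ CU := h3
  -- constants for the weight q
  set c₁ : ℝ := (T+1)^2 + 1 with hc₁def
  have hc₁0 : 0 < c₁ := by positivity
  set ρ : ℝ := (T+1)^2 / c₁ with hρdef
  have hρ0 : 0 ≤ ρ := by positivity
  have hρ1 : ρ < 1 := by
    rw [hρdef, div_lt_one hc₁0]
    rw [hc₁def]
    linarith
  set R : ℝ := (T+2)^2 / c₁ with hRdef
  have hR1 : 1 < R := by
    rw [hRdef, lt_div_iff₀ hc₁0, hc₁def]
    nlinarith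
  obtain ⟨p₁, hp₁⟩ := exists_pow_lt_of_lt_one (show (0:ℝ) < δ / CU by positivity) hρ1
  obtain ⟨k₂, hk₂⟩ := pow_unbounded_of_one_lt ((CF + 1) * (2*c₁)^D / c) hR1
  set p : ℕ := max p₁ (k₂ + D) with hpdef
  have hpD : D ≤ p := le_trans (Nat.le_add_left D k₂) (le_max_right _ _)
  -- the final solution
  refine ⟨fun j => msol j + (Polynomial.C (1/c₁) * X^2)^p * U j, ?_, ?_⟩
  · -- positivity on B
    intro j x hx
    have hxcl : x ∈ closure B := subset_closure hx
    have hqx : ((Polynomial.C (1/c₁) * X^2)^p).eval x = (1/c₁ * x^2)^p := by simp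
    have hq0 : (0:ℝ) ≤ (1/c₁ * x^2)^p := by positivity
    have hev : ((fun j => msol j + (Polynomial.C (1/c₁) * X^2)^p * U j) j).eval x
        = (msol j).eval x + (1/c₁ * x^2)^p * (U j).eval x := by
      simp
    rw [hev]
    rcases le_or_gt |x| (T+1) with hz1 | hz1
    · -- middle zone
      have hm := hmpos x hxcl (by linarith) j
      have hU := hCUall j x hz1
      have hqρ : (1/c₁ * x^2)^p ≤ ρ^p := by
        apply pow_le_pow_left₀ (by positivity)
        have hx2 : x^2 ≤ (T+1)^2 := by
          have h1 : |x|^2 ≤ (T+1)^2 := by nlinarith [abs_nonneg x]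
          calc x^2 = |x|^2 := (sq_abs x).symm
            _ ≤ _ := h1
        rw [hρdef, one_div_mul_eq_div]
        gcongr
      have hρmono : ρ^p ≤ ρ^p₁ := pow_le_pow_of_le_one hρ0 hρ1.le (le_max_left _ _)
      have hsmall : ρ^p₁ * CU < δ := by
        rw [lt_div_iff₀ hCU0] at hp₁
        linarith
      have habs : |(1/c₁ * x^2)^p * (U j).eval x| ≤ ρ^p₁ * CU := by
        rw [abs_mul, abs_of_nonneg hq0]
        exact mul_le_mul (hqρ.trans hρmono) hU (abs_nonneg _) (by positivity)
      have hprod : -(ρ^p₁ * CU) ≤ (1/c₁ * x^2)^p * (U j).eval x := by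
        have := neg_abs_le ((1/c₁ * x^2)^p * (U j).eval x)
        linarith
      linarith
    · -- tail zones
      have hU := hUpos j x hx (by linarith)
      have hU0 : 0 < (U j).eval x := lt_of_lt_of_le hc0 hU
      rcases le_or_gt |x| (T+2) with hz2 | hz2
      · have hm := hmpos x hxcl hz2 j
        have hpos : 0 ≤ (1/c₁ * x^2)^p * (U j).eval x := mul_nonneg hq0 hU0.le
        linarith
      · -- far zone
        have hx2 : (T+2)^2 ≤ x^2 := by
          have h1 : |T+2| ≤ |x| := by
            rw [abs_of_pos (by linarith : (0:ℝ) < T+2)]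
            exact hz2.le
          calc (T+2)^2 = |T+2|^2 := (sq_abs _).symm
            _ ≤ |x|^2 := by nlinarith [abs_nonneg (T+2), abs_nonneg x]
            _ = x^2 := sq_abs x
        have hx1 : (1:ℝ) ≤ x^2 := by nlinarith
        have hqsplit : (1/c₁ * x^2)^p = (1/c₁ * x^2)^(p - D) * (1/c₁ * x^2)^D := by
          rw [← pow_add, Nat.sub_add_cancel hpD]
        have hbR : R ≤ 1/c₁ * x^2 := by
          rw [hRdef, one_div_mul_eq_div]
          gcongr
        have hR0 : (0:ℝ) ≤ R := by linarith
        have h5 : R^k₂ ≤ R^(p-D) :=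
          pow_le_pow_right₀ hR1.le (Nat.le_sub_of_add_le (le_max_right _ _))
        have h6 : R^(p-D) ≤ (1/c₁ * x^2)^(p-D) := pow_le_pow_left₀ hR0 hbR _
        have h7 : ((1+x^2)/(2*c₁))^D ≤ (1/c₁ * x^2)^D := by
          apply pow_le_pow_left₀ (by positivity)
          rw [one_div_mul_eq_div, div_le_div_iff₀ (by positivity) hc₁0]
          nlinarith
        have hq_lb : R^k₂ * ((1+x^2)^D / (2*c₁)^D) ≤ (1/c₁ * x^2)^p := by
          rw [hqsplit, ← div_pow]
          exact mul_le_mul (h5.trans h6) h7 (by positivity) (by positivity)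
        have hqU : (R^k₂ * ((1+x^2)^D / (2*c₁)^D)) * c
            ≤ (1/c₁ * x^2)^p * (U j).eval x :=
          mul_le_mul hq_lb hU hc0.le (by positivity)
        have h9 : (CF+1)*(2*c₁)^D < R^k₂ * c := by
          rw [div_lt_iff₀ hc0] at hk₂
          linarith
        have h10 : (CF+1)*(1+x^2)^D < R^k₂ * ((1+x^2)^D / (2*c₁)^D) * c := by
          have e : R^k₂ * ((1+x^2)^D / (2*c₁)^D) * c
              = (R^k₂ * c) * ((1+x^2)^D / (2*c₁)^D) := by ring
          have e2 : (R^k₂ * c) * ((1+x^2)^D / (2*c₁)^D)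
              = (R^k₂ * c * (1+x^2)^D) / (2*c₁)^D := by ring
          rw [e, e2, lt_div_iff₀ (by positivity : (0:ℝ) < (2*c₁)^D)]
          have h11 := mul_lt_mul_of_pos_right h9 (show (0:ℝ) < (1+x^2)^D by positivity)
          nlinarith
        have hmlb : -(CF * (1+x^2)^D) ≤ (msol j).eval x := by
          have h12 := hCmall j x
          have h13 := neg_abs_le ((msol j).eval x)
          linarith
        have hD1 : (1:ℝ) ≤ (1+x^2)^D := one_le_pow₀ (by nlinarith)
        nlinarith [hqU, h10, hmlb, hD1]
  · -- the syzygy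
    have e1 : ∑ j, (msol j + (Polynomial.C (1/c₁) * X^2)^p * U j) * h j
        = (∑ j, msol j * h j) + (Polynomial.C (1/c₁) * X^2)^p * ∑ j, U j * h j := by
      rw [Finset.mul_sum, ← Finset.sum_add_distrib]
      exact Finset.sum_congr rfl fun j _ => by ring
    rw [e1, hmsyz, hUsyz]
    simp
end

section
/- Let h₁, ..., hₙ ∈ ℤ[X] with gcd(h₁,...,hₙ) = 1. If the equation f₁h₁ + ⋯ + fₙhₙ = 0 has no solution with all fᵢ nonzero polynomials with non-negative integer coefficients, then there exists t ∈ ℝ with t ≥ 0 such that h₁(t), ..., hₙ(t) are all non-negative or all non-positive. -/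
set_option maxHeartbeats 1000000

open Polynomial Finset

namespace Stmt2Aux

/-- nonneg coefficients -/
def NN (p : ℤ[X]) : Prop := ∀ k, 0 ≤ p.coeff k

lemma NN.add {p q : ℤ[X]} (hp : NN p) (hq : NN q) : NN (p + q) := fun k => by
  rw [coeff_add]; exact add_nonneg (hp k) (hq k)

lemma NN.mul {p q : ℤ[X]} (hp : NN p) (hq : NN q) : NN (p * q) := fun k => by
  rw [coeff_mul]
  exact Finset.sum_nonneg fun x _ => mul_nonneg (hp x.1) (hq x.2)

lemma NN.zero : NN 0 := fun k => by simp

lemma NN.C_nat (m : ℕ) : NN (C (m : ℤ)) := fun k => by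
  rw [coeff_C]; positivity

lemma NN.one : NN (1 : ℤ[X]) := by simpa using NN.C_nat 1

lemma NN.one_add_X_pow (m : ℕ) : NN ((1 + X) ^ m) := fun k => by
  rw [add_comm, coeff_X_add_one_pow]; positivity

lemma NN.geom (m : ℕ) : NN (∑ k ∈ range m, (X : ℤ[X]) ^ k) := fun k => by
  rw [finset_sum_coeff]
  exact Finset.sum_nonneg fun j _ => by rw [coeff_X_pow]; positivity

lemma NN.sum {s : Finset ℕ} {f : ℕ → ℤ[X]} (h : ∀ i ∈ s, NN (f i)) :
    NN (∑ i ∈ s, f i) := fun k => by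
  rw [finset_sum_coeff]
  exact Finset.sum_nonneg fun j hj => h j hj k

lemma NN.sum_fin {n : ℕ} {f : Fin n → ℤ[X]} (h : ∀ i, NN (f i)) :
    NN (∑ i, f i) := fun k => by
  rw [finset_sum_coeff]
  exact Finset.sum_nonneg fun j _ => h j k

/-- aeval of NN poly at nonneg real is nonneg -/
lemma NN.aeval_nonneg {p : ℤ[X]} (hp : NN p) {t : ℝ} (ht : 0 ≤ t) :
    0 ≤ (aeval t) p := by
  rw [aeval_eq_sum_range]
  refine Finset.sum_nonneg fun i _ => ?_
  have : (0:ℝ) ≤ (p.coeff i : ℝ) := by exact_mod_cast hp i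
  have h2 : (0:ℝ) ≤ t ^ i := by positivity
  simpa [zsmul_eq_mul] using mul_nonneg this h2

lemma aeval_eq_eval_map (p : ℤ[X]) (t : ℝ) :
    (aeval t) p = (p.map (algebraMap ℤ ℝ)).eval t := by
  rw [aeval_def, eval₂_eq_eval_map]

lemma continuous_aeval (p : ℤ[X]) : Continuous fun t : ℝ => (aeval t) p := by
  have := (p.map (algebraMap ℤ ℝ)).continuous
  simpa [aeval_eq_eval_map] using this

/-- coefficient growth bound -/
lemma aeval_abs_le (Q : ℤ[X]) : ∃ M : ℝ, 0 < M ∧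
    ∀ t : ℝ, 0 ≤ t → |(aeval t) Q| ≤ M * (1 + t) ^ Q.natDegree := by
  refine ⟨∑ k ∈ range (Q.natDegree + 1), |(Q.coeff k : ℝ)| + 1, by positivity, ?_⟩
  intro t ht
  rw [aeval_eq_sum_range]
  calc |∑ i ∈ range (Q.natDegree + 1), Q.coeff i • t ^ i|
      ≤ ∑ i ∈ range (Q.natDegree + 1), |Q.coeff i • t ^ i| := Finset.abs_sum_le_sum_abs _ _
    _ ≤ ∑ i ∈ range (Q.natDegree + 1), |(Q.coeff i : ℝ)| * (1 + t) ^ Q.natDegree := by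
        refine Finset.sum_le_sum fun i hi => ?_
        rw [zsmul_eq_mul, abs_mul]
        refine mul_le_mul_of_nonneg_left ?_ (abs_nonneg _)
        have h1 : |t ^ i| = t ^ i := abs_of_nonneg (by positivity)
        rw [h1]
        calc t ^ i ≤ (1 + t) ^ i := by
              refine pow_le_pow_left₀ ht (by linarith) i
          _ ≤ (1 + t) ^ Q.natDegree := by
              refine pow_le_pow_right₀ (by linarith) (Nat.lt_succ_iff.mp (Finset.mem_range.mp hi))
    _ = (∑ k ∈ range (Q.natDegree + 1), |(Q.coeff k : ℝ)|) * (1 + t) ^ Q.natDegree := by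
        rw [Finset.sum_mul]
    _ ≤ (∑ k ∈ range (Q.natDegree + 1), |(Q.coeff k : ℝ)| + 1) * (1 + t) ^ Q.natDegree := by
        refine mul_le_mul_of_nonneg_right (by linarith) (by positivity)

/-- positive polynomial on [A,∞) has positive lower bound there -/
lemma exists_lb {Q : ℤ[X]} {A : ℝ}
    (h : ∀ t : ℝ, A ≤ t → 0 < (aeval t) Q) :
    ∃ δ : ℝ, 0 < δ ∧ ∀ t : ℝ, A ≤ t → δ ≤ (aeval t) Q := by
  set QR := Q.map (algebraMap ℤ ℝ) with hQR
  have heq : ∀ t, (aeval t) Q = QR.eval t := fun t => aeval_eq_eval_map Q t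
  rcases eq_or_ne QR.natDegree 0 with hd | hd
  · -- constant
    have hc : QR = C (QR.coeff 0) := eq_C_of_natDegree_le_zero (le_of_eq hd)
    refine ⟨QR.coeff 0, ?_, fun t htA => ?_⟩
    · have h0 := h A le_rfl
      rw [heq A] at h0
      rwa [hc, eval_C] at h0
    · rw [heq t]
      conv_rhs => rw [hc]
      rw [eval_C]
  · -- nonconstant
    have hdeg : 0 < QR.degree := natDegree_pos_iff_degree_pos.mp (Nat.pos_of_ne_zero hd)
    have hlead : 0 ≤ QR.leadingCoeff := by
      by_contra hneg
      push_neg at hneg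
      have := Polynomial.tendsto_atBot_of_leadingCoeff_nonpos QR hdeg hneg.le
      obtain ⟨T, hT⟩ := (this.eventually (Filter.eventually_le_atBot (-1))).exists_forall_of_atTop
      have h1 := h (max A T) (le_max_left _ _)
      have h2 := hT (max A T) (le_max_right _ _)
      rw [heq] at h1
      linarith
    have htop := Polynomial.tendsto_atTop_of_leadingCoeff_nonneg QR hdeg hlead
    obtain ⟨T, hT⟩ := (htop.eventually (Filter.eventually_ge_atTop (1:ℝ))).exists_forall_of_atTop
    -- min on [A, max A T]
    have hne : (Set.Icc A (max A T)).Nonempty := ⟨A, le_rfl, le_max_left _ _⟩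
    obtain ⟨x, hx, hmin⟩ := isCompact_Icc.exists_isMinOn hne (QR.continuous.continuousOn)
    have hxpos : 0 < QR.eval x := by
      have := h x hx.1; rwa [heq] at this
    refine ⟨min (QR.eval x) 1, lt_min hxpos one_pos, fun t htA => ?_⟩
    rw [heq]
    rcases le_total t (max A T) with hcase | hcase
    · exact le_trans (min_le_left _ _) (hmin ⟨htA, hcase⟩)
    · exact le_trans (min_le_right _ _) (hT t (le_trans (le_max_right _ _) hcase))


lemma one_lt_rsq {b₁ b₂ : ℝ} (hb₁ : 0 ≤ b₁) (h12 : b₁ < b₂) :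
    1 < ((1+b₂)/(1+b₁))^2 := by
  have h1 : (0:ℝ) < 1 + b₁ := by linarith
  have h2 : 1 < (1+b₂)/(1+b₁) := by
    rw [lt_div_iff₀ h1]; linarith
  nlinarith

lemma comb_finite (Q H : ℤ[X]) (b₁ b₂ a' : ℝ) (hb₁ : 0 ≤ b₁) (h12 : b₁ < b₂) (h2a : b₂ ≤ a')
    (hQ : ∀ t ∈ Set.Icc (0:ℝ) b₂, 0 < (aeval t) Q)
    (hH : ∀ t ∈ Set.Icc b₁ a', 0 < (aeval t) H) :
    ∃ d N : ℕ, 0 < d ∧ ∀ t ∈ Set.Icc (0:ℝ) a',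
      0 < (d:ℝ) * (aeval t) Q + (1+t)^(2*N) * (aeval t) H := by
  have hb₂ : 0 < b₂ := lt_of_le_of_lt hb₁ h12
  obtain ⟨t₁, ht₁, hmin₁⟩ := isCompact_Icc.exists_isMinOn
    (⟨0, le_rfl, hb₁⟩ : (Set.Icc (0:ℝ) b₁).Nonempty) (continuous_aeval Q).continuousOn
  set δ₁ := (aeval t₁) Q with hδ₁def
  have hδ₁ : 0 < δ₁ := hQ t₁ ⟨ht₁.1, le_trans ht₁.2 (le_of_lt h12)⟩
  obtain ⟨t₂, ht₂, hmax₂⟩ := isCompact_Icc.exists_isMaxOn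
    (⟨0, le_rfl, hb₁⟩ : (Set.Icc (0:ℝ) b₁).Nonempty) ((continuous_aeval H).abs.continuousOn)
  set MH := |(aeval t₂) H| + 1 with hMHdef
  have hMH : 0 < MH := by positivity
  have hMHb : ∀ t ∈ Set.Icc (0:ℝ) b₁, |(aeval t) H| ≤ MH - 1 := by
    intro t ht
    have := hmax₂ ht
    simp only [Set.mem_setOf_eq] at this
    rw [hMHdef]
    linarith [this]
  obtain ⟨t₃, ht₃, hmin₃⟩ := isCompact_Icc.exists_isMinOn
    (⟨b₂, le_rfl, h2a⟩ : (Set.Icc b₂ a').Nonempty) (continuous_aeval H).continuousOn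
  set δ₂ := (aeval t₃) H with hδ₂def
  have hδ₂ : 0 < δ₂ := hH t₃ ⟨le_trans (le_of_lt h12) ht₃.1, ht₃.2⟩
  obtain ⟨t₄, ht₄, hmax₄⟩ := isCompact_Icc.exists_isMaxOn
    (⟨0, le_rfl, le_trans hb₂.le h2a⟩ : (Set.Icc (0:ℝ) a').Nonempty)
    ((continuous_aeval Q).abs.continuousOn)
  set MQ := |(aeval t₄) Q| + 1 with hMQdef
  have hMQ : 0 < MQ := by positivity
  have hMQb : ∀ t ∈ Set.Icc (0:ℝ) a', |(aeval t) Q| ≤ MQ := by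
    intro t ht
    have := hmax₄ ht
    simp only [Set.mem_setOf_eq] at this
    rw [hMQdef]; linarith [this]
  set r := (1+b₂)/(1+b₁) with hrdef
  have h1b₁ : (0:ℝ) < 1 + b₁ := by linarith
  have h1b₂ : (0:ℝ) < 1 + b₂ := by linarith
  have hr2 : 1 < r^2 := one_lt_rsq hb₁ h12
  obtain ⟨N, hN⟩ := pow_unbounded_of_one_lt ((MH/δ₁ + 2) * MQ / δ₂) hr2
  set x := (1+b₁)^(2*N) * MH / δ₁ with hxdef
  have hx0 : 0 ≤ x := by positivity
  set d := ⌈x⌉₊ + 1 with hddef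
  have hd0 : 0 < d := Nat.succ_pos _
  have hdlb : x ≤ (d:ℝ) := by
    rw [hddef]; push_cast; linarith [Nat.le_ceil x]
  have hdub : (d:ℝ) ≤ (1+b₁)^(2*N) * (MH/δ₁ + 2) := by
    rw [hddef]
    push_cast
    have h1 : (⌈x⌉₊ : ℝ) < x + 1 := Nat.ceil_lt_add_one hx0
    have h2 : (1:ℝ) ≤ (1+b₁)^(2*N) := one_le_pow₀ (by linarith)
    have h3 : x = (1+b₁)^(2*N) * (MH/δ₁) := by rw [hxdef]; ring
    nlinarith
  refine ⟨d, N, hd0, fun t ht => ?_⟩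
  have h1t : (0:ℝ) < 1 + t := by linarith [ht.1]
  rcases le_or_gt t b₁ with hcase1 | hcase1
  · -- t ∈ [0, b₁] : dQ dominates
    have hQt : δ₁ ≤ (aeval t) Q := hmin₁ ⟨ht.1, hcase1⟩
    have hHt : |(aeval t) H| ≤ MH - 1 := hMHb t ⟨ht.1, hcase1⟩
    have hpow : (1+t)^(2*N) ≤ (1+b₁)^(2*N) :=
      pow_le_pow_left₀ (by linarith [ht.1]) (by linarith) _
    have hstrict : (1+t)^(2*N) * |(aeval t) H| < (d:ℝ) * δ₁ := by
      have h2 : (1:ℝ) ≤ (1+b₁)^(2*N) := one_le_pow₀ (by linarith)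
      have hc : (1+t)^(2*N) * |(aeval t) H| ≤ (1+b₁)^(2*N) * (MH - 1) :=
        mul_le_mul hpow hHt (abs_nonneg _) (by positivity)
      have hd1 : (1+b₁)^(2*N) * MH ≤ (d:ℝ) * δ₁ := by
        have hh := mul_le_mul_of_nonneg_right hdlb hδ₁.le
        rw [hxdef, div_mul_cancel₀ _ (ne_of_gt hδ₁)] at hh
        linarith
      nlinarith
    have habs : -((1+t)^(2*N) * |(aeval t) H|) ≤ (1+t)^(2*N) * (aeval t) H := by
      have h1 : -|(aeval t) H| ≤ (aeval t) H := neg_abs_le _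
      nlinarith [pow_pos h1t (2*N)]
    have hdQ : (d:ℝ) * δ₁ ≤ (d:ℝ) * (aeval t) Q :=
      mul_le_mul_of_nonneg_left hQt (by positivity)
    linarith
  · rcases le_or_gt t b₂ with hcase2 | hcase2
    · have h1 : 0 < (aeval t) Q := hQ t ⟨ht.1, hcase2⟩
      have h2 : 0 < (aeval t) H := hH t ⟨hcase1.le, ht.2⟩
      have hd0' : (0:ℝ) < (d:ℝ) := by exact_mod_cast hd0
      nlinarith [pow_pos h1t (2*N)]
    · -- t ∈ [b₂, a'] : H term dominates
      have hHt : δ₂ ≤ (aeval t) H := hmin₃ ⟨hcase2.le, ht.2⟩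
      have hQt : |(aeval t) Q| ≤ MQ := hMQb t ht
      have hpow : (1+b₂)^(2*N) ≤ (1+t)^(2*N) :=
        pow_le_pow_left₀ (by linarith) (by linarith) _
      have hHterm : (1+b₂)^(2*N) * δ₂ ≤ (1+t)^(2*N) * (aeval t) H :=
        mul_le_mul hpow hHt hδ₂.le (by positivity)
      have hQterm : -((d:ℝ) * MQ) ≤ (d:ℝ) * (aeval t) Q := by
        have h1 : -MQ ≤ (aeval t) Q := by
          have := neg_abs_le ((aeval t) Q); linarith
        have hd0' : (0:ℝ) ≤ (d:ℝ) := by positivity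
        nlinarith
      have hbr : (1+b₁) * r = 1 + b₂ := by
        rw [hrdef]; field_simp
      have hid : (1+b₁)^(2*N) * (r^2)^N = (1+b₂)^(2*N) := by
        rw [← pow_mul, ← mul_pow, hbr]
      have h3 : (MH/δ₁+2) * MQ < (r^2)^N * δ₂ := by
        have := (div_lt_iff₀ hδ₂).mp hN
        linarith
      have hkey : (d:ℝ) * MQ < (1+b₂)^(2*N) * δ₂ := by
        have h4 : (d:ℝ) * MQ ≤ (1+b₁)^(2*N) * (MH/δ₁ + 2) * MQ :=
          mul_le_mul_of_nonneg_right hdub hMQ.le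
        have h5 : (1+b₁)^(2*N) * ((MH/δ₁ + 2) * MQ) < (1+b₁)^(2*N) * ((r^2)^N * δ₂) := by
          refine mul_lt_mul_of_pos_left h3 (by positivity)
        rw [← hid]
        nlinarith
      linarith


lemma comb_tail (Q H : ℤ[X]) (b₁ b₂ : ℝ) (hb₁ : 0 ≤ b₁) (h12 : b₁ < b₂)
    (hQ : ∀ t ∈ Set.Icc (0:ℝ) b₂, 0 < (aeval t) Q)
    (hH : ∀ t : ℝ, b₁ ≤ t → 0 < (aeval t) H) :
    ∃ d N : ℕ, 0 < d ∧ ∀ t : ℝ, 0 ≤ t →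
      0 < (d:ℝ) * (aeval t) Q + (1+t)^(2*N) * (aeval t) H := by
  have hb₂ : 0 < b₂ := lt_of_le_of_lt hb₁ h12
  obtain ⟨t₁, ht₁, hmin₁⟩ := isCompact_Icc.exists_isMinOn
    (⟨0, le_rfl, hb₁⟩ : (Set.Icc (0:ℝ) b₁).Nonempty) (continuous_aeval Q).continuousOn
  set δ₁ := (aeval t₁) Q with hδ₁def
  have hδ₁ : 0 < δ₁ := hQ t₁ ⟨ht₁.1, le_trans ht₁.2 (le_of_lt h12)⟩
  obtain ⟨t₂, ht₂, hmax₂⟩ := isCompact_Icc.exists_isMaxOn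
    (⟨0, le_rfl, hb₁⟩ : (Set.Icc (0:ℝ) b₁).Nonempty) ((continuous_aeval H).abs.continuousOn)
  set MH := |(aeval t₂) H| + 1 with hMHdef
  have hMH : 0 < MH := by positivity
  have hMHb : ∀ t ∈ Set.Icc (0:ℝ) b₁, |(aeval t) H| ≤ MH - 1 := by
    intro t ht
    have := hmax₂ ht
    simp only [Set.mem_setOf_eq] at this
    rw [hMHdef]
    linarith [this]
  -- lower bound for H on [b₂, ∞)
  obtain ⟨δ₂, hδ₂, hδ₂b⟩ := exists_lb (Q := H) (A := b₂) (fun t ht => hH t (by linarith))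
  -- global coeff bound for Q
  obtain ⟨MQ, hMQ, hMQb⟩ := aeval_abs_le Q
  set D := Q.natDegree with hDdef
  set r := (1+b₂)/(1+b₁) with hrdef
  have h1b₁ : (0:ℝ) < 1 + b₁ := by linarith
  have h1b₂ : (0:ℝ) < 1 + b₂ := by linarith
  have hr2 : 1 < r^2 := one_lt_rsq hb₁ h12
  obtain ⟨N₀, hN₀⟩ := pow_unbounded_of_one_lt ((MH/δ₁ + 2) * MQ * (1+b₂)^D / δ₂) hr2
  set N := max N₀ D with hNdef
  have hND : D ≤ 2 * N := by omega
  have hN : (MH/δ₁ + 2) * MQ * (1+b₂)^D / δ₂ < (r^2)^N :=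
    lt_of_lt_of_le hN₀ (pow_le_pow_right₀ hr2.le (le_max_left _ _))
  set x := (1+b₁)^(2*N) * MH / δ₁ with hxdef
  have hx0 : 0 ≤ x := by positivity
  set d := ⌈x⌉₊ + 1 with hddef
  have hd0 : 0 < d := Nat.succ_pos _
  have hdlb : x ≤ (d:ℝ) := by
    rw [hddef]; push_cast; linarith [Nat.le_ceil x]
  have hdub : (d:ℝ) ≤ (1+b₁)^(2*N) * (MH/δ₁ + 2) := by
    rw [hddef]
    push_cast
    have h1 : (⌈x⌉₊ : ℝ) < x + 1 := Nat.ceil_lt_add_one hx0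
    have h2 : (1:ℝ) ≤ (1+b₁)^(2*N) := one_le_pow₀ (by linarith)
    have h3 : x = (1+b₁)^(2*N) * (MH/δ₁) := by rw [hxdef]; ring
    nlinarith
  refine ⟨d, N, hd0, fun t ht => ?_⟩
  have h1t : (0:ℝ) < 1 + t := by linarith
  rcases le_or_gt t b₁ with hcase1 | hcase1
  · have hQt : δ₁ ≤ (aeval t) Q := hmin₁ ⟨ht, hcase1⟩
    have hHt : |(aeval t) H| ≤ MH - 1 := hMHb t ⟨ht, hcase1⟩
    have hpow : (1+t)^(2*N) ≤ (1+b₁)^(2*N) :=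
      pow_le_pow_left₀ (by linarith) (by linarith) _
    have hstrict : (1+t)^(2*N) * |(aeval t) H| < (d:ℝ) * δ₁ := by
      have h2 : (1:ℝ) ≤ (1+b₁)^(2*N) := one_le_pow₀ (by linarith)
      have hc : (1+t)^(2*N) * |(aeval t) H| ≤ (1+b₁)^(2*N) * (MH - 1) :=
        mul_le_mul hpow hHt (abs_nonneg _) (by positivity)
      have hd1 : (1+b₁)^(2*N) * MH ≤ (d:ℝ) * δ₁ := by
        have hh := mul_le_mul_of_nonneg_right hdlb hδ₁.le
        rw [hxdef, div_mul_cancel₀ _ (ne_of_gt hδ₁)] at hh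
        linarith
      nlinarith
    have habs : -((1+t)^(2*N) * |(aeval t) H|) ≤ (1+t)^(2*N) * (aeval t) H := by
      have h1 : -|(aeval t) H| ≤ (aeval t) H := neg_abs_le _
      nlinarith [pow_pos h1t (2*N)]
    have hdQ : (d:ℝ) * δ₁ ≤ (d:ℝ) * (aeval t) Q :=
      mul_le_mul_of_nonneg_left hQt (by positivity)
    linarith
  · rcases le_or_gt t b₂ with hcase2 | hcase2
    · have h1 : 0 < (aeval t) Q := hQ t ⟨ht, hcase2⟩
      have h2 : 0 < (aeval t) H := hH t hcase1.le
      have hd0' : (0:ℝ) < (d:ℝ) := by exact_mod_cast hd0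
      nlinarith [pow_pos h1t (2*N)]
    · -- t ≥ b₂ : H term dominates Q's polynomial growth
      have hHt : δ₂ ≤ (aeval t) H := hδ₂b t hcase2.le
      have hQt : |(aeval t) Q| ≤ MQ * (1+t)^D := hMQb t ht
      -- key numeric : d * MQ < (1+b₂)^(2*N-D) * δ₂
      have hbr : (1+b₁) * r = 1 + b₂ := by
        rw [hrdef]; field_simp
      have hid : (1+b₁)^(2*N) * (r^2)^N = (1+b₂)^(2*N) := by
        rw [← pow_mul, ← mul_pow, hbr]
      have hsplit : (1+b₂)^(2*N) = (1+b₂)^(2*N - D) * (1+b₂)^D := by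
        rw [← pow_add]
        congr 1
        omega
      have h3 : (MH/δ₁+2) * MQ * (1+b₂)^D < (r^2)^N * δ₂ := by
        have := (div_lt_iff₀ hδ₂).mp hN
        linarith
      have hkey : (d:ℝ) * MQ < (1+b₂)^(2*N - D) * δ₂ := by
        have h4 : (d:ℝ) * MQ ≤ (1+b₁)^(2*N) * (MH/δ₁ + 2) * MQ :=
          mul_le_mul_of_nonneg_right hdub hMQ.le
        have h5 : (1+b₁)^(2*N) * ((MH/δ₁ + 2) * MQ * (1+b₂)^D)
            < (1+b₁)^(2*N) * ((r^2)^N * δ₂) :=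
          mul_lt_mul_of_pos_left h3 (by positivity)
        have h6 : (d:ℝ) * MQ * (1+b₂)^D < (1+b₂)^(2*N - D) * δ₂ * (1+b₂)^D := by
          have h7 : (1+b₁)^(2*N) * ((r^2)^N * δ₂) = (1+b₂)^(2*N - D) * δ₂ * (1+b₂)^D := by
            rw [← mul_assoc, hid, hsplit]; ring
          have h8 : (d:ℝ) * MQ * (1+b₂)^D ≤ (1+b₁)^(2*N) * (MH/δ₁ + 2) * MQ * (1+b₂)^D :=
            mul_le_mul_of_nonneg_right h4 (by positivity)
          calc (d:ℝ) * MQ * (1+b₂)^D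
              ≤ (1+b₁)^(2*N) * (MH/δ₁ + 2) * MQ * (1+b₂)^D := h8
            _ = (1+b₁)^(2*N) * ((MH/δ₁ + 2) * MQ * (1+b₂)^D) := by ring
            _ < (1+b₁)^(2*N) * ((r^2)^N * δ₂) := h5
            _ = (1+b₂)^(2*N - D) * δ₂ * (1+b₂)^D := h7
        exact lt_of_mul_lt_mul_right (by linarith) (by positivity)
      -- now conclude
      have hQterm : -((d:ℝ) * (MQ * (1+t)^D)) ≤ (d:ℝ) * (aeval t) Q := by
        have h1 : -(MQ * (1+t)^D) ≤ (aeval t) Q := by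
          have := neg_abs_le ((aeval t) Q); linarith
        have hd0' : (0:ℝ) ≤ (d:ℝ) := by positivity
        nlinarith
      have hHterm : (1+t)^D * ((1+b₂)^(2*N - D) * δ₂) ≤ (1+t)^(2*N) * (aeval t) H := by
        have hsplit2 : (1+t)^(2*N) = (1+t)^D * (1+t)^(2*N - D) := by
          rw [← pow_add]; congr 1; omega
        have hp1 : (1+b₂)^(2*N - D) ≤ (1+t)^(2*N - D) :=
          pow_le_pow_left₀ (by linarith) (by linarith) _
        have hp2 : (1+b₂)^(2*N - D) * δ₂ ≤ (1+t)^(2*N - D) * ((aeval t) H) :=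
          mul_le_mul hp1 hHt hδ₂.le (by positivity)
        rw [hsplit2, mul_assoc]
        exact mul_le_mul_of_nonneg_left hp2 (by positivity)
      have hfin : (d:ℝ) * (MQ * (1+t)^D) < (1+t)^D * ((1+b₂)^(2*N - D) * δ₂) := by
        have := mul_lt_mul_of_pos_left hkey (pow_pos h1t D)
        nlinarith [this]
      linarith


def InCone {n : ℕ} (h : Fin n → ℤ[X]) (Q : ℤ[X]) : Prop :=
  ∃ q : Fin n → ℤ[X], (∀ j, NN (q j)) ∧ Q = ∑ j, q j * h j

lemma InCone.basis {n : ℕ} (h : Fin n → ℤ[X]) (j : Fin n) : InCone h (h j) := by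
  classical
  refine ⟨fun i => if i = j then 1 else 0, fun i => ?_, ?_⟩
  · dsimp only
    split
    · exact NN.one
    · exact NN.zero
  · rw [Finset.sum_eq_single j]
    · simp
    · intro i _ hij
      simp [hij]
    · intro hj
      exact absurd (Finset.mem_univ j) hj

lemma InCone.combine {n : ℕ} {h : Fin n → ℤ[X]} {Q H : ℤ[X]}
    (hQ : InCone h Q) (hH : InCone h H) (a b : ℤ[X]) (ha : NN a) (hb : NN b) :
    InCone h (a * Q + b * H) := by
  obtain ⟨q, hq, rfl⟩ := hQ
  obtain ⟨p, hp, rfl⟩ := hH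
  refine ⟨fun j => a * q j + b * p j, fun j => (ha.mul (hq j)).add (hb.mul (hp j)), ?_⟩
  rw [Finset.mul_sum, Finset.mul_sum, ← Finset.sum_add_distrib]
  refine Finset.sum_congr rfl fun j _ => ?_
  ring

lemma aeval_comb (dd N' : ℕ) (Q H : ℤ[X]) (t : ℝ) :
    (aeval t) (C (dd:ℤ) * Q + (1+X)^N' * H)
      = (dd:ℝ) * (aeval t) Q + (1+t)^N' * (aeval t) H := by
  simp [map_add, map_mul, map_pow, aeval_C, aeval_X]

lemma poly_dichotomy (p : ℤ[X]) :
    (∃ A : ℝ, 0 ≤ A ∧ ∀ t : ℝ, A ≤ t → 0 < (aeval t) p) ∨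
    (∃ A : ℝ, 0 ≤ A ∧ ∀ t : ℝ, A ≤ t → (aeval t) p ≤ 0) := by
  set pR := p.map (algebraMap ℤ ℝ) with hpR
  have heq : ∀ t, (aeval t) p = pR.eval t := fun t => aeval_eq_eval_map p t
  rcases eq_or_ne pR 0 with h0 | h0
  · right
    exact ⟨0, le_rfl, fun t _ => by rw [heq, h0, eval_zero]⟩
  rcases eq_or_ne pR.natDegree 0 with hd | hd
  · have hc : pR = C (pR.coeff 0) := eq_C_of_natDegree_le_zero (le_of_eq hd)
    rcases le_or_gt (pR.coeff 0) 0 with hsg | hsg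
    · right
      refine ⟨0, le_rfl, fun t _ => ?_⟩
      rw [heq]
      conv_lhs => rw [hc]
      rwa [eval_C]
    · left
      refine ⟨0, le_rfl, fun t _ => ?_⟩
      rw [heq]
      conv_rhs => rw [hc]
      rwa [eval_C]
  · have hdeg : 0 < pR.degree := natDegree_pos_iff_degree_pos.mp (Nat.pos_of_ne_zero hd)
    rcases le_or_gt pR.leadingCoeff 0 with hsg | hsg
    · right
      have := Polynomial.tendsto_atBot_of_leadingCoeff_nonpos pR hdeg hsg
      obtain ⟨T, hT⟩ := (this.eventually (Filter.eventually_le_atBot (0:ℝ))).exists_forall_of_atTop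
      exact ⟨max 0 T, le_max_left _ _, fun t ht => by
        rw [heq]; exact hT t (le_trans (le_max_right _ _) ht)⟩
    · left
      have := Polynomial.tendsto_atTop_of_leadingCoeff_nonneg pR hdeg hsg.le
      obtain ⟨T, hT⟩ := (this.eventually (Filter.eventually_ge_atTop (1:ℝ))).exists_forall_of_atTop
      exact ⟨max 0 T, le_max_left _ _, fun t ht => by
        rw [heq]
        have := hT t (le_trans (le_max_right _ _) ht)
        linarith⟩

lemma exists_eventually_pos {n : ℕ} (h : Fin n → ℤ[X])
    (hyp : ∀ t : ℝ, 0 ≤ t → ∃ j, 0 < (aeval t) (h j)) :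
    ∃ (j : Fin n) (A : ℝ), 0 ≤ A ∧ ∀ t : ℝ, A ≤ t → 0 < (aeval t) (h j) := by
  by_contra hcon
  push_neg at hcon
  have hneg : ∀ j : Fin n, ∃ A : ℝ, 0 ≤ A ∧ ∀ t : ℝ, A ≤ t → (aeval t) (h j) ≤ 0 := by
    intro j
    rcases poly_dichotomy (h j) with hl | hr
    · obtain ⟨A, hA, hpos⟩ := hl
      obtain ⟨t, hts, hneg'⟩ := hcon j A hA
      exact absurd (hpos t hts) (not_lt.mpr hneg')
    · exact hr
  choose A hA0 hAneg using hneg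
  set Astar := ∑ j, A j with hAstar
  have hAstar0 : 0 ≤ Astar := Finset.sum_nonneg fun j _ => hA0 j
  obtain ⟨j, hj⟩ := hyp Astar hAstar0
  have : A j ≤ Astar := Finset.single_le_sum (fun i _ => hA0 i) (Finset.mem_univ j)
  exact absurd (hAneg j Astar this) (not_le.mpr hj)

lemma exists_pos_combo {n : ℕ} (h : Fin n → ℤ[X])
    (hyp : ∀ t : ℝ, 0 ≤ t → ∃ j, 0 < (aeval t) (h j)) :
    ∃ Q : ℤ[X], InCone h Q ∧ ∀ t : ℝ, 0 ≤ t → 0 < (aeval t) Q := by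
  classical
  have claim : ∀ a : ℝ, 0 ≤ a →
      ∃ Q, InCone h Q ∧ ∀ t ∈ Set.Icc (0:ℝ) a, 0 < (aeval t) Q := by
    by_contra hcon
    push_neg at hcon
    obtain ⟨a₀, ha₀, hbad⟩ := hcon
    set B := {a : ℝ | 0 ≤ a ∧
      ¬∃ Q, InCone h Q ∧ ∀ t ∈ Set.Icc (0:ℝ) a, 0 < (aeval t) Q} with hB
    have hBne : B.Nonempty := by
      refine ⟨a₀, ha₀, ?_⟩
      intro ⟨Q, hQc, hQpos⟩
      obtain ⟨t, ht, hneg'⟩ := hbad Q hQc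
      exact absurd (hQpos t ht) (not_lt.mpr hneg')
    have hBbd : BddBelow B := ⟨0, fun b hb => hb.1⟩
    set s := sInf B with hs
    have hs0 : 0 ≤ s := le_csInf hBne (fun b hb => hb.1)
    have hgood : ∀ a : ℝ, 0 ≤ a → a < s →
        ∃ Q, InCone h Q ∧ ∀ t ∈ Set.Icc (0:ℝ) a, 0 < (aeval t) Q := by
      intro a ha has
      by_contra hbad2
      exact absurd (csInf_le hBbd ⟨ha, hbad2⟩) (not_le.mpr has)
    obtain ⟨j₁, hj₁⟩ := hyp s hs0
    have hopen : IsOpen {u : ℝ | 0 < (aeval u) (h j₁)} :=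
      isOpen_lt continuous_const (continuous_aeval (h j₁))
    have hev : ∀ᶠ u in nhds s, 0 < (aeval u) (h j₁) :=
      Filter.eventually_of_mem (hopen.mem_nhds hj₁) (fun u hu => hu)
    obtain ⟨ε, hε, hball⟩ := Metric.eventually_nhds_iff.mp hev
    -- a good element covering up to s + ε/2, contradiction with inf
    have hfind : ∃ Q, InCone h Q ∧ ∀ t ∈ Set.Icc (0:ℝ) (s + ε/2), 0 < (aeval t) Q := by
      rcases lt_or_ge s ε with hcase | hcase
      · refine ⟨h j₁, InCone.basis h j₁, fun t ht => ?_⟩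
        apply hball
        rw [Real.dist_eq, abs_lt]
        constructor
        · linarith [ht.1]
        · linarith [ht.2]
      · obtain ⟨Q, hQc, hQpos⟩ := hgood (s - ε/4) (by linarith) (by linarith)
        have hHpos : ∀ t ∈ Set.Icc (s - ε/2) (s + ε/2), 0 < (aeval t) (h j₁) := by
          intro t ht
          apply hball
          rw [Real.dist_eq, abs_lt]
          constructor
          · linarith [ht.1]
          · linarith [ht.2]
        obtain ⟨d, N, hd, hcomb⟩ := comb_finite Q (h j₁) (s - ε/2) (s - ε/4) (s + ε/2)
          (by linarith) (by linarith) (by linarith) hQpos hHpos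
        refine ⟨C (d:ℤ) * Q + (1+X)^(2*N) * (h j₁),
          InCone.combine hQc (InCone.basis h j₁) _ _ (NN.C_nat d) (NN.one_add_X_pow _),
          fun t ht => ?_⟩
        rw [aeval_comb]
        exact hcomb t ht
    obtain ⟨Q, hQc, hQpos⟩ := hfind
    have hexb : ∃ b ∈ B, b < s + ε/2 := by
      by_contra hb2
      push_neg at hb2
      have : s + ε/2 ≤ s := le_csInf hBne hb2
      linarith
    obtain ⟨b, hbB, hbs⟩ := hexb
    exact hbB.2 ⟨Q, hQc, fun t ht => hQpos t ⟨ht.1, by linarith [ht.2, hbB.1]⟩⟩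
  -- tail
  obtain ⟨j₀, A₀, hA₀, hj₀⟩ := exists_eventually_pos h hyp
  obtain ⟨Q, hQc, hQpos⟩ := claim (A₀ + 1) (by linarith)
  obtain ⟨d, N, hd, hcomb⟩ := comb_tail Q (h j₀) A₀ (A₀ + 1) hA₀ (by linarith) hQpos hj₀
  refine ⟨C (d:ℤ) * Q + (1+X)^(2*N) * (h j₀),
    InCone.combine hQc (InCone.basis h j₀) _ _ (NN.C_nat d) (NN.one_add_X_pow _),
    fun t ht => ?_⟩
  rw [aeval_comb]
  exact hcomb t ht



lemma choose_ratio (M k : ℕ) (hkM : k ≤ M) : ∀ j, j ≤ k →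
    (((M - j).choose (k - j) : ℕ) : ℝ)
      = (M.choose k : ℝ) * ∏ i ∈ range j, (((k:ℝ) - i)/((M:ℝ) - i)) := by
  intro j
  induction j with
  | zero => simp
  | succ j ih =>
    intro hj
    have hjk : j ≤ k := Nat.le_of_succ_le hj
    have hjM : j + 1 ≤ M := le_trans hj hkM
    rw [Finset.prod_range_succ, ← mul_assoc, ← ih hjk]
    have hMj : (0:ℝ) < (M:ℝ) - (j:ℝ) := by
      have : (j:ℝ) < (M:ℝ) := by exact_mod_cast lt_of_lt_of_le hj hkM
      linarith
    rw [mul_div_assoc', eq_div_iff (ne_of_gt hMj)]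
    have hnat : (M - j) * ((M - j - 1).choose (k - j - 1)) = (M - j).choose (k - j) * (k - j) := by
      have h1 : M - j = Nat.succ (M - j - 1) := by omega
      have h2 : k - j = Nat.succ (k - j - 1) := by omega
      rw [h1, h2]
      exact Nat.add_one_mul_choose_eq _ _
    have hcast := congrArg (fun x : ℕ => (x : ℝ)) hnat
    push_cast [Nat.cast_sub hjk, Nat.cast_sub (le_trans hjk hkM)] at hcast
    have e1 : M - (j+1) = M - j - 1 := by omega
    have e2 : k - (j+1) = k - j - 1 := by omega
    rw [e1, e2]
    nlinarith [hcast]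

lemma pow_sub_pow_le (a b : ℝ) (ha : 0 ≤ a) (hab : a ≤ b) (hb : b ≤ 1) :
    ∀ j : ℕ, b ^ j - a ^ j ≤ j * (b - a) := by
  intro j
  induction j with
  | zero => simp
  | succ j ih =>
    have h1 : 0 ≤ a ^ j := by positivity
    have h2 : a ^ j ≤ b ^ j := pow_le_pow_left₀ ha hab j
    have h3 : b ^ j ≤ 1 := pow_le_one₀ (le_trans ha hab) hb
    have he : b ^ (j+1) - a ^ (j+1) = b * (b ^ j - a ^ j) + (b - a) * a ^ j := by ring
    rw [he]
    push_cast
    nlinarith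

lemma div_le_div_of_nonneg_right' {a b c : ℝ} (h : a ≤ b) (hc : 0 < c) :
    a / c ≤ b / c := by
  rw [div_le_div_iff₀ hc hc]
  nlinarith

lemma bern (d : ℕ) (γ : ℕ → ℝ) (δ : ℝ) (hδ : 0 < δ)
    (hg : ∀ y : ℝ, y ∈ Set.Icc (0:ℝ) 1 → δ ≤ ∑ j ∈ range (d+1), γ j * y ^ j) :
    ∃ M₀ : ℕ, ∀ M : ℕ, M₀ ≤ M → ∀ k : ℕ, k ≤ M →
      0 ≤ ∑ j ∈ range (d+1), γ j *
        (if j ≤ k then (((M - j).choose (k - j) : ℕ) : ℝ) else 0) := by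
  classical
  set Γ : ℝ := ∑ j ∈ range (d+1), |γ j| with hΓdef
  have hΓ0 : 0 ≤ Γ := Finset.sum_nonneg fun j _ => abs_nonneg _
  refine ⟨d + 1 + ⌈2 * Γ * (d:ℝ)^2 / δ⌉₊, fun M hM k hk => ?_⟩
  have hdM : d < M := by omega
  have hdR : (d:ℝ) < (M:ℝ) := by exact_mod_cast hdM
  have hdMR : (0:ℝ) < (M:ℝ) - d := by linarith
  have hMpos : (0:ℝ) < (M:ℝ) := by
    have h0 : (0:ℝ) ≤ (d:ℝ) := by positivity
    linarith
  have hkM' : (k:ℝ) ≤ (M:ℝ) := by exact_mod_cast hk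
  set a : ℝ := max 0 (((k:ℝ) - d) / M) with ha_def
  set b : ℝ := min 1 ((k:ℝ) / ((M:ℝ) - d)) with hb_def
  have ha0 : 0 ≤ a := le_max_left _ _
  have hb1 : b ≤ 1 := min_le_left _ _
  have hb0 : 0 ≤ b := le_min zero_le_one (by positivity)
  have hd0 : (0:ℝ) ≤ (d:ℝ) := by positivity
  have hab : a ≤ b := by
    rcases le_or_gt ((k:ℝ) - d) 0 with hcase | hcase
    · have haz : a = 0 := by
        rw [ha_def, max_eq_left]
        exact div_nonpos_of_nonpos_of_nonneg hcase hMpos.le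
      rw [haz]; exact hb0
    · have ha' : a = ((k:ℝ) - d)/M := by
        rw [ha_def, max_eq_right]
        exact le_of_lt (div_pos hcase hMpos)
      rw [ha']
      refine le_min ?_ ?_
      · rw [div_le_one hMpos]; linarith
      · rw [div_le_div_iff₀ hMpos hdMR]
        nlinarith
  -- factor bounds
  have hfac : ∀ i : ℕ, (i:ℝ) < (k:ℝ) → (i:ℝ) ≤ (d:ℝ) →
      a ≤ ((k:ℝ) - i)/((M:ℝ) - i) ∧ ((k:ℝ) - i)/((M:ℝ) - i) ≤ b := by
    intro i hik hid
    have hi0 : (0:ℝ) ≤ (i:ℝ) := by positivity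
    have hiM : (i:ℝ) < (M:ℝ) := by linarith
    have hden : (0:ℝ) < (M:ℝ) - i := by linarith
    constructor
    · rcases le_or_gt ((k:ℝ) - d) 0 with hcase | hcase
      · have haz : a = 0 := by
          rw [ha_def, max_eq_left]
          exact div_nonpos_of_nonpos_of_nonneg hcase hMpos.le
        rw [haz]
        exact le_of_lt (div_pos (by linarith) hden)
      · have ha' : a = ((k:ℝ) - d)/M := by
          rw [ha_def, max_eq_right]
          exact le_of_lt (div_pos hcase hMpos)
        rw [ha', div_le_div_iff₀ hMpos hden]
        nlinarith [mul_le_mul_of_nonneg_left (show (M:ℝ)-(k:ℝ) ≤ (M:ℝ)-(i:ℝ) by linarith) hi0,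
          mul_le_mul_of_nonneg_right hid (le_of_lt hden)]
    · refine le_min ?_ ?_
      · rw [div_le_one hden]; linarith
      · rw [div_le_div_iff₀ hden hdMR]
        nlinarith [mul_le_mul_of_nonneg_left hid (show (0:ℝ) ≤ (k:ℝ) by positivity),
          mul_le_mul_of_nonneg_left (le_of_lt hdR) hi0]
  -- ρ and its bounds
  have hρbounds : ∀ j, j ≤ d →
      a ^ j ≤ (if j ≤ k then ∏ i ∈ range j, (((k:ℝ) - i)/((M:ℝ) - i)) else 0) ∧
      (if j ≤ k then ∏ i ∈ range j, (((k:ℝ) - i)/((M:ℝ) - i)) else 0) ≤ b ^ j := by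
    intro j hjd
    by_cases hjk : j ≤ k
    · rw [if_pos hjk]
      have hmem : ∀ i ∈ range j, (i:ℝ) < (k:ℝ) ∧ (i:ℝ) ≤ (d:ℝ) := by
        intro i hi
        have hij : i < j := Finset.mem_range.mp hi
        constructor
        · have h1 : (i:ℝ) < (j:ℝ) := by exact_mod_cast hij
          have h2 : (j:ℝ) ≤ (k:ℝ) := by exact_mod_cast hjk
          linarith
        · have h1 : (i:ℝ) < (j:ℝ) := by exact_mod_cast hij
          have h2 : (j:ℝ) ≤ (d:ℝ) := by exact_mod_cast hjd
          linarith
      constructor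
      · calc a ^ j = ∏ _i ∈ range j, a := by rw [Finset.prod_const, Finset.card_range]
          _ ≤ ∏ i ∈ range j, (((k:ℝ) - i)/((M:ℝ) - i)) :=
              Finset.prod_le_prod (fun i _ => ha0)
                (fun i hi => (hfac i (hmem i hi).1 (hmem i hi).2).1)
      · calc (∏ i ∈ range j, (((k:ℝ) - i)/((M:ℝ) - i)))
            ≤ ∏ _i ∈ range j, b :=
              Finset.prod_le_prod
                (fun i hi => le_trans ha0 (hfac i (hmem i hi).1 (hmem i hi).2).1)
                (fun i hi => (hfac i (hmem i hi).1 (hmem i hi).2).2)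
          _ = b ^ j := by rw [Finset.prod_const, Finset.card_range]
    · rw [if_neg hjk]
      have hkd : k < d := lt_of_lt_of_le (Nat.lt_of_not_le hjk) hjd
      have haz : a = 0 := by
        rw [ha_def, max_eq_left]
        refine div_nonpos_of_nonpos_of_nonneg ?_ hMpos.le
        have : (k:ℝ) < (d:ℝ) := by exact_mod_cast hkd
        linarith
      have hj0 : j ≠ 0 := by omega
      rw [haz, zero_pow hj0]
      exact ⟨le_rfl, by positivity⟩
  -- rewrite the sum
  have hsum_eq : (∑ j ∈ range (d+1), γ j *
        (if j ≤ k then (((M - j).choose (k - j) : ℕ) : ℝ) else 0))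
      = (M.choose k : ℝ) * ∑ j ∈ range (d+1), γ j *
        (if j ≤ k then ∏ i ∈ range j, (((k:ℝ) - i)/((M:ℝ) - i)) else 0) := by
    rw [Finset.mul_sum]
    refine Finset.sum_congr rfl fun j _ => ?_
    by_cases hjk : j ≤ k
    · rw [if_pos hjk, if_pos hjk, choose_ratio M k hk j hjk]
      ring
    · rw [if_neg hjk, if_neg hjk]
      ring
  rw [hsum_eq]
  refine mul_nonneg (by positivity) ?_
  -- b - a small
  have hba : b - a ≤ 2 * d / ((M:ℝ) - d) := by
    rcases le_or_gt ((k:ℝ) - d) 0 with hcase | hcase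
    · have hkd : (k:ℝ) ≤ (d:ℝ) := by linarith
      have hb' : b ≤ (d:ℝ)/((M:ℝ) - d) := by
        refine le_trans (min_le_right _ _) ?_
        exact div_le_div_of_nonneg_right' hkd hdMR
      have hd2 : (d:ℝ)/((M:ℝ)-d) ≤ 2*d/((M:ℝ)-d) := by
        refine div_le_div_of_nonneg_right' (by linarith) hdMR
      linarith
    · have ha' : a = ((k:ℝ) - d)/M := by
        rw [ha_def, max_eq_right]
        exact le_of_lt (div_pos hcase hMpos)
      have hb' : b ≤ (k:ℝ)/((M:ℝ) - d) := min_le_right _ _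
      have key : (k:ℝ)/((M:ℝ) - d) - ((k:ℝ) - d)/M ≤ 2*d/((M:ℝ)-d) := by
        rw [div_sub_div _ _ (ne_of_gt hdMR) (ne_of_gt hMpos),
          div_le_div_iff₀ (by positivity) hdMR]
        have hexp : (k:ℝ) * M - ((M:ℝ) - d) * ((k:ℝ) - d)
            = (d:ℝ)*M + (k:ℝ)*d - (d:ℝ)^2 := by ring
        rw [hexp]
        have h5 : (d:ℝ)*M + (k:ℝ)*d - (d:ℝ)^2 ≤ 2*(d:ℝ)*M := by
          nlinarith [mul_le_mul_of_nonneg_right hkM' hd0]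
        nlinarith [mul_le_mul_of_nonneg_right h5 (le_of_lt hdMR)]
      linarith
  -- per-term lower bound
  have hsum_lb : ∀ j ∈ range (d+1),
      γ j * b ^ j - |γ j| * ((d:ℝ) * (b - a))
        ≤ γ j * (if j ≤ k then ∏ i ∈ range j, (((k:ℝ) - i)/((M:ℝ) - i)) else 0) := by
    intro j hj
    have hjd : j ≤ d := Nat.lt_succ_iff.mp (Finset.mem_range.mp hj)
    obtain ⟨hl, hr⟩ := hρbounds j hjd
    have hdiff : b ^ j - a ^ j ≤ (d:ℝ) * (b - a) := by
      calc b ^ j - a ^ j ≤ (j:ℝ) * (b - a) := pow_sub_pow_le a b ha0 hab hb1 j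
        _ ≤ (d:ℝ) * (b - a) := by
            have hjd' : (j:ℝ) ≤ (d:ℝ) := by exact_mod_cast hjd
            nlinarith [sub_nonneg.mpr hab]
    rcases le_or_gt 0 (γ j) with hγ | hγ
    · have habs : |γ j| = γ j := abs_of_nonneg hγ
      rw [habs]
      nlinarith
    · have habs : |γ j| = -γ j := abs_of_neg hγ
      rw [habs]
      nlinarith
  have h1 := Finset.sum_le_sum hsum_lb
  rw [Finset.sum_sub_distrib, ← Finset.sum_mul] at h1
  have h2 : δ ≤ ∑ j ∈ range (d+1), γ j * b ^ j := hg b ⟨hb0, hb1⟩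
  have h3 : Γ * ((d:ℝ) * (b - a)) ≤ Γ * ((d:ℝ) * (2 * d / ((M:ℝ) - d))) := by
    refine mul_le_mul_of_nonneg_left ?_ hΓ0
    exact mul_le_mul_of_nonneg_left hba hd0
  have h4 : Γ * ((d:ℝ) * (2 * d / ((M:ℝ) - d))) ≤ δ := by
    have hMd1 : 2*Γ*(d:ℝ)^2/δ + 1 ≤ (M:ℝ) - d := by
      have hceil : 2 * Γ * (d:ℝ)^2 / δ ≤ (⌈2 * Γ * (d:ℝ)^2 / δ⌉₊ : ℝ) := Nat.le_ceil _
      have hM' : (d:ℝ) + 1 + (⌈2 * Γ * (d:ℝ)^2 / δ⌉₊ : ℝ) ≤ (M:ℝ) := by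
        exact_mod_cast hM
      linarith
    have heq : Γ * ((d:ℝ) * (2 * d / ((M:ℝ) - d))) = 2*Γ*(d:ℝ)^2 / ((M:ℝ) - d) := by
      rw [div_eq_mul_inv, div_eq_mul_inv]
      ring
    rw [heq, div_le_iff₀ hdMR]
    have h6 : 2*Γ*(d:ℝ)^2/δ*δ = 2*Γ*(d:ℝ)^2 := div_mul_cancel₀ _ (ne_of_gt hδ)
    nlinarith [mul_le_mul_of_nonneg_left hMd1 hδ.le]
  linarith


lemma poincareR (p : ℝ[X]) (δ : ℝ) (hδ : 0 < δ) (hp : ∀ t : ℝ, 0 ≤ t → δ ≤ p.eval t) :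
    ∃ N : ℕ, ∀ k : ℕ, 0 ≤ ((1 + X) ^ N * p).coeff k := by
  classical
  have hp0 : p ≠ 0 := by
    intro h
    have := hp 0 le_rfl
    rw [h, eval_zero] at this
    linarith
  set d := p.natDegree with hd_def
  -- leading coefficient positive
  have hlead : 0 < p.coeff d := by
    rcases Nat.eq_zero_or_pos d with h0 | hpos
    · rw [h0]
      have h1 := hp 0 le_rfl
      rw [← coeff_zero_eq_eval_zero] at h1
      linarith
    · have hdeg : 0 < p.degree := natDegree_pos_iff_degree_pos.mp hpos
      by_contra hneg
      push_neg at hneg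
      have hlc : p.leadingCoeff ≤ 0 := by
        rwa [leadingCoeff]
      have := Polynomial.tendsto_atBot_of_leadingCoeff_nonpos p hdeg hlc
      obtain ⟨T, hT⟩ := (this.eventually (Filter.eventually_le_atBot (0:ℝ))).exists_forall_of_atTop
      have h1 := hp (max 0 T) (le_max_left _ _)
      have h2 := hT (max 0 T) (le_max_right _ _)
      linarith
  set g : ℝ[X] := ∑ j ∈ range (d+1), C (p.coeff j) * (X ^ j * (1 - X) ^ (d - j)) with hg_def
  have hgdeg : g.natDegree < d + 1 := by
    rw [Nat.lt_succ_iff, hg_def]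
    refine le_trans (natDegree_sum_le _ _) ?_
    rw [Finset.fold_max_le]
    refine ⟨Nat.zero_le _, fun j hj => ?_⟩
    refine le_trans (natDegree_C_mul_le _ _) ?_
    refine le_trans (natDegree_mul_le) ?_
    have h1 : (X ^ j : ℝ[X]).natDegree = j := natDegree_X_pow j
    have h2 : ((1 - X : ℝ[X]) ^ (d - j)).natDegree ≤ (d - j) := by
      refine le_trans natDegree_pow_le ?_
      have : (1 - X : ℝ[X]).natDegree ≤ 1 := by
        refine le_trans (natDegree_sub_le _ _) ?_
        simp [natDegree_one, natDegree_X]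
      nlinarith [this]
    have hjd : j ≤ d := Nat.lt_succ_iff.mp (Finset.mem_range.mp hj)
    omega
  have geval : ∀ y : ℝ, g.eval y
      = ∑ j ∈ range (d+1), p.coeff j * (y ^ j * (1 - y) ^ (d - j)) := by
    intro y
    rw [hg_def, eval_finset_sum]
    refine Finset.sum_congr rfl fun j _ => ?_
    simp [eval_mul, eval_pow, eval_sub, eval_one, eval_C, eval_X]
  -- g positive on [0,1]
  have hgpos : ∀ y ∈ Set.Icc (0:ℝ) 1, 0 < g.eval y := by
    rintro y ⟨hy0, hy1⟩
    rcases eq_or_lt_of_le hy1 with h1 | h1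
    · -- y = 1
      subst h1
      rw [geval]
      rw [Finset.sum_eq_single d]
      · simp only [one_pow, sub_self, one_mul]
        rw [Nat.sub_self, pow_zero]
        simpa using hlead
      · intro j hj hjd
        have hjd' : j ≤ d := Nat.lt_succ_iff.mp (Finset.mem_range.mp hj)
        have : 0 < d - j := by omega
        rw [sub_self, zero_pow (by omega : d - j ≠ 0)]
        ring
      · intro hd
        exact absurd (Finset.self_mem_range_succ d) hd
    · -- y < 1
      have h1y : 0 < 1 - y := by linarith
      set x := y / (1 - y) with hx_def
      have hx0 : 0 ≤ x := div_nonneg hy0 h1y.le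
      have key : g.eval y = (1 - y) ^ d * p.eval x := by
        rw [geval, eval_eq_sum_range' (Nat.lt_succ_of_le le_rfl), Finset.mul_sum]
        · refine Finset.sum_congr rfl fun j hj => ?_
          have hjd : j ≤ d := Nat.lt_succ_iff.mp (Finset.mem_range.mp hj)
          have hxj : x ^ j * (1 - y) ^ j = y ^ j := by
            rw [hx_def, div_pow]
            field_simp
          have hsplit : (1 - y) ^ d = (1 - y) ^ (d - j) * (1 - y) ^ j := by
            rw [← pow_add]
            congr 1
            omega
          calc p.coeff j * (y ^ j * (1 - y) ^ (d - j))
              = p.coeff j * ((x ^ j * (1 - y) ^ j) * (1 - y) ^ (d - j)) := by rw [hxj]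
            _ = (1 - y) ^ d * (p.coeff j * x ^ j) := by rw [hsplit]; ring
      rw [key]
      have hpx : 0 < p.eval x := lt_of_lt_of_le hδ (hp x hx0)
      exact mul_pos (pow_pos h1y d) hpx
  -- minimum of g on [0,1]
  obtain ⟨y₀, hy₀, hmin⟩ := isCompact_Icc.exists_isMinOn (⟨0, by norm_num⟩ :
      (Set.Icc (0:ℝ) 1).Nonempty) (g.continuous.continuousOn)
  set δ' := g.eval y₀ with hδ'_def
  have hδ'pos : 0 < δ' := hgpos y₀ hy₀
  have hbern_hyp : ∀ y : ℝ, y ∈ Set.Icc (0:ℝ) 1 →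
      δ' ≤ ∑ j ∈ range (d+1), g.coeff j * y ^ j := by
    intro y hy
    rw [← eval_eq_sum_range' hgdeg]
    exact hmin hy
  obtain ⟨M₀, hM₀⟩ := bern d (fun j => g.coeff j) δ' hδ'pos hbern_hyp
  set M := max M₀ (d + 1) with hM_def
  have hMM₀ : M₀ ≤ M := le_max_left _ _
  have hdM : d < M := lt_of_lt_of_le (Nat.lt_succ_self d) (le_max_right _ _)
  -- the identity
  have hiden : (1 + X) ^ (M - d) * p
      = ∑ j ∈ range (d+1), C (g.coeff j) * ((1 + X) ^ (M - j) * X ^ j) := by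
    apply Polynomial.eq_of_infinite_eval_eq
    refine Set.Infinite.mono ?_ (Set.Ioi_infinite (0:ℝ))
    intro x hx
    have hx0 : (0:ℝ) < x := hx
    have h1x : (0:ℝ) < 1 + x := by linarith
    simp only [Set.mem_setOf_eq]
    rw [eval_mul, eval_pow, eval_add, eval_one, eval_X, eval_finset_sum]
    set y := x / (1 + x) with hy_def
    have hy0 : 0 ≤ y := div_nonneg hx0.le h1x.le
    have hy1 : y < 1 := by
      rw [hy_def, div_lt_one h1x]
      linarith
    have h1y : 1 - y = 1 / (1 + x) := by
      rw [hy_def]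
      field_simp
      ring
    -- per-term rewrite
    have hterm : ∀ j ∈ range (d+1),
        (C (g.coeff j) * ((1 + X) ^ (M - j) * X ^ j)).eval x
          = (1 + x) ^ (M - d) * ((1 + x) ^ d * (g.coeff j * y ^ j)) := by
      intro j hj
      have hjd : j ≤ d := Nat.lt_succ_iff.mp (Finset.mem_range.mp hj)
      rw [eval_mul, eval_C, eval_mul, eval_pow, eval_add, eval_one, eval_X, eval_pow, eval_X]
      have hsplit : (1 + x) ^ (M - j) = (1 + x) ^ (M - d) * (1 + x) ^ (d - j) := by
        rw [← pow_add]
        congr 1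
        omega
      have hyj : y ^ j = x ^ j / (1 + x) ^ j := by rw [hy_def, div_pow]
      have hsplit2 : (1 + x) ^ d = (1 + x) ^ (d - j) * (1 + x) ^ j := by
        rw [← pow_add]; congr 1; omega
      rw [hsplit, hyj, hsplit2]
      field_simp
    rw [Finset.sum_congr rfl hterm, ← Finset.mul_sum, ← Finset.mul_sum]
    congr 1
    -- now: p.eval x = (1+x)^d * ∑ γ_j y^j = (1+x)^d g(y) = ∑ c_j x^j
    have hgy : ∑ j ∈ range (d+1), g.coeff j * y ^ j = g.eval y :=
      (eval_eq_sum_range' hgdeg y).symm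
    rw [hgy, geval]
    rw [eval_eq_sum_range' (Nat.lt_succ_of_le le_rfl), Finset.mul_sum]
    refine Finset.sum_congr rfl fun j hj => ?_
    have hjd : j ≤ d := Nat.lt_succ_iff.mp (Finset.mem_range.mp hj)
    rw [h1y, hy_def]
    have hsplit2 : (1 + x) ^ d = (1 + x) ^ (d - j) * (1 + x) ^ j := by
      rw [← pow_add]; congr 1; omega
    rw [div_pow, div_pow, one_pow, hsplit2]
    field_simp
  -- conclude
  refine ⟨M - d, fun k => ?_⟩
  rcases le_or_gt k M with hkM | hkM
  · rw [hiden, finset_sum_coeff]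
    have hterm : ∀ j ∈ range (d+1),
        (C (g.coeff j) * ((1 + X) ^ (M - j) * X ^ j)).coeff k
          = g.coeff j * (if j ≤ k then (((M - j).choose (k - j) : ℕ) : ℝ) else 0) := by
      intro j hj
      rw [coeff_C_mul, coeff_mul_X_pow']
      congr 1
      by_cases hjk : j ≤ k
      · rw [if_pos hjk, if_pos hjk, add_comm 1 (X:ℝ[X]), coeff_X_add_one_pow]
      · rw [if_neg hjk, if_neg hjk]
    rw [Finset.sum_congr rfl hterm]
    exact hM₀ M hMM₀ k hkM
  · have hdeg : ((1 + X) ^ (M - d) * p).natDegree ≤ M := by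
      refine le_trans natDegree_mul_le ?_
      have h1 : ((1 + X : ℝ[X]) ^ (M - d)).natDegree ≤ (M - d) := by
        refine le_trans natDegree_pow_le ?_
        have : (1 + X : ℝ[X]).natDegree ≤ 1 := by
          rw [add_comm]
          refine le_trans (natDegree_add_le _ _) ?_
          simp [natDegree_one, natDegree_X]
        nlinarith [this]
      omega
    rw [coeff_eq_zero_of_natDegree_lt (lt_of_le_of_lt hdeg hkM)]


lemma poincare_int (p : ℤ[X]) (hp : ∀ t : ℝ, 0 ≤ t → 0 < (aeval t) p) :
    ∃ N : ℕ, ∀ k : ℕ, 0 ≤ ((1 + X) ^ N * p).coeff k := by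
  obtain ⟨δ, hδ, hlb⟩ := exists_lb (Q := p) (A := 0) hp
  set pR := p.map (algebraMap ℤ ℝ) with hpR
  have hlbR : ∀ t : ℝ, 0 ≤ t → δ ≤ pR.eval t := by
    intro t ht
    have := hlb t ht
    rwa [aeval_def, eval₂_eq_eval_map] at this
  obtain ⟨N, hN⟩ := poincareR pR δ hδ hlbR
  refine ⟨N, fun k => ?_⟩
  have hk := hN k
  have hmap : (1 + X : ℝ[X]) ^ N * pR = ((1 + X) ^ N * p).map (algebraMap ℤ ℝ) := by
    rw [Polynomial.map_mul, Polynomial.map_pow, Polynomial.map_add, Polynomial.map_one,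
      Polynomial.map_X]
  rw [hmap, coeff_map] at hk
  rw [algebraMap_int_eq, eq_intCast] at hk
  exact_mod_cast hk

lemma coeff_mul_geom_ge (P : ℤ[X]) (hP : NN P) (D k : ℕ) (hk : k ≤ D) :
    P.coeff 0 ≤ (P * ∑ j ∈ range (D+1), (X:ℤ[X])^j).coeff k := by
  rw [Finset.mul_sum, finset_sum_coeff]
  rw [Finset.sum_congr rfl (fun j _ => coeff_mul_X_pow' P j k)]
  have hterm : (if k ≤ k then P.coeff (k - k) else 0) = P.coeff 0 := by simp
  rw [← hterm]
  refine Finset.single_le_sum (f := fun j => if j ≤ k then P.coeff (k-j) else 0)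
    (fun j _ => ?_) (Finset.mem_range.mpr (by omega))
  split
  · exact hP _
  · exact le_rfl

lemma key_rel {n : ℕ} (h q p0 : Fin n → ℤ[X]) (Q P W A : ℤ[X])
    (hQrep : Q = ∑ j, q j * h j) (hPrep : P = ∑ j, p0 j * (-h j))
    (i : Fin n) (hW : W = A * P - h i) :
    ∑ j, ((if j = i then Q else 0) + W * q j + Q * (A * p0 j)) * h j = 0 := by
  classical
  have h1 : ∑ j, (if j = i then Q else 0) * h j = Q * h i := by
    rw [Finset.sum_eq_single i]
    · simp
    · intro j _ hji
      simp [hji]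
    · intro hi
      exact absurd (Finset.mem_univ i) hi
  have h2 : ∑ j, (W * q j) * h j = W * Q := by
    rw [hQrep, Finset.mul_sum]
    exact Finset.sum_congr rfl fun j _ => by ring
  have h3 : ∑ j, (Q * (A * p0 j)) * h j = -(Q * (A * P)) := by
    have step : ∀ j ∈ (Finset.univ : Finset (Fin n)),
        (Q * (A * p0 j)) * h j = -(Q * (A * (p0 j * (-h j)))) := fun j _ => by ring
    rw [Finset.sum_congr rfl step, Finset.sum_neg_distrib, ← Finset.mul_sum, ← Finset.mul_sum,
      ← hPrep]
  have hsplit : ∑ j, ((if j = i then Q else 0) + W * q j + Q * (A * p0 j)) * h j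
      = (∑ j, (if j = i then Q else 0) * h j) + ((∑ j, (W * q j) * h j)
        + (∑ j, (Q * (A * p0 j)) * h j)) := by
    rw [← Finset.sum_add_distrib, ← Finset.sum_add_distrib]
    exact Finset.sum_congr rfl fun j _ => by ring
  rw [hsplit, h1, h2, h3, hW]
  ring

end Stmt2Aux

open Stmt2Aux

theorem stmt2 (n : ℕ) (h : Fin n → Polynomial ℤ)
    (hgcd : Finset.univ.gcd h = 1)
    (hnosol : ¬ ∃ f : Fin n → Polynomial ℤ,
      (∀ i, f i ≠ 0) ∧ (∀ i, ∀ k : ℕ, 0 ≤ (f i).coeff k) ∧ ∑ i, f i * h i = 0) :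
    ∃ t : ℝ, 0 ≤ t ∧
      ((∀ i, 0 ≤ aeval t (h i)) ∨ (∀ i, aeval t (h i) ≤ 0)) := by
  classical
  by_contra hcon
  push_neg at hcon
  apply hnosol
  -- positive combination Q
  obtain ⟨Q, ⟨q, hqNN, hQrep⟩, hQpos⟩ := exists_pos_combo h
    (fun t ht => (hcon t ht).2)
  obtain ⟨P₀, ⟨p0, hp0NN, hP₀rep⟩, hP₀pos⟩ := exists_pos_combo (fun j => -h j)
    (fun t ht => by
      obtain ⟨i, hi⟩ := (hcon t ht).1
      exact ⟨i, by simpa [map_neg] using neg_pos.mpr hi⟩)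
  have hP₀rep' : P₀ = ∑ j, p0 j * (-h j) := hP₀rep
  obtain ⟨N₁, hN₁⟩ := poincare_int Q hQpos
  obtain ⟨N₂, hN₂⟩ := poincare_int P₀ hP₀pos
  set Qh : ℤ[X] := (1+X)^N₁ * Q with hQh_def
  set Ph : ℤ[X] := (1+X)^N₂ * P₀ with hPh_def
  have hQhNN : NN Qh := hN₁
  have hPhNN : NN Ph := hN₂
  -- hatted representations
  set q' : Fin n → ℤ[X] := fun j => (1+X)^N₁ * q j with hq'_def
  set p0' : Fin n → ℤ[X] := fun j => (1+X)^N₂ * p0 j with hp0'_def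
  have hQhrep : Qh = ∑ j, q' j * h j := by
    rw [hQh_def, hQrep, Finset.mul_sum]
    exact Finset.sum_congr rfl fun j _ => by rw [hq'_def]; ring
  have hPhrep : Ph = ∑ j, p0' j * (-h j) := by
    rw [hPh_def, hP₀rep', Finset.mul_sum]
    exact Finset.sum_congr rfl fun j _ => by rw [hp0'_def]; ring
  have hq'NN : ∀ j, NN (q' j) := fun j => (NN.one_add_X_pow N₁).mul (hqNN j)
  have hp0'NN : ∀ j, NN (p0' j) := fun j => (NN.one_add_X_pow N₂).mul (hp0NN j)
  -- positivity of constant coefficients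
  have coeff0_pos : ∀ (p : ℤ[X]), 0 < (aeval (0:ℝ)) p → 0 < p.coeff 0 := by
    intro p hp
    have heq : (aeval (0:ℝ)) p = ((p.coeff 0 : ℤ) : ℝ) := by
      rw [aeval_eq_eval_map, ← coeff_zero_eq_eval_zero, coeff_map, algebraMap_int_eq, eq_intCast]
    rw [heq] at hp
    exact_mod_cast hp
  have hQh0 : 0 < Qh.coeff 0 := by
    refine coeff0_pos _ ?_
    rw [hQh_def, map_mul, map_pow, map_add, map_one, aeval_X]
    have h0Q := hQpos 0 le_rfl
    have h1 : (0:ℝ) < ((1:ℝ)+0)^N₁ := by norm_num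
    exact mul_pos h1 h0Q
  have hPh0 : 0 < Ph.coeff 0 := by
    refine coeff0_pos _ ?_
    rw [hPh_def, map_mul, map_pow, map_add, map_one, aeval_X]
    have h0P := hP₀pos 0 le_rfl
    have h1 : (0:ℝ) < ((1:ℝ)+0)^N₂ := by norm_num
    exact mul_pos h1 h0P
  -- per-index data
  set D : Fin n → ℕ := fun i => (h i).natDegree with hD_def
  set K : Fin n → ℕ := fun i => ∑ k ∈ range (D i + 1), ((h i).coeff k).natAbs with hK_def
  set geom : Fin n → ℤ[X] := fun i => ∑ k ∈ range (D i + 1), (X:ℤ[X])^k with hgeom_def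
  set A : Fin n → ℤ[X] := fun i => C ((K i : ℤ)) * geom i with hA_def
  set w : Fin n → ℤ[X] := fun i => A i * Ph - h i with hw_def
  have hw_eq : ∀ i, w i = A i * Ph - h i := fun i => rfl
  have hKcoeff : ∀ (i : Fin n) (k : ℕ), k ≤ D i → (h i).coeff k ≤ (K i : ℤ) := by
    intro i k hk
    have h1 : (h i).coeff k ≤ (((h i).coeff k).natAbs : ℤ) := Int.le_natAbs
    have h2 : ((((h i).coeff k).natAbs : ℕ) : ℤ)
        ≤ ((∑ m ∈ range (D i + 1), ((h i).coeff m).natAbs : ℕ) : ℤ) := by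
      exact_mod_cast Finset.single_le_sum
        (f := fun m => ((h i).coeff m).natAbs)
        (fun m _ => Nat.zero_le _) (Finset.mem_range.mpr (by omega))
    exact le_trans h1 h2
  have hANN : ∀ i, NN (A i) := fun i => (NN.C_nat (K i)).mul (NN.geom _)
  have hwNN : ∀ i, NN (w i) := by
    intro i k
    rw [hw_eq, coeff_sub]
    have hAPh : A i * Ph = C ((K i : ℤ)) * (Ph * geom i) := by
      rw [hA_def]; ring
    rw [hAPh, coeff_C_mul]
    rcases le_or_gt k (D i) with hk | hk
    · have h1 : Ph.coeff 0 ≤ (Ph * geom i).coeff k := coeff_mul_geom_ge Ph hPhNN (D i) k hk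
      have h2 : (h i).coeff k ≤ (K i : ℤ) := hKcoeff i k hk
      have h3 : (1:ℤ) ≤ Ph.coeff 0 := hPh0
      have h4 : (0:ℤ) ≤ (K i : ℤ) := by positivity
      nlinarith
    · have h1 : (h i).coeff k = 0 := coeff_eq_zero_of_natDegree_lt hk
      rw [h1]
      have h2 : 0 ≤ (Ph * geom i).coeff k := (hPhNN.mul (NN.geom _)) k
      have h4 : (0:ℤ) ≤ (K i : ℤ) := by positivity
      nlinarith
  -- the construction
  set e : Fin n → Fin n → ℤ[X] :=
    fun i j => (if j = i then Qh else 0) + w i * q' j + Qh * (A i * p0' j) with he_def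
  have he_eq : ∀ i j, e i j = (if j = i then Qh else 0) + w i * q' j + Qh * (A i * p0' j) :=
    fun i j => rfl
  have heNN : ∀ i j, NN (e i j) := by
    intro i j
    rw [he_eq]
    refine NN.add (NN.add ?_ ((hwNN i).mul (hq'NN j))) (hQhNN.mul ((hANN i).mul (hp0'NN j)))
    split
    · exact hQhNN
    · exact NN.zero
  have hrel : ∀ i, ∑ j, e i j * h j = 0 := by
    intro i
    simp only [he_eq]
    exact key_rel h q' p0' Qh Ph (w i) (A i) hQhrep hPhrep i (hw_eq i)
  set f : Fin n → ℤ[X] := fun j => ∑ i, e i j with hf_def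
  have hf_eq : ∀ j, f j = ∑ i, e i j := fun j => rfl
  have hfNN : ∀ j, NN (f j) := by
    intro j
    rw [hf_eq]
    exact NN.sum_fin (fun i => heNN i j)
  have hfcoeff0 : ∀ j, 0 < (f j).coeff 0 := by
    intro j
    rw [hf_eq, finset_sum_coeff]
    have h1 : Qh.coeff 0 ≤ (e j j).coeff 0 := by
      have hejj : e j j = Qh + w j * q' j + Qh * (A j * p0' j) := by
        rw [he_eq, if_pos rfl]
      rw [hejj, coeff_add, coeff_add]
      have h2 : 0 ≤ (w j * q' j).coeff 0 := ((hwNN j).mul (hq'NN j)) 0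
      have h3 : 0 ≤ (Qh * (A j * p0' j)).coeff 0 := (hQhNN.mul ((hANN j).mul (hp0'NN j))) 0
      linarith
    have h4 : (e j j).coeff 0 ≤ ∑ i, (e i j).coeff 0 :=
      Finset.single_le_sum (fun i _ => heNN i j 0) (Finset.mem_univ j)
    linarith
  refine ⟨f, fun j => ?_, fun j k => hfNN j k, ?_⟩
  · intro h0
    have := hfcoeff0 j
    rw [h0, coeff_zero] at this
    exact lt_irrefl 0 this
  · have hstep1 : ∑ j, f j * h j = ∑ j, ∑ i, e i j * h j := by
      refine Finset.sum_congr rfl fun j _ => ?_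
      rw [hf_eq, Finset.sum_mul]
    have hstep2 : (∑ j : Fin n, ∑ i : Fin n, e i j * h j) = ∑ i, ∑ j, e i j * h j :=
      Finset.sum_comm
    have hstep3 : (∑ i : Fin n, ∑ j : Fin n, e i j * h j) = 0 := by
      rw [Finset.sum_congr rfl (fun i _ => hrel i)]
      exact Finset.sum_const_zero
    exact hstep1.trans (hstep2.trans hstep3)
end

section
/- Given h₁, ..., hₙ ∈ ℤ[X], the equation f₁h₁ + ⋯ + fₙhₙ = 0 has a solution with all fᵢ nonzero polynomials with non-negative integer coefficients if and only if it has a solution with all fᵢ nonzero polynomials with non-negative real coefficients. -/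
open Polynomial

lemma clear_denoms (S : Finset ℚ) : ∃ d : ℤ, 0 < d ∧ ∀ r ∈ S, ∃ z : ℤ, (z : ℚ) = d * r := by
  refine ⟨∏ r ∈ S, (r.den : ℤ), ?_, ?_⟩
  · exact Finset.prod_pos fun r _ => Int.natCast_pos.2 r.pos
  · intro r hr
    refine ⟨r.num * ∏ x ∈ S.erase r, (x.den : ℤ), ?_⟩
    have h1 : ((r.den : ℚ)) * r = r.num := by
      have := Rat.num_div_den r
      field_simp at this ⊢
      exact this.symm
    push_cast
    rw [← Finset.mul_prod_erase S (fun x => ((x.den : ℚ))) hr]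
    rw [mul_comm ((r.den:ℚ)) _, mul_assoc, h1, mul_comm]

theorem stmt3 (n : ℕ) (h : Fin n → Polynomial ℤ) :
    (∃ f : Fin n → Polynomial ℤ,
      (∀ i, f i ≠ 0) ∧ (∀ i, ∀ k : ℕ, 0 ≤ (f i).coeff k) ∧ ∑ i, f i * h i = 0) ↔
    (∃ g : Fin n → Polynomial ℝ,
      (∀ i, g i ≠ 0) ∧ (∀ i, ∀ k : ℕ, 0 ≤ (g i).coeff k) ∧
      ∑ i, g i * (h i).map (Int.castRingHom ℝ) = 0) := by
  constructor
  · rintro ⟨f, hf0, hfnn, hfsum⟩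
    refine ⟨fun i => (f i).map (Int.castRingHom ℝ), ?_, ?_, ?_⟩
    · intro i hi
      apply hf0 i
      have inj : Function.Injective (Polynomial.map (Int.castRingHom ℝ)) :=
        Polynomial.map_injective _ Int.cast_injective
      apply inj
      simpa using hi
    · intro i k
      rw [Polynomial.coeff_map, eq_intCast]
      exact_mod_cast hfnn i k
    · have := congrArg (Polynomial.map (Int.castRingHom ℝ)) hfsum
      simpa [Polynomial.map_sum, Polynomial.map_mul] using this
  · rintro ⟨g, hg0, hgnn, hgsum⟩
    set D : ℕ := Finset.univ.sup (fun i => (g i).natDegree) with hD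
    have hdeg : ∀ i, (g i).natDegree ≤ D := by
      intro i; rw [hD]
      exact Finset.le_sup (f := fun i => (g i).natDegree) (Finset.mem_univ i)
    set s : Finset ℝ := Finset.image (fun x : Fin n × Fin (D+1) => (g x.1).coeff x.2) Finset.univ
      with hs
    set W : Submodule ℚ ℝ := Submodule.span ℚ (s : Set ℝ) with hW
    have hgW : ∀ i k, (g i).coeff k ∈ W := by
      intro i k
      rcases le_or_gt k D with hk | hk
      · apply Submodule.subset_span
        exact Finset.mem_coe.2 (Finset.mem_image.2
          ⟨(i, ⟨k, Nat.lt_succ_of_le hk⟩), Finset.mem_univ _, rfl⟩)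
      · rw [Polynomial.coeff_eq_zero_of_natDegree_lt (lt_of_le_of_lt (hdeg i) hk)]
        exact W.zero_mem
    haveI : FiniteDimensional ℚ W := by rw [hW]; infer_instance
    set m := Module.finrank ℚ W with hm
    set bW := Module.finBasis ℚ W with hbW
    obtain ⟨Wc, hWc⟩ := Submodule.exists_isCompl W
    set π := W.linearProjOfIsCompl Wc hWc with hπ
    set φ : Fin m → (ℝ →ₗ[ℚ] ℚ) := fun j => (bW.coord j).comp π with hφ
    have hrec : ∀ x : ℝ, x ∈ W → x = ∑ j, (φ j x : ℝ) * ((bW j : ℝ)) := by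
      intro x hx
      have h1 : π x = ⟨x, hx⟩ := Submodule.linearProjOfIsCompl_apply_left hWc ⟨x, hx⟩
      have h2 := bW.sum_repr ⟨x, hx⟩
      conv_lhs => rw [show x = ((⟨x,hx⟩ : W) : ℝ) from rfl, ← h2]
      push_cast
      refine Finset.sum_congr rfl fun j _ => ?_
      rw [Rat.smul_def]
      have e3 : (φ j) x = (bW.repr ⟨x, hx⟩) j := by simp [hφ, h1, Module.Basis.coord_apply]
      rw [e3]
    set p : Fin n → Fin m → Polynomial ℚ :=
      fun i j => ∑ k ∈ Finset.range (D+1), monomial k (φ j ((g i).coeff k)) with hp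
    have hpcoeff : ∀ i j k, (p i j).coeff k = φ j ((g i).coeff k) := by
      intro i j k
      simp only [hp, finset_sum_coeff, coeff_monomial]
      rw [Finset.sum_ite_eq' (Finset.range (D+1)) k]
      split_ifs with hk
      · rfl
      · rw [Polynomial.coeff_eq_zero_of_natDegree_lt, map_zero]
        have : D + 1 ≤ k := by simpa using hk
        exact lt_of_le_of_lt (hdeg i) (by omega)
    have hB : ∀ j, ∑ i, p i j * (h i).map (Int.castRingHom ℚ) = 0 := by
      intro j
      ext k
      rw [finset_sum_coeff, Polynomial.coeff_zero]
      have step : ∀ i, (p i j * (h i).map (Int.castRingHom ℚ)).coeff k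
          = φ j ((g i * (h i).map (Int.castRingHom ℝ)).coeff k) := by
        intro i
        rw [Polynomial.coeff_mul, Polynomial.coeff_mul, map_sum]
        refine Finset.sum_congr rfl fun x _ => ?_
        rw [hpcoeff, Polynomial.coeff_map, Polynomial.coeff_map]
        simp only [eq_intCast]
        have e : (g i).coeff x.1 * (((h i).coeff x.2 : ℤ) : ℝ)
             = (((h i).coeff x.2 : ℚ)) • ((g i).coeff x.1) := by
          rw [Rat.smul_def]; push_cast; ring
        rw [e, map_smul, smul_eq_mul, mul_comm]
      rw [Finset.sum_congr rfl (fun i _ => step i), ← map_sum, ← finset_sum_coeff, hgsum]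
      simp
    set P : Finset (Fin n × Fin (D+1)) := Finset.univ.filter (fun x => 0 < (g x.1).coeff x.2)
      with hP
    set U : Set (Fin m → ℝ) := ⋂ x ∈ P, {v | 0 < ∑ j, v j * ((p x.1 j).coeff (x.2:ℕ) : ℝ)} with hU
    have hUopen : IsOpen U := isOpen_biInter_finset fun x _ =>
      isOpen_lt continuous_const
        (continuous_finset_sum _ fun j _ => (continuous_apply j).mul continuous_const)
    have hbU : (fun j => (bW j : ℝ)) ∈ U := by
      rw [hU]
      simp only [Set.mem_iInter]
      intro x hx
      have hx' : 0 < (g x.1).coeff x.2 := (Finset.mem_filter.1 hx).2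
      have e := hrec _ (hgW x.1 x.2)
      rw [Set.mem_setOf_eq]
      have e2 : ∑ j, (bW j : ℝ) * ((p x.1 j).coeff x.2 : ℝ) = (g x.1).coeff x.2 := by
        conv_rhs => rw [e]
        refine Finset.sum_congr rfl fun j _ => ?_
        rw [hpcoeff]; ring
      rw [e2]; exact hx'
    have hdense : Dense (Set.pi Set.univ (fun _ : Fin m => Set.range (Rat.cast : ℚ → ℝ))) :=
      dense_pi Set.univ (fun i _ => Rat.denseRange_cast)
    obtain ⟨v, hv1, hv2⟩ := hdense.exists_mem_open hUopen ⟨_, hbU⟩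
    have hvq : ∀ j, ∃ r : ℚ, (r : ℝ) = v j := fun j => hv1 j (Set.mem_univ j)
    choose q hq using hvq
    set fQ : Fin n → Polynomial ℚ := fun i => ∑ j, Polynomial.C (q j) * p i j with hfQ
    have hfQcoeff : ∀ i k, (fQ i).coeff k = ∑ j, q j * (p i j).coeff k := by
      intro i k
      simp [hfQ, finset_sum_coeff, Polynomial.coeff_C_mul]
    have hfQzero : ∀ i k, (g i).coeff k = 0 → (fQ i).coeff k = 0 := by
      intro i k hk
      rw [hfQcoeff]
      refine Finset.sum_eq_zero fun j _ => ?_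
      rw [hpcoeff, hk, map_zero, mul_zero]
    have hfQpos : ∀ i k, 0 < (g i).coeff k → 0 < (fQ i).coeff k := by
      intro i k hk
      have hkD : k ≤ D := by
        by_contra hc
        push_neg at hc
        rw [Polynomial.coeff_eq_zero_of_natDegree_lt (lt_of_le_of_lt (hdeg i) hc)] at hk
        exact lt_irrefl 0 hk
      have hmem : ((i, ⟨k, Nat.lt_succ_of_le hkD⟩) : Fin n × Fin (D+1)) ∈ P :=
        Finset.mem_filter.2 ⟨Finset.mem_univ _, hk⟩
      have h3 : (0:ℝ) < ∑ j, v j * ((p i j).coeff k : ℝ) := by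
        have hv2' : v ∈ ⋂ x ∈ P, {v : Fin m → ℝ |
            0 < ∑ j, v j * ((p x.1 j).coeff (x.2:ℕ) : ℝ)} := hv2
        exact Set.mem_iInter.1 (Set.mem_iInter.1 hv2' (i, ⟨k, Nat.lt_succ_of_le hkD⟩)) hmem
      rw [hfQcoeff]
      have h4 : (0:ℝ) < ((∑ j, q j * (p i j).coeff k : ℚ) : ℝ) := by
        push_cast
        simpa only [hq] using h3
      exact_mod_cast h4
    have hfQnn : ∀ i k, 0 ≤ (fQ i).coeff k := by
      intro i k
      rcases (hgnn i k).lt_or_eq with hgt | heq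
      · exact le_of_lt (hfQpos i k hgt)
      · rw [hfQzero i k heq.symm]
    have hgpos : ∀ i, ∃ k, k ≤ D ∧ 0 < (g i).coeff k := by
      intro i
      obtain ⟨k, hk⟩ : ∃ k, (g i).coeff k ≠ 0 := by
        by_contra hc
        push_neg at hc
        exact hg0 i (Polynomial.ext fun k => by simp [hc k])
      exact ⟨k, (le_natDegree_of_ne_zero hk).trans (hdeg i),
        lt_of_le_of_ne (hgnn i k) (Ne.symm hk)⟩
    obtain ⟨d, hd0, hdz⟩ := clear_denoms
      (Finset.image (fun x : Fin n × Fin (D+1) => (fQ x.1).coeff x.2) Finset.univ)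
    have key : ∀ i k, ∃ z : ℤ, (z : ℚ) = d * (fQ i).coeff k := by
      intro i k
      rcases le_or_gt k D with hk | hk
      · exact hdz _ (Finset.mem_image.2 ⟨(i, ⟨k, Nat.lt_succ_of_le hk⟩), Finset.mem_univ _, rfl⟩)
      · refine ⟨0, ?_⟩
        rw [hfQzero i k (Polynomial.coeff_eq_zero_of_natDegree_lt (lt_of_le_of_lt (hdeg i) hk)),
          mul_zero]
        simp
    choose zz hzz using key
    set F : Fin n → Polynomial ℤ := fun i => ∑ k ∈ Finset.range (D+1), monomial k (zz i k)
      with hFdef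
    have hFcoeff : ∀ i k, (((F i).coeff k : ℚ)) = d * (fQ i).coeff k := by
      intro i k
      simp only [hFdef, finset_sum_coeff, coeff_monomial]
      rw [Int.cast_sum]
      push_cast
      rw [Finset.sum_ite_eq' (Finset.range (D+1)) k]
      split_ifs with hk
      · exact hzz i k
      · have hkD : D < k := by simpa using hk
        rw [hfQzero i k (Polynomial.coeff_eq_zero_of_natDegree_lt (lt_of_le_of_lt (hdeg i) hkD)),
          mul_zero]
    refine ⟨F, ?_, ?_, ?_⟩
    · intro i hFi
      obtain ⟨k, hkD, hk⟩ := hgpos i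
      have h1 : (0:ℚ) < d * (fQ i).coeff k :=
        mul_pos (by exact_mod_cast hd0) (hfQpos i k hk)
      rw [← hFcoeff i k, hFi] at h1
      simp at h1
    · intro i k
      have h1 : (0:ℚ) ≤ d * (fQ i).coeff k :=
        mul_nonneg (le_of_lt (by exact_mod_cast hd0)) (hfQnn i k)
      rw [← hFcoeff i k] at h1
      exact_mod_cast h1
    · have inj : Function.Injective (Polynomial.map (Int.castRingHom ℚ)) :=
        Polynomial.map_injective _ Int.cast_injective
      apply inj
      simp only [Polynomial.map_sum, Polynomial.map_mul, Polynomial.map_zero]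
      have hmapF : ∀ i, (F i).map (Int.castRingHom ℚ) = Polynomial.C (d:ℚ) * fQ i := by
        intro i
        ext k
        rw [Polynomial.coeff_map, Polynomial.coeff_C_mul, eq_intCast]
        exact hFcoeff i k
      calc ∑ i, (F i).map (Int.castRingHom ℚ) * (h i).map (Int.castRingHom ℚ)
          = Polynomial.C (d:ℚ) * ∑ i, fQ i * (h i).map (Int.castRingHom ℚ) := by
            rw [Finset.mul_sum]
            exact Finset.sum_congr rfl fun i _ => by rw [hmapF i, mul_assoc]
        _ = Polynomial.C (d:ℚ) * ∑ j, Polynomial.C (q j) *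
            (∑ i, p i j * (h i).map (Int.castRingHom ℚ)) := by
            congr 1
            simp only [hfQ, Finset.sum_mul, Finset.mul_sum, mul_assoc]
            rw [Finset.sum_comm]
        _ = 0 := by simp [hB]
end

section
/- Given h₁, ..., hₙ ∈ ℤ[X], the equation f₁h₁ + ⋯ + fₙhₙ = 0 has a solution with all fᵢ nonzero real polynomials with non-negative coefficients if and only if it has a solution with all fᵢ real polynomials strictly positive on (0, ∞). -/
open Polynomial Finset

lemma middle_core (b c B : ℝ) (K : ℕ) (hB : B = |b|) (hc : 0 < c) (hK2 : 2 ≤ K)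
    (hKK : B^2 * K^2 ≤ 4*c*(K-1)^2)
    (u v w J M : ℝ) (hu : 0 < u) (hv : 0 < v) (hw : 0 < w)
    (hJ : (K:ℝ) ≤ J + 2) (hM : (K:ℝ) ≤ M)
    (h1 : v * (J+1) = u * M) (h2 : w * (J+2) = v * (M-1)) :
    0 ≤ u + b*v + c*w := by
  have hB0 : 0 ≤ B := hB ▸ abs_nonneg b
  have hbB : -B ≤ b := hB ▸ neg_abs_le b
  have hK2' : (2:ℝ) ≤ K := by exact_mod_cast hK2
  have hJ1 : (0:ℝ) < J + 1 := by linarith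
  have hM1 : (0:ℝ) < M - 1 := by linarith
  have hJ2 : (0:ℝ) < J + 2 := by linarith
  have hM0 : (0:ℝ) < M := by linarith
  have e1 : (K-1) * (J+2) ≤ K * (J+1) := by nlinarith [sq_nonneg (1:ℝ)]
  have e2 : (K-1) * M ≤ K * (M-1) := by nlinarith [sq_nonneg (1:ℝ)]
  have key : B^2 * ((J+2)*M) ≤ 4*c*((J+1)*(M-1)) := by
    have h3 : ((K:ℝ)-1) * (J+2) * ((K-1) * M) ≤ (K * (J+1)) * (K * (M-1)) :=
      mul_le_mul e1 e2 (by nlinarith) (by positivity)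
    have hJM : (0:ℝ) ≤ (J+2)*M := by positivity
    have s1 : B^2*K^2*((J+2)*M) ≤ 4*c*(K-1)^2*((J+2)*M) := mul_le_mul_of_nonneg_right hKK hJM
    have s2 : 4*c*(((K:ℝ)-1) * (J+2) * ((K-1) * M)) ≤ 4*c*((K * (J+1)) * (K * (M-1))) :=
      mul_le_mul_of_nonneg_left h3 (by positivity)
    have s3 : B^2 * ((J+2)*M) * K^2 ≤ 4*c*((J+1)*(M-1)) * K^2 := by linarith
    exact le_of_mul_le_mul_right s3 (by positivity)
  have prod : u * w * ((J+2)*M) = v^2 * ((J+1)*(M-1)) := by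
    linear_combination (u*M)*h2 - (v*(M-1))*h1
  have key2 : B^2 * v^2 ≤ 4*c*(u*w) := by
    have h4 : B^2 * v^2 * ((J+2)*M) ≤ 4*c*(u*w) * ((J+2)*M) := by nlinarith [sq_nonneg v]
    exact le_of_mul_le_mul_right h4 (by positivity)
  have h6 : (B*v)^2 ≤ (u + c*w)^2 := by nlinarith [sq_nonneg (u - c*w)]
  have h7 : B*v ≤ u + c*w :=
    (pow_le_pow_iff_left₀ (mul_nonneg hB0 hv.le) (by positivity) two_ne_zero).mp h6
  have h8 : -B*v ≤ b*v := mul_le_mul_of_nonneg_right hbB hv.le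
  linarith

lemma coeff_quad_mul (b c : ℝ) (N k : ℕ) :
    (((X+1:ℝ[X]))^N * (X^2 + C b * X + C c)).coeff k =
      (if 2 ≤ k then (N.choose (k-2):ℝ) else 0)
      + b * (if 1 ≤ k then (N.choose (k-1):ℝ) else 0) + c * N.choose k := by
  have h1 : ((X+1:ℝ[X]))^N * (X^2 + C b * X + C c)
      = (X+1:ℝ[X])^N * X^2 + C b * ((X+1:ℝ[X])^N * X^1) + C c * (X+1:ℝ[X])^N := by ring
  rw [h1, coeff_add, coeff_add, coeff_mul_X_pow', coeff_C_mul, coeff_C_mul, coeff_mul_X_pow',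
    coeff_X_add_one_pow, mul_ite, mul_zero]
  simp [coeff_X_add_one_pow]

lemma choose_id (N j : ℕ) (hj : j ≤ N) :
    (N.choose (j+1) : ℝ) * (j+1) = (N.choose j : ℝ) * ((N:ℝ) - j) := by
  have h := Nat.choose_succ_right_eq N j
  have h2 := congrArg (Nat.cast (R := ℝ)) h
  push_cast [Nat.cast_sub hj] at h2
  linarith

set_option maxHeartbeats 1000000 in
lemma quad (b c : ℝ) (hd : b^2 < 4*c) :
    ∃ N, ∀ k, 0 ≤ (((X+1:ℝ[X]))^N * (X^2 + C b * X + C c)).coeff k := by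
  have hc : 0 < c := by nlinarith [sq_nonneg b]
  set B := |b| with hB
  have hB0 : 0 ≤ B := abs_nonneg b
  have hbB : -B ≤ b := neg_abs_le b
  have hB2 : B^2 = b^2 := sq_abs b
  have hd' : 0 < 4*c - b^2 := by linarith
  obtain ⟨K, hK2, hKK⟩ : ∃ K:ℕ, 2 ≤ K ∧ B^2*(K:ℝ)^2 ≤ 4*c*((K:ℝ)-1)^2 := by
    refine ⟨2 + ⌈(8*c)/(4*c-b^2)⌉₊, by omega, ?_⟩
    have h1 := Nat.le_ceil ((8*c)/(4*c-b^2))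
    set m := ⌈(8*c)/(4*c-b^2)⌉₊
    have hm : (0:ℝ) ≤ m := by positivity
    have h8 : 8*c ≤ (4*c-b^2) * (2 + (m:ℝ)) := by
      rw [div_le_iff₀ hd'] at h1; nlinarith
    push_cast
    rw [hB2]; nlinarith
  have hK2' : (2:ℝ) ≤ K := by exact_mod_cast hK2
  obtain ⟨N, hKN, hN⟩ : ∃ N:ℕ, K*2 ≤ N ∧ (K:ℝ)*(2 + B + B/c) ≤ (N:ℝ) := by
    refine ⟨K * (2 + ⌈B⌉₊ + ⌈B/c⌉₊), Nat.mul_le_mul_left K (by omega), ?_⟩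
    have c1 := Nat.le_ceil B
    have c2 := Nat.le_ceil (B/c)
    have hK0 : (0:ℝ) ≤ K := by positivity
    push_cast
    nlinarith
  have hBc : (K:ℝ) * (B/c) * c = K * B := by field_simp
  refine ⟨N, fun k => ?_⟩
  rw [coeff_quad_mul]
  have t1 : 0 ≤ (if 2 ≤ k then (N.choose (k-2):ℝ) else 0) := by
    split_ifs <;> positivity
  rcases Nat.eq_zero_or_pos k with rfl | hk1
  · norm_num; positivity
  by_cases hsmall : k < K
  · -- small case: 1 ≤ k < K
    obtain ⟨j, rfl⟩ : ∃ j, k = j + 1 := ⟨k-1, by omega⟩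
    have hjN' : j ≤ N := by omega
    have id1 := choose_id N j hjN'
    have hv : 0 < (N.choose j : ℝ) := by exact_mod_cast Nat.choose_pos hjN'
    have hw : 0 ≤ (N.choose (j+1) : ℝ) := by positivity
    have hkK : (j:ℝ) + 1 ≤ (K:ℝ) - 1 := by
      have h1 : j + 2 ≤ K := by omega
      have h2 := (Nat.cast_le (α := ℝ)).mpr h1
      push_cast at h2; linarith
    have bound : B * ((j:ℝ)+1) ≤ c * ((N:ℝ) - j) := by
      nlinarith [mul_le_mul_of_nonneg_left hN hc.le, hBc,
        mul_le_mul_of_nonneg_right hkK hB0, mul_le_mul_of_nonneg_left hkK hc.le,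
        mul_nonneg (mul_nonneg (by positivity : (0:ℝ) ≤ (K:ℝ)) hc.le) hB0]
    have h5 : B * (N.choose j:ℝ) * ((j:ℝ)+1) ≤ c * (N.choose (j+1):ℝ) * ((j:ℝ)+1) := by
      calc B * (N.choose j:ℝ) * ((j:ℝ)+1) = (B*((j:ℝ)+1)) * (N.choose j:ℝ) := by ring
      _ ≤ (c*((N:ℝ)-j)) * (N.choose j:ℝ) := mul_le_mul_of_nonneg_right bound hv.le
      _ = c * ((N.choose (j+1):ℝ) * ((j:ℝ)+1)) := by rw [id1]; ring
      _ = c * (N.choose (j+1):ℝ) * ((j:ℝ)+1) := by ring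
    have hcw : B * (N.choose j:ℝ) ≤ c * (N.choose (j+1):ℝ) :=
      le_of_mul_le_mul_right h5 (by positivity)
    have hbv : -B * (N.choose j : ℝ) ≤ b * (N.choose j : ℝ) :=
      mul_le_mul_of_nonneg_right hbB hv.le
    simp only [Nat.add_sub_cancel, if_pos (by omega : 1 ≤ j+1)]
    linarith
  · -- k ≥ K : middle or large
    obtain ⟨j, rfl⟩ : ∃ j, k = j + 2 := ⟨k-2, by omega⟩
    have hKk : K ≤ j + 2 := by omega
    rw [if_pos (by omega : 2 ≤ j+2), if_pos (by omega : 1 ≤ j+2),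
      (by omega : j + 2 - 2 = j), (by omega : j + 2 - 1 = j + 1)]
    by_cases hbig : N + 2 < (j+2) + K
    · -- large
      by_cases htop : j ≤ N
      · have id1 := choose_id N j htop
        have hu : 0 < (N.choose j : ℝ) := by exact_mod_cast Nat.choose_pos htop
        have hv : 0 ≤ (N.choose (j+1) : ℝ) := by positivity
        have hw : 0 ≤ (N.choose (j+2) : ℝ) := by positivity
        have hNj : (0:ℝ) ≤ (N:ℝ) - j := by
          have := (Nat.cast_le (α := ℝ)).mpr htop; linarith
        have hNjK : (N:ℝ) - j ≤ (K:ℝ) - 1 := by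
          have h1 : N + 3 ≤ j + 2 + K := hbig
          have h2 := (Nat.cast_le (α := ℝ)).mpr h1; push_cast at h2; linarith
        have hjbig : (K:ℝ)*(1+B) ≤ (j:ℝ)+1 := by
          have h1 : N + 3 ≤ j + 2 + K := hbig
          have h2 := (Nat.cast_le (α := ℝ)).mpr h1; push_cast at h2
          linarith [hN, mul_nonneg (by positivity : (0:ℝ) ≤ (K:ℝ)) (div_nonneg hB0 hc.le)]
        have bound : B * ((N:ℝ) - j) ≤ (j:ℝ)+1 := by
          linarith [mul_le_mul_of_nonneg_left hNjK hB0, hjbig, hB0,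
            mul_nonneg (by positivity : (0:ℝ) ≤ (K:ℝ)) hB0]
        have h5 : B*(N.choose (j+1):ℝ)*((j:ℝ)+1) ≤ (N.choose j:ℝ)*((j:ℝ)+1) := by
          calc B*(N.choose (j+1):ℝ)*((j:ℝ)+1) = B * ((N.choose (j+1):ℝ)*((j:ℝ)+1)) := by ring
          _ = B * ((N.choose j:ℝ) * ((N:ℝ)-j)) := by rw [id1]
          _ = (B * ((N:ℝ)-j)) * (N.choose j:ℝ) := by ring
          _ ≤ ((j:ℝ)+1) * (N.choose j:ℝ) := mul_le_mul_of_nonneg_right bound hu.le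
          _ = (N.choose j:ℝ)*((j:ℝ)+1) := by ring
        have hBv : B*(N.choose (j+1):ℝ) ≤ (N.choose j:ℝ) :=
          le_of_mul_le_mul_right h5 (by positivity)
        have hbv : -B * (N.choose (j+1) : ℝ) ≤ b * (N.choose (j+1) : ℝ) :=
          mul_le_mul_of_nonneg_right hbB hv
        linarith [hBv, hbv, mul_nonneg hc.le hw]
      · have h1 : N.choose j = 0 := Nat.choose_eq_zero_of_lt (by omega)
        have h2 : N.choose (j+1) = 0 := Nat.choose_eq_zero_of_lt (by omega)
        have h3 : N.choose (j+2) = 0 := Nat.choose_eq_zero_of_lt (by omega)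
        rw [h1, h2, h3]; norm_num
    · -- middle
      have hj2N : j + 2 ≤ N := by omega
      have id1 := choose_id N j (by omega)
      have id2 := choose_id N (j+1) (by omega)
      have hu : 0 < (N.choose j : ℝ) := by exact_mod_cast Nat.choose_pos (by omega)
      have hv : 0 < (N.choose (j+1) : ℝ) := by exact_mod_cast Nat.choose_pos (by omega)
      have hw : 0 < (N.choose (j+2) : ℝ) := by exact_mod_cast Nat.choose_pos (by omega)
      have h2' : (N.choose (j+2):ℝ) * ((j:ℝ)+2) = (N.choose (j+1):ℝ) * (((N:ℝ) - j) - 1) := by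
        have hjN1 : ((N - (j+1) : ℕ):ℝ) = (N:ℝ) - ((j:ℝ)+1) := by
          rw [Nat.cast_sub (by omega)]; push_cast; ring
        push_cast at id2
        linarith [id2]
      have hJ : (K:ℝ) ≤ (j:ℝ) + 2 := by
        have := (Nat.cast_le (α := ℝ)).mpr hKk; push_cast at this; linarith
      have hM : (K:ℝ) ≤ (N:ℝ) - j := by
        have h1 : j + K ≤ N := by omega
        have := (Nat.cast_le (α := ℝ)).mpr h1; push_cast at this; linarith
      exact middle_core b c B K hB hc hK2 hKK _ _ _ ((j:ℝ)) ((N:ℝ) - j) hu hv hw hJ hM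
        id1 h2'

lemma coeff_mul_nonneg {p q : ℝ[X]} (hp : ∀ k, 0 ≤ p.coeff k) (hq : ∀ k, 0 ≤ q.coeff k) :
    ∀ k, 0 ≤ (p*q).coeff k := by
  intro k
  rw [coeff_mul]
  exact Finset.sum_nonneg fun x _ => mul_nonneg (hp _) (hq _)

def Pol (p : ℝ[X]) : Prop := ∃ N, ∀ k, 0 ≤ (((X+1:ℝ[X]))^N * p).coeff k

lemma Pol_mul {p q : ℝ[X]} (hp : Pol p) (hq : Pol q) : Pol (p * q) := by
  obtain ⟨N, hN⟩ := hp; obtain ⟨M, hM⟩ := hq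
  refine ⟨N + M, ?_⟩
  have h : ((X+1:ℝ[X]))^(N+M) * (p*q) = (((X+1:ℝ[X]))^N * p) * (((X+1:ℝ[X]))^M * q) := by
    ring
  rw [h]
  exact coeff_mul_nonneg hN hM

lemma eval_pos_of_nonneg_coeff {p : ℝ[X]} (hp : p ≠ 0) (h : ∀ k, 0 ≤ p.coeff k)
    {x : ℝ} (hx : 0 < x) : 0 < p.eval x := by
  rw [eval_eq_sum_range]
  apply Finset.sum_pos'
  · intro i _; exact mul_nonneg (h i) (by positivity)
  · refine ⟨p.natDegree, Finset.self_mem_range_succ _, mul_pos ?_ (by positivity)⟩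
    exact lt_of_le_of_ne (h _) (Ne.symm (leadingCoeff_ne_zero.mpr hp))

lemma pos_everywhere {p : ℝ[X]} (hroot : ∀ r : ℝ, ¬ p.IsRoot r) (h1 : 0 < p.eval 1) :
    ∀ x : ℝ, 0 < p.eval x := by
  intro x
  rcases lt_trichotomy (p.eval x) 0 with hlt | heq | hgt
  · exfalso
    rcases le_or_gt x 1 with hx1 | hx1
    · obtain ⟨y, _, hy⟩ := intermediate_value_Icc hx1 (p.continuous.continuousOn)
        (Set.mem_Icc.mpr ⟨hlt.le, h1.le⟩)
      exact hroot y hy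
    · obtain ⟨y, _, hy⟩ := intermediate_value_Icc' hx1.le (p.continuous.continuousOn)
        (Set.mem_Icc.mpr ⟨hlt.le, h1.le⟩)
      exact hroot y hy
  · exact absurd heq (hroot x)
  · exact hgt

lemma quad_factor (p : ℝ[X]) (hdeg : 0 < p.natDegree) (hroot : ∀ r : ℝ, ¬ p.IsRoot r) :
    ∃ (b c : ℝ) (q : ℝ[X]), b^2 < 4*c ∧ p = (X^2 + C b * X + C c) * q := by
  set f := algebraMap ℝ ℂ
  set pm := p.map f with hpm
  have hdm : 0 < pm.degree := by
    rw [hpm, degree_map_eq_of_injective (algebraMap ℝ ℂ).injective]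
    exact natDegree_pos_iff_degree_pos.mp hdeg
  obtain ⟨z, hz⟩ := Complex.exists_root hdm
  have him : z.im ≠ 0 := by
    intro him0
    apply hroot z.re
    have hz' : pm.eval (f z.re) = 0 := by
      have : (f z.re) = z := by
        apply Complex.ext <;> simp [f, him0]
      rw [this]; exact hz
    rw [hpm, eval_map, eval₂_at_apply] at hz'
    exact (_root_.map_eq_zero f).mp hz'
  have hconj : pm.IsRoot ((starRingEnd ℂ) z) := by
    have h1 : (aeval z) p = pm.eval z := by rw [aeval_def, hpm, eval_map]
    have h2 : (aeval ((starRingEnd ℂ) z)) p = pm.eval ((starRingEnd ℂ) z) := by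
      rw [aeval_def, hpm, eval_map]
    have := Polynomial.aeval_conj p z
    rw [h1, h2] at this
    rw [IsRoot, this, hz.eq_zero, map_zero]
  obtain ⟨q1, hq1⟩ := dvd_iff_isRoot.mpr hz
  have hq1root : q1.IsRoot ((starRingEnd ℂ) z) := by
    have he : pm.eval ((starRingEnd ℂ) z) = ((starRingEnd ℂ) z - z) * q1.eval ((starRingEnd ℂ) z) := by
      rw [hq1]; simp
    have hne : (starRingEnd ℂ) z - z ≠ 0 := by
      intro h0
      apply him
      have : (starRingEnd ℂ) z = z := by linear_combination h0
      exact (Complex.conj_eq_iff_im.mp this)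
    have := hconj.eq_zero
    rw [he] at this
    exact (mul_eq_zero.mp this).resolve_left hne
  obtain ⟨q2, hq2⟩ := dvd_iff_isRoot.mpr hq1root
  refine ⟨-(2*z.re), Complex.normSq z, ?_⟩
  have hmap : (X^2 + C (-(2*z.re)) * X + C (Complex.normSq z) : ℝ[X]).map f
      = (X - C z) * (X - C ((starRingEnd ℂ) z)) := by
    have expand : (X - C z) * (X - C ((starRingEnd ℂ) z))
        = X^2 - C (z + (starRingEnd ℂ) z) * X + C (z * (starRingEnd ℂ) z) := by
      simp only [C_add, C_mul]; ring
    rw [expand, Complex.add_conj, Complex.mul_conj]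
    simp only [Polynomial.map_add, Polynomial.map_mul, Polynomial.map_pow, map_X, map_C]
    have h1 : f (-(2*z.re)) = -((2*z.re : ℝ) : ℂ) := by simp [f]
    have h2 : f (Complex.normSq z) = ((Complex.normSq z : ℝ) : ℂ) := by simp [f]
    rw [h1, h2]
    simp only [map_neg]
    ring
  have hdvd : (X^2 + C (-(2*z.re)) * X + C (Complex.normSq z) : ℝ[X]) ∣ p := by
    rw [← map_dvd_map' f]
    rw [hmap]
    have hfac : p.map f = (X - C z) * ((X - C ((starRingEnd ℂ) z)) * q2) := by
      rw [← hpm, hq1, hq2]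
    rw [hfac]
    exact ⟨q2, by ring⟩
  obtain ⟨q, hq⟩ := hdvd
  refine ⟨q, ?_, hq⟩
  have : Complex.normSq z = z.re*z.re + z.im*z.im := Complex.normSq_apply z
  nlinarith [mul_self_pos.mpr him]

lemma pow_X_add_one_coeff_nonneg (m k : ℕ) : 0 ≤ (((X+1:ℝ[X]))^m).coeff k := by
  rw [coeff_X_add_one_pow]; positivity

lemma poincare (p : ℝ[X]) (hp : ∀ x : ℝ, 0 < x → 0 < p.eval x) : Pol p := by
  generalize hn : p.natDegree = n
  induction n using Nat.strong_induction_on generalizing p with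
  | _ n ih =>
  have hp0 : p ≠ 0 := fun h => by simpa [h] using hp 1 one_pos
  by_cases hex : ∃ r : ℝ, p.IsRoot r
  · obtain ⟨r, hr⟩ := hex
    obtain ⟨q, hq⟩ := dvd_iff_isRoot.mpr hr
    have hr0 : r ≤ 0 := by
      by_contra hc; push_neg at hc
      exact absurd hr.eq_zero (ne_of_gt (hp r hc))
    have hq0 : q ≠ 0 := by rintro rfl; rw [mul_zero] at hq; exact hp0 hq
    have hqpos : ∀ x : ℝ, 0 < x → 0 < q.eval x := by
      intro x hx
      have h1 : 0 < x - r := by linarith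
      have h2 : p.eval x = (x - r) * q.eval x := by rw [hq]; simp
      by_contra hle; push_neg at hle
      have := mul_nonpos_of_nonneg_of_nonpos h1.le hle
      linarith [hp x hx]
    have hdeg : q.natDegree < n := by
      have h3 : p.natDegree = 1 + q.natDegree := by
        rw [hq, natDegree_mul (X_sub_C_ne_zero r) hq0, natDegree_X_sub_C]
      omega
    have hPq := ih q.natDegree hdeg q hqpos rfl
    have hPl : Pol (X - C r) := by
      refine ⟨0, fun k => ?_⟩
      rw [pow_zero, one_mul, coeff_sub, coeff_X, coeff_C]
      rcases Nat.eq_zero_or_pos k with rfl | hk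
      · norm_num; linarith
      · rcases eq_or_ne k 1 with rfl | hk1
        · norm_num
        · rw [if_neg (Ne.symm hk1), if_neg (by omega : ¬ k = 0)]; norm_num
    rw [hq]; exact Pol_mul hPl hPq
  · push_neg at hex
    have hall : ∀ x : ℝ, 0 < p.eval x := pos_everywhere hex (hp 1 one_pos)
    rcases Nat.eq_zero_or_pos n with rfl | hn1
    · have hpc : p = C (p.coeff 0) := eq_C_of_natDegree_eq_zero hn
      have hpos0 : 0 < p.coeff 0 := by
        have := hall 0
        rwa [hpc, eval_C] at this
      refine ⟨0, fun k => ?_⟩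
      rw [pow_zero, one_mul, hpc, coeff_C]
      split_ifs <;> linarith
    · obtain ⟨b, c, q, hd, hfac⟩ := quad_factor p (hn ▸ hn1) hex
      have hquadpos : ∀ x : ℝ, 0 < x^2 + b*x + c := by
        intro x; nlinarith [sq_nonneg (2*x + b)]
      have hq0 : q ≠ 0 := by rintro rfl; rw [mul_zero] at hfac; exact hp0 hfac
      have hqpos : ∀ x : ℝ, 0 < x → 0 < q.eval x := by
        intro x hx
        have h2 : p.eval x = (x^2 + b*x + c) * q.eval x := by rw [hfac]; simp
        by_contra hle; push_neg at hle
        have := mul_nonpos_of_nonneg_of_nonpos (hquadpos x).le hle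
        linarith [hp x hx]
      have hqd : (X^2 + C b * X + C c : ℝ[X]).natDegree = 2 := by
        compute_degree!
      have hdeg : q.natDegree < n := by
        have h3 : p.natDegree = 2 + q.natDegree := by
          have hqne : (X^2 + C b * X + C c : ℝ[X]) ≠ 0 := by
            intro h0
            have h1 := congrArg (eval (0:ℝ)) h0
            simp at h1
            have h2 := hquadpos 0
            norm_num at h2
            linarith
          rw [hfac, natDegree_mul hqne hq0, hqd]
        omega
      have hPq := ih q.natDegree hdeg q hqpos rfl
      have hPquad : Pol (X^2 + C b * X + C c) := quad b c hd
      rw [hfac]; exact Pol_mul hPquad hPq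

theorem stmt4 (n : ℕ) (h : Fin n → Polynomial ℤ) :
    (∃ f : Fin n → Polynomial ℝ,
      (∀ i, f i ≠ 0) ∧ (∀ i, ∀ k : ℕ, 0 ≤ (f i).coeff k) ∧
      ∑ i, f i * (h i).map (Int.castRingHom ℝ) = 0) ↔
    (∃ f : Fin n → Polynomial ℝ,
      (∀ i, ∀ x : ℝ, 0 < x → 0 < (f i).eval x) ∧
      ∑ i, f i * (h i).map (Int.castRingHom ℝ) = 0) := by
  constructor
  · rintro ⟨f, hne, hcoef, hsum⟩
    exact ⟨f, fun i x hx => eval_pos_of_nonneg_coeff (hne i) (hcoef i) hx, hsum⟩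
  · rintro ⟨f, hpos, hsum⟩
    choose Nf hNf using fun i => poincare (f i) (hpos i)
    set M := Finset.univ.sup Nf with hM
    have hfne : ∀ i, f i ≠ 0 := by
      intro i h0
      have := hpos i 1 one_pos
      rw [h0, eval_zero] at this
      exact lt_irrefl 0 this
    refine ⟨fun i => (X+1)^M * f i, fun i => ?_, fun i k => ?_, ?_⟩
    · show (X+1:ℝ[X])^M * f i ≠ 0
      apply mul_ne_zero _ (hfne i)
      apply pow_ne_zero
      intro h0
      have := congrArg (eval 0) h0
      simp at this
    · show 0 ≤ ((X+1:ℝ[X])^M * f i).coeff k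
      have hle : Nf i ≤ M := Finset.le_sup (Finset.mem_univ i)
      have heq : (X+1:ℝ[X])^M * f i = (X+1)^(M - Nf i) * ((X+1)^(Nf i) * f i) := by
        rw [← mul_assoc, ← pow_add]
        congr 2
        omega
      rw [heq]
      exact coeff_mul_nonneg (pow_X_add_one_coeff_nonneg _) (hNf i) k
    · show ∑ i, ((X+1:ℝ[X])^M * f i) * (h i).map (Int.castRingHom ℝ) = 0
      simp_rw [mul_assoc]
      rw [← Finset.mul_sum, hsum, mul_zero]
end

section
/- (Pólya-type consequence, univariate case) If F ∈ ℝ[X] satisfies F(x) > 0 for all x ≥ 0 and the leading coefficient of F is positive, then there exists p ∈ ℕ such that (X+1)^p · F has all coefficients non-negative. -/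
open Polynomial

private lemma mul_coeff_nonneg {A B : Polynomial ℝ} (hA : ∀ k, 0 ≤ A.coeff k)
    (hB : ∀ k, 0 ≤ B.coeff k) : ∀ k, 0 ≤ (A * B).coeff k := by
  intro k
  rw [coeff_mul]
  exact Finset.sum_nonneg fun x _ => mul_nonneg (hA _) (hB _)

set_option maxHeartbeats 1000000 in
private lemma quad_key (b c : ℝ) (hd : b ^ 2 < 4 * c) :
    ∃ p : ℕ, ∀ k : ℕ, 0 ≤ ((X + 1) ^ p * (X ^ 2 + C b * X + C c)).coeff k := by
  have hc : 0 < c := by nlinarith [sq_nonneg b]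
  obtain ⟨δ, hδ⟩ : ∃ δ : ℝ, δ = (4*c - b^2)/(4*(1+c)) := ⟨_, rfl⟩
  have h1 : 4*(1-δ)*(c-δ) - b^2 = 4*δ^2 := by rw [hδ]; field_simp; ring
  have hδ0 : 0 < δ := by rw [hδ]; apply div_pos <;> nlinarith
  have hδ1 : δ < 1 := by rw [hδ, div_lt_one (by nlinarith)]; nlinarith
  have key : ∀ u s : ℝ, δ*(u^2+s^2) ≤ u^2 + b*s*u + c*s^2 := by
    intro u s
    nlinarith [sq_nonneg (2*(1-δ)*u + b*s), sq_nonneg (δ*s), mul_pos hδ0 hδ0]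
  obtain ⟨p, hp⟩ := exists_nat_ge (max (2*|b-c|/δ) (-b/c))
  have hp1 : 2*|b-c| ≤ δ*((p:ℝ)+1) := by
    have h2 : 2*|b-c|/δ ≤ (p:ℝ) := le_trans (le_max_left _ _) hp
    rw [div_le_iff₀ hδ0] at h2
    nlinarith
  have hp2 : 0 ≤ b + c*p := by
    have h2 : -b/c ≤ (p:ℝ) := le_trans (le_max_right _ _) hp
    rw [div_le_iff₀ hc] at h2
    linarith
  have E : ∀ j : ℕ, 0 ≤ (p.choose j : ℝ) + b * p.choose (j+1) + c * p.choose (j+2) := by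
    intro j
    by_cases hjp : j ≤ p
    · obtain ⟨u, hu⟩ : ∃ u : ℝ, u = (j : ℝ) + 1 := ⟨_, rfl⟩
      obtain ⟨s, hs⟩ : ∃ s : ℝ, s = (p : ℝ) - (j : ℝ) := ⟨_, rfl⟩
      have hs0 : 0 ≤ s := by
        rw [hs, sub_nonneg]; exact_mod_cast hjp
      have hu1 : 1 ≤ u := by
        have : (0:ℝ) ≤ (j:ℝ) := Nat.cast_nonneg j
        rw [hu]; linarith
      have id1 : (p.choose (j+1) : ℝ) * u = (p.choose j : ℝ) * s := by
        have h := Nat.choose_succ_right_eq p j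
        have hcast : ((p - j : ℕ) : ℝ) = s := by rw [hs, Nat.cast_sub hjp]
        have h2 := congrArg (Nat.cast : ℕ → ℝ) h
        push_cast at h2
        rw [hcast] at h2
        rw [hu]; linarith
      have id2 : (p.choose (j+2) : ℝ) * (u+1) = (p.choose (j+1) : ℝ) * (s-1) := by
        by_cases hj1 : j + 1 ≤ p
        · have h := Nat.choose_succ_right_eq p (j+1)
          have hcast : ((p - (j+1) : ℕ) : ℝ) = s - 1 := by
            rw [hs, Nat.cast_sub hj1]; push_cast; ring
          have h2 := congrArg (Nat.cast : ℕ → ℝ) h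
          push_cast at h2
          rw [hcast] at h2
          have e : j + 1 + 1 = j + 2 := rfl
          rw [e] at h2
          rw [hu]; linarith
        · have h2 : p.choose (j+2) = 0 := Nat.choose_eq_zero_of_lt (by omega)
          have h3 : p.choose (j+1) = 0 := Nat.choose_eq_zero_of_lt (by omega)
          rw [h2, h3]; simp
      have hus : u + s = (p:ℝ) + 1 := by rw [hu, hs]; ring
      have hR : 0 ≤ u*(u+1) + b*s*(u+1) + c*(s*(s-1)) := by
        have hk := key u s
        have habs : -|b-c| ≤ b - c := neg_abs_le _
        have habs0 : 0 ≤ |b-c| := abs_nonneg _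
        have hp1' : 2*|b-c| ≤ δ*(u+s) := by rw [hus]; exact hp1
        have h3 : 0 ≤ δ*(u-s)^2 := mul_nonneg hδ0.le (sq_nonneg _)
        have h4 : 2 * |b - c| * (u+s) ≤ 2*(δ*(u^2+s^2)) := by
          nlinarith [mul_le_mul_of_nonneg_right hp1' (show (0:ℝ) ≤ u+s by linarith), h3]
        have h5 : 0 ≤ |b - c| * u := mul_nonneg habs0 (by linarith)
        have h6 : (-|b - c|) * s ≤ (b-c)*s := mul_le_mul_of_nonneg_right habs hs0
        nlinarith [hk, h4, h5, h6]
      have hEmul : ((p.choose j : ℝ) + b * p.choose (j+1) + c * p.choose (j+2)) * (u*(u+1))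
          = (p.choose j : ℝ) * (u*(u+1) + b*s*(u+1) + c*(s*(s-1))) := by
        linear_combination (b*(u+1)) * id1 + (c*u) * id2 + (c*(s-1)) * id1
      have huu : 0 < u*(u+1) := by nlinarith
      have h3 : 0 ≤ ((p.choose j : ℝ) + b * p.choose (j+1) + c * p.choose (j+2)) * (u*(u+1)) := by
        rw [hEmul]
        exact mul_nonneg (Nat.cast_nonneg _) hR
      exact (mul_nonneg_iff_of_pos_right huu).mp h3
    · push_neg at hjp
      rw [Nat.choose_eq_zero_of_lt hjp, Nat.choose_eq_zero_of_lt (by omega),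
        Nat.choose_eq_zero_of_lt (by omega)]
      norm_num
  refine ⟨p, fun k => ?_⟩
  have hA : ∀ i, ((X + 1 : ℝ[X]) ^ p).coeff i = (p.choose i : ℝ) := fun i =>
    coeff_X_add_one_pow ℝ p i
  have hco : ((X + 1) ^ p * (X ^ 2 + C b * X + C c)).coeff k
      = (if 2 ≤ k then (p.choose (k-2) : ℝ) else 0)
        + b * (if 1 ≤ k then (p.choose (k-1) : ℝ) else 0)
        + c * (p.choose k : ℝ) := by
    rw [mul_add, mul_add, coeff_add, coeff_add]
    congr 1
    · congr 1
      · rw [coeff_mul_X_pow', hA]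
      · rw [show (X + 1 : ℝ[X]) ^ p * (C b * X) = C b * ((X + 1) ^ p * X ^ 1) by ring,
          coeff_C_mul, coeff_mul_X_pow', hA]
    · rw [show (X + 1 : ℝ[X]) ^ p * C c = C c * ((X + 1) ^ p) by ring, coeff_C_mul, hA]
  rw [hco]
  match k with
  | 0 => simpa using hc.le
  | 1 => simpa using hp2
  | (k+2) =>
    have hE := E k
    have e1 : k + 2 - 2 = k := by omega
    have e2 : k + 2 - 1 = k + 1 := by omega
    rw [if_pos (by omega : 2 ≤ k+2), if_pos (by omega : 1 ≤ k+2), e1, e2]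
    exact hE

private lemma main_aux : ∀ n : ℕ, ∀ F : Polynomial ℝ, F.natDegree ≤ n →
    (∀ x : ℝ, 0 ≤ x → 0 < F.eval x) → 0 < F.leadingCoeff →
    ∃ p : ℕ, ∀ k : ℕ, 0 ≤ (((X + 1) ^ p * F).coeff k) := by
  intro n
  induction n with
  | zero =>
    intro F hdeg hpos _
    refine ⟨0, fun k => ?_⟩
    rw [pow_zero, one_mul]
    have h0 : 0 < F.coeff 0 := by
      rw [coeff_zero_eq_eval_zero]; exact hpos 0 le_rfl
    rcases eq_or_ne k 0 with rfl | hk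
    · exact h0.le
    · rw [eq_C_of_natDegree_le_zero hdeg, coeff_C, if_neg hk]
  | succ n ih =>
    intro F hdeg hpos hlead
    have hF0 : F ≠ 0 := fun h => by simp [h] at hlead
    by_cases hd0 : F.natDegree = 0
    · refine ⟨0, fun k => ?_⟩
      rw [pow_zero, one_mul]
      have h0 : 0 < F.coeff 0 := by
        rw [coeff_zero_eq_eval_zero]; exact hpos 0 le_rfl
      rcases eq_or_ne k 0 with rfl | hk
      · exact h0.le
      · rw [eq_C_of_natDegree_le_zero hd0.le, coeff_C, if_neg hk]
    · have hdegpos : 0 < F.degree := natDegree_pos_iff_degree_pos.mp (Nat.pos_of_ne_zero hd0)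
      obtain ⟨z, hz⟩ := IsAlgClosed.exists_aeval_eq_zero ℂ F hdegpos.ne'
      by_cases him : z.im = 0
      · -- real root case
        lift z to ℝ using him with r
        erw [aeval_ofReal, RCLike.ofReal_eq_zero] at hz
        have hr : F.eval r = 0 := hz
        have hrneg : r < 0 := by
          by_contra h
          push_neg at h
          exact absurd hr (hpos r h).ne'
        obtain ⟨G, hG⟩ := (dvd_iff_isRoot.mpr hr : (X - C r) ∣ F)
        have hG0 : G ≠ 0 := fun h => hF0 (by rw [hG, h, mul_zero])
        have hdegG : F.natDegree = 1 + G.natDegree := by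
          rw [hG, natDegree_mul (X_sub_C_ne_zero r) hG0, natDegree_X_sub_C]
        have hGlead : 0 < G.leadingCoeff := by
          have : F.leadingCoeff = G.leadingCoeff := by
            rw [hG, leadingCoeff_mul, (monic_X_sub_C r).leadingCoeff, one_mul]
          rwa [this] at hlead
        have hGpos : ∀ x : ℝ, 0 ≤ x → 0 < G.eval x := by
          intro x hx
          have h1 := hpos x hx
          rw [hG, eval_mul, eval_sub, eval_X, eval_C] at h1
          have hxr : 0 < x - r := by linarith
          by_contra h
          push_neg at h
          nlinarith
        obtain ⟨p, hp⟩ := ih G (by omega) hGpos hGlead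
        refine ⟨p, fun k => ?_⟩
        have hfac : (X + 1) ^ p * F = (X + C (-r)) * ((X + 1) ^ p * G) := by
          rw [hG, map_neg]; ring
        rw [hfac]
        refine mul_coeff_nonneg (fun i => ?_) hp k
        rcases i with _ | _ | i <;> simp [coeff_add, coeff_X, coeff_C] <;> linarith
      · -- complex root case
        obtain ⟨G, hG⟩ := F.quadratic_dvd_of_aeval_eq_zero_im_ne_zero hz him
        have hq_eq : (X:ℝ[X]) ^ 2 - C (2 * z.re) * X + C (‖z‖ ^ 2)
            = X ^ 2 + C (-(2 * z.re)) * X + C (‖z‖ ^ 2) := by rw [map_neg]; ring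
        have him2 : 0 < z.im ^ 2 := by positivity
        have hnorm : ‖z‖ ^ 2 = z.re ^ 2 + z.im ^ 2 := by
          rw [Complex.sq_norm, Complex.normSq_apply]; ring
        have hqm : ((X:ℝ[X]) ^ 2 - C (2 * z.re) * X + C (‖z‖ ^ 2)).Monic := by
          monicity!
        have hq0 : ((X:ℝ[X]) ^ 2 - C (2 * z.re) * X + C (‖z‖ ^ 2)) ≠ 0 := hqm.ne_zero
        have hqdeg : ((X:ℝ[X]) ^ 2 - C (2 * z.re) * X + C (‖z‖ ^ 2)).natDegree = 2 := by
          compute_degree!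
        have hqpos : ∀ x : ℝ, 0 < ((X:ℝ[X]) ^ 2 - C (2 * z.re) * X + C (‖z‖ ^ 2)).eval x := by
          intro x
          simp only [eval_add, eval_sub, eval_pow, eval_mul, eval_X, eval_C]
          rw [hnorm]
          nlinarith [sq_nonneg (x - z.re)]
        have hG0 : G ≠ 0 := fun h => hF0 (by rw [hG, h, mul_zero])
        have hdegG : F.natDegree = 2 + G.natDegree := by
          rw [hG, natDegree_mul hq0 hG0, hqdeg]
        have hGlead : 0 < G.leadingCoeff := by
          have : F.leadingCoeff = G.leadingCoeff := by
            rw [hG, leadingCoeff_mul, hqm.leadingCoeff, one_mul]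
          rwa [this] at hlead
        have hGpos : ∀ x : ℝ, 0 ≤ x → 0 < G.eval x := by
          intro x hx
          have h1 := hpos x hx
          rw [hG, eval_mul] at h1
          have h2 := hqpos x
          by_contra h
          push_neg at h
          nlinarith
        obtain ⟨p₁, hp₁⟩ := ih G (by omega) hGpos hGlead
        obtain ⟨p₂, hp₂⟩ := quad_key (-(2 * z.re)) (‖z‖ ^ 2) (by rw [hnorm]; nlinarith)
        refine ⟨p₂ + p₁, fun k => ?_⟩
        have hfac : (X + 1) ^ (p₂ + p₁) * F
            = ((X + 1) ^ p₂ * (X ^ 2 + C (-(2 * z.re)) * X + C (‖z‖ ^ 2)))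
              * ((X + 1) ^ p₁ * G) := by
          rw [hG, hq_eq, pow_add]; ring
        rw [hfac]
        exact mul_coeff_nonneg hp₂ hp₁ k

theorem stmt5 (F : Polynomial ℝ)
    (hpos : ∀ x : ℝ, 0 ≤ x → 0 < F.eval x)
    (hlead : 0 < F.leadingCoeff) :
    ∃ p : ℕ, ∀ k : ℕ, 0 ≤ (((X + 1) ^ p * F).coeff k) := by
  exact main_aux F.natDegree F le_rfl hpos hlead
end

section
/- Let h₁, ..., hₙ ∈ ℤ[X] with h₁(0) = ⋯ = h_k(0) = 0 and h_{k+1}(0) > 0, ..., hₙ(0) > 0, where 1 ≤ k < n. Then f₁h₁ + ⋯ + fₙhₙ = 0 has a solution over nonzero polynomials with ℕ-coefficients if and only if f₁·(h₁/X) + ⋯ + f_k·(h_k/X) + f_{k+1}h_{k+1} + ⋯ + fₙhₙ = 0 has such a solution. -/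
open Polynomial

theorem stmt8 (n k : ℕ) (hk1 : 1 ≤ k) (hkn : k < n)
    (h h' : Fin n → Polynomial ℤ)
    (hzero : ∀ i : Fin n, (i : ℕ) < k → (h i).eval 0 = 0)
    (hposk : ∀ i : Fin n, k ≤ (i : ℕ) → 0 < (h i).eval 0)
    (hdiv : ∀ i : Fin n, (i : ℕ) < k → h i = X * h' i)
    (heq : ∀ i : Fin n, k ≤ (i : ℕ) → h' i = h i) :
    (∃ f : Fin n → Polynomial ℤ,
      (∀ i, f i ≠ 0) ∧ (∀ i, ∀ m : ℕ, 0 ≤ (f i).coeff m) ∧ ∑ i, f i * h i = 0) ↔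
    (∃ f : Fin n → Polynomial ℤ,
      (∀ i, f i ≠ 0) ∧ (∀ i, ∀ m : ℕ, 0 ≤ (f i).coeff m) ∧ ∑ i, f i * h' i = 0) := by
  constructor
  · rintro ⟨f, hne, hcoef, hsum⟩
    -- evaluate at 0
    have hev : ∑ i, (f i).eval 0 * (h i).eval 0 = 0 := by
      have := congrArg (Polynomial.eval 0) hsum
      simpa [Polynomial.eval_finset_sum] using this
    have hnonneg : ∀ i ∈ Finset.univ, (0:ℤ) ≤ (f i).eval 0 * (h i).eval 0 := by
      intro i _
      rcases lt_or_ge (i : ℕ) k with hik | hik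
      · rw [hzero i hik, mul_zero]
      · have hfi : 0 ≤ (f i).eval 0 := by
          have := hcoef i 0
          rwa [Polynomial.coeff_zero_eq_eval_zero] at this
        exact mul_nonneg hfi (hposk i hik).le
    have hterm := (Finset.sum_eq_zero_iff_of_nonneg hnonneg).mp hev
    have hf0 : ∀ i : Fin n, k ≤ (i : ℕ) → (f i).coeff 0 = 0 := by
      intro i hik
      have := hterm i (Finset.mem_univ i)
      rcases mul_eq_zero.mp this with h1 | h2
      · rwa [Polynomial.coeff_zero_eq_eval_zero]
      · exact absurd h2 (hposk i hik).ne'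
    refine ⟨fun i => if (i : ℕ) < k then f i else (f i).divX, ?_, ?_, ?_⟩
    · intro i
      by_cases hik : (i : ℕ) < k
      · simpa [hik] using hne i
      · simp only [hik, if_false]
        intro hdx
        have := Polynomial.divX_eq_zero_iff.mp hdx
        rw [hf0 i (le_of_not_gt hik)] at this
        simp at this
        exact hne i this
    · intro i m
      by_cases hik : (i : ℕ) < k
      · simpa [hik] using hcoef i m
      · simp only [hik, if_false, Polynomial.coeff_divX]
        exact hcoef i (m + 1)
    · have key : (X : Polynomial ℤ) * ∑ i : Fin n, (if ((i : Fin n) : ℕ) < k then f i else (f i).divX) * h' i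
          = ∑ i, f i * h i := by
        rw [Finset.mul_sum]
        refine Finset.sum_congr rfl fun i _ => ?_
        by_cases hik : (i : ℕ) < k
        · rw [if_pos hik, hdiv i hik]; ring
        · rw [if_neg hik, heq i (le_of_not_gt hik)]
          have hx : (X : Polynomial ℤ) * (f i).divX = f i := by
            have := Polynomial.X_mul_divX_add (f i)
            rw [hf0 i (le_of_not_gt hik)] at this
            simpa [Polynomial.eval_finset_sum] using this
          rw [← mul_assoc, hx]
      have : (X : Polynomial ℤ) * ∑ i : Fin n, (if ((i : Fin n) : ℕ) < k then f i else (f i).divX) * h' i = 0 := by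
        rw [key, hsum]
      exact (mul_eq_zero.mp this).resolve_left Polynomial.X_ne_zero
  · rintro ⟨g, hne, hcoef, hsum⟩
    refine ⟨fun i => if (i : ℕ) < k then g i else X * g i, ?_, ?_, ?_⟩
    · intro i
      by_cases hik : (i : ℕ) < k
      · simpa [hik] using hne i
      · simp only [hik, if_false]
        exact mul_ne_zero Polynomial.X_ne_zero (hne i)
    · intro i m
      by_cases hik : (i : ℕ) < k
      · simpa [hik] using hcoef i m
      · simp only [hik, if_false]
        cases m with
        | zero => simp
        | succ m => rw [Polynomial.coeff_X_mul]; exact hcoef i m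
    · have key : ∑ i : Fin n, (if ((i : Fin n) : ℕ) < k then g i else X * g i) * h i
          = (X : Polynomial ℤ) * ∑ i, g i * h' i := by
        rw [Finset.mul_sum]
        refine Finset.sum_congr rfl fun i _ => ?_
        by_cases hik : (i : ℕ) < k
        · rw [if_pos hik, hdiv i hik]; ring
        · rw [if_neg hik, heq i (le_of_not_gt hik)]; ring
      rw [key, hsum, mul_zero]
end

section
/- Every archimedean semiordering of a field of characteristic zero is an ordering. -/
/-- Every archimedean semiordering of a field of characteristic zero is an ordering. -/
theorem stmt10 (F : Type*) [Field F] [CharZero F] (le : F → F → Prop)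
    (hrefl : ∀ a, le a a)
    (htrans : ∀ a b c, le a b → le b c → le a c)
    (hantisymm : ∀ a b, le a b → le b a → a = b)
    (htotal : ∀ a b, le a b ∨ le b a)
    (hadd : ∀ a b c, le a b → le (a + c) (b + c))
    (hone : le 0 1)
    (hsq : ∀ a b, le 0 a → le 0 (a * b ^ 2))
    (harch : ∀ a : F, ∃ n : ℕ, le a (n : F)) :
    ∀ a b, le 0 a → le 0 b → le 0 (a * b) := by
  classical
  have hsub : ∀ x y : F, le x y ↔ le 0 (y - x) := by
    intro x y
    constructor
    · intro h; simpa [sub_eq_add_neg] using hadd x y (-x) h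
    · intro h; simpa [sub_add_cancel] using hadd 0 (y - x) x h
  have hPadd : ∀ x y : F, le 0 x → le 0 y → le 0 (x + y) := by
    intro x y hx hy
    have h1 := hadd 0 x y hx
    rw [zero_add] at h1
    exact htrans 0 y (x + y) hy h1
  have hPnat : ∀ n : ℕ, le 0 (n : F) := by
    intro n
    induction n with
    | zero => simpa using hrefl 0
    | succ k ih =>
      have e : ((k + 1 : ℕ) : F) = (k : F) + 1 := by push_cast; ring
      rw [e]; exact hPadd _ _ ih hone
  have hPnatmul : ∀ (n : ℕ) (x : F), le 0 x → le 0 ((n : F) * x) := by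
    intro n x hx
    induction n with
    | zero => simpa using hrefl 0
    | succ k ih =>
      have e : ((k + 1 : ℕ) : F) * x = (k : F) * x + x := by push_cast; ring
      rw [e]; exact hPadd _ _ ih hx
  have hPscale : ∀ (m n : ℕ) (x : F), le 0 x → le 0 ((m : F) / (n : F) * x) := by
    intro m n x hx
    by_cases hn : n = 0
    · subst hn; simpa using hrefl 0
    · have hnF : (n : F) ≠ 0 := Nat.cast_ne_zero.mpr hn
      have h1 := hPnatmul (m * n) x hx
      have h2 := hsq _ ((n : F)⁻¹) h1
      have e : ((m * n : ℕ) : F) * x * ((n : F)⁻¹) ^ 2 = (m : F) / (n : F) * x := by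
        push_cast; field_simp
      rwa [e] at h2
  have hPq : ∀ m n : ℕ, le 0 ((m : F) / (n : F)) := by
    intro m n
    have := hPscale m n 1 hone
    simpa using this
  have hcontra : ∀ k : ℕ, le 0 (-(k : F)) → k = 0 := by
    intro k h
    have h2 : le (k : F) 0 := (hsub (k : F) 0).mpr (by simpa using h)
    have h3 := hantisymm 0 (k : F) (hPnat k) h2
    exact_mod_cast h3.symm
  -- two-sided rational approximation
  have happrox : ∀ (x : F) (K : ℕ), K ≠ 0 → le 0 x →
      ∃ m : ℕ, le 0 (x - (m : F) / (K : F)) ∧ le 0 ((m : F) / (K : F) + 1 / (K : F) - x) := by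
    intro x K hK hx
    have hKF : (K : F) ≠ 0 := Nat.cast_ne_zero.mpr hK
    have hex : ∃ m : ℕ, le x ((m : F) / (K : F)) := by
      obtain ⟨n, hn⟩ := harch x
      refine ⟨n * K, ?_⟩
      have e : ((n * K : ℕ) : F) / (K : F) = (n : F) := by push_cast; field_simp
      rw [e]; exact hn
    have hm₀ := Nat.find_spec hex
    rcases Nat.eq_zero_or_pos (Nat.find hex) with h0 | hpos
    · rw [h0] at hm₀
      have hx0 : le x 0 := by simpa using hm₀
      have : x = 0 := (hantisymm 0 x hx hx0).symm
      refine ⟨0, ?_, ?_⟩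
      · rw [this]; simpa using hrefl 0
      · rw [this]
        have := hPq 1 K
        simpa using this
    · refine ⟨Nat.find hex - 1, ?_, ?_⟩
      · have hmin : ¬ le x (((Nat.find hex - 1 : ℕ) : F) / (K : F)) :=
          Nat.find_min hex (by omega)
        have := (htotal x (((Nat.find hex - 1 : ℕ) : F) / (K : F))).resolve_left hmin
        exact (hsub _ _).mp this
      · have h1 := (hsub _ _).mp hm₀
        have e : ((Nat.find hex : ℕ) : F) / (K : F) - x
            = ((Nat.find hex - 1 : ℕ) : F) / (K : F) + 1 / (K : F) - x := by
          have e2 : ((Nat.find hex : ℕ) : F) = ((Nat.find hex - 1 : ℕ) : F) + 1 := by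
            have h3 : Nat.find hex = (Nat.find hex - 1) + 1 := by omega
            rw [h3]; push_cast; ring
          rw [e2]; field_simp
        rw [e] at h1; exact h1
  -- square bound lemma: |u| ≤ 1/K implies u² ≤ 2/K²
  have hsqbd : ∀ (u : F) (K : ℕ), K ≠ 0 → le 0 (1 / (K : F) - u) → le 0 (1 / (K : F) + u) →
      le 0 (2 / (K : F) ^ 2 - u ^ 2) := by
    intro u K hK h1 h2
    have hKF : (K : F) ≠ 0 := Nat.cast_ne_zero.mpr hK
    rcases htotal (u ^ 2) (2 / (K : F) ^ 2) with h | h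
    · exact (hsub _ _).mp h
    · exfalso
      have hPd : le 0 (u ^ 2 - 2 / (K : F) ^ 2) := (hsub _ _).mp h
      have hu : u ≠ 0 := by
        rintro rfl
        have hneg : le (2 / (K : F) ^ 2) 0 := (hsub _ _).mpr (by simpa using hPd)
        have hpos : le 0 (2 / (K : F) ^ 2) := by
          have := hPq 2 (K ^ 2); push_cast at this; exact this
        have := hantisymm 0 (2 / (K : F) ^ 2) hpos hneg
        have h20 : (2 : F) = 0 := by field_simp at this; simpa using this.symm
        norm_num at h20
      have ha1 := hsq _ (u⁻¹) hPd
      have e1 : (u ^ 2 - 2 / (K : F) ^ 2) * (u⁻¹) ^ 2 = 1 - 2 / (K : F) ^ 2 * (u⁻¹) ^ 2 := by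
        field_simp
      rw [e1] at ha1
      have ha2 := hsq _ (u⁻¹ + (K : F)) h1
      have ha3 := hsq _ (u⁻¹ - (K : F)) h2
      have ha4 := hPadd _ _ ha2 ha3
      have e4 : (1 / (K : F) - u) * (u⁻¹ + (K : F)) ^ 2
          + (1 / (K : F) + u) * (u⁻¹ - (K : F)) ^ 2
          = 2 / (K : F) * (u⁻¹) ^ 2 - 2 * (K : F) := by
        field_simp; ring
      rw [e4] at ha4
      have ha5 := hPnatmul K _ ha1
      have e5 : (K : F) * (1 - 2 / (K : F) ^ 2 * (u⁻¹) ^ 2)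
          = (K : F) - 2 / (K : F) * (u⁻¹) ^ 2 := by
        field_simp
      rw [e5] at ha5
      have ha6 := hPadd _ _ ha4 ha5
      have e6 : 2 / (K : F) * (u⁻¹) ^ 2 - 2 * (K : F) + ((K : F) - 2 / (K : F) * (u⁻¹) ^ 2)
          = -(K : F) := by ring
      rw [e6] at ha6
      exact hK (hcontra K ha6)
  intro a b ha hb
  rcases htotal 0 (a * b) with h | h
  · exact h
  · have hs : le 0 (-(a * b)) := by simpa using (hsub (a * b) 0).mp h
    suffices hz : a * b = 0 by rw [hz]; exact hrefl 0
    by_contra hne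
    have key : ∀ K : ℕ, K ≠ 0 → le 0 (2 / (K : F) ^ 2 + 4 * (a * b)) := by
      intro K hK
      have hKF : (K : F) ≠ 0 := Nat.cast_ne_zero.mpr hK
      obtain ⟨m, hm1, hm2⟩ := happrox a K hK ha
      obtain ⟨m', hm'1, hm'2⟩ := happrox b K hK hb
      have hd1 : le 0 (1 / (K : F) - ((a - (m : F) / (K : F)) - (b - (m' : F) / (K : F)))) := by
        have := hPadd _ _ hm2 hm'1
        have e : (m : F) / (K : F) + 1 / (K : F) - a + (b - (m' : F) / (K : F))
            = 1 / (K : F) - ((a - (m : F) / (K : F)) - (b - (m' : F) / (K : F))) := by ring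
        rwa [e] at this
      have hd2 : le 0 (1 / (K : F) + ((a - (m : F) / (K : F)) - (b - (m' : F) / (K : F)))) := by
        have := hPadd _ _ hm'2 hm1
        have e : (m' : F) / (K : F) + 1 / (K : F) - b + (a - (m : F) / (K : F))
            = 1 / (K : F) + ((a - (m : F) / (K : F)) - (b - (m' : F) / (K : F))) := by ring
        rwa [e] at this
      have hxy := hsqbd _ K hK hd1 hd2
      have hsq2 : le 0 (((a - (m : F) / (K : F)) + (b - (m' : F) / (K : F))) ^ 2) := by
        simpa using hsq 1 ((a - (m : F) / (K : F)) + (b - (m' : F) / (K : F))) hone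
      have hqr : le 0 (((4 * m * m' : ℕ) : F) / ((K ^ 2 : ℕ) : F)) := hPq _ _
      have hqy : le 0 (((4 * m : ℕ) : F) / (K : F) * (b - (m' : F) / (K : F))) :=
        hPscale _ _ _ hm'1
      have hrx : le 0 (((4 * m' : ℕ) : F) / (K : F) * (a - (m : F) / (K : F))) :=
        hPscale _ _ _ hm1
      have total := hPadd _ _ (hPadd _ _ (hPadd _ _ hqr hqy) hrx) (hPadd _ _ hsq2 hxy)
      have e : ((4 * m * m' : ℕ) : F) / ((K ^ 2 : ℕ) : F)
          + ((4 * m : ℕ) : F) / (K : F) * (b - (m' : F) / (K : F))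
          + ((4 * m' : ℕ) : F) / (K : F) * (a - (m : F) / (K : F))
          + ((((a - (m : F) / (K : F)) + (b - (m' : F) / (K : F))) ^ 2)
            + (2 / (K : F) ^ 2 - ((a - (m : F) / (K : F)) - (b - (m' : F) / (K : F))) ^ 2))
          = 2 / (K : F) ^ 2 + 4 * (a * b) := by
        push_cast; ring
      rwa [e] at total
    have hsne : -(a * b) ≠ 0 := by simpa using hne
    have hw : le 0 (-(a * b))⁻¹ := by
      have := hsq _ (-(a * b))⁻¹ hs
      have e : -(a * b) * ((-(a * b))⁻¹) ^ 2 = (-(a * b))⁻¹ := by field_simp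
      rwa [e] at this
    obtain ⟨N, hN⟩ := harch (-(a * b))⁻¹
    have hA := hsq _ ((-(a * b))⁻¹ - ((N : F) + 2)) hs
    have eA : -(a * b) * ((-(a * b))⁻¹ - ((N : F) + 2)) ^ 2
        = (-(a * b))⁻¹ - 2 * ((N : F) + 2) + ((N : F) + 2) ^ 2 * (-(a * b)) := by
      linear_combination ((-(a * b))⁻¹ - 2 * ((N : F) + 2)) * mul_inv_cancel₀ hsne
    rw [eA] at hA
    have hkey := key (N + 2) (by omega)
    have hscaled := hPscale ((N + 2) ^ 2) 4 _ hkey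
    have hN2F : ((N : F) + 2) ≠ 0 := by
      have h4 : ((N + 2 : ℕ) : F) ≠ 0 := Nat.cast_ne_zero.mpr (by omega)
      push_cast at h4; exact h4
    have eS : (((N + 2) ^ 2 : ℕ) : F) / ((4 : ℕ) : F)
        * (2 / (((N + 2 : ℕ)) : F) ^ 2 + 4 * (a * b))
        = 1 / 2 + ((N : F) + 2) ^ 2 * (a * b) := by
      push_cast; field_simp; ring
    rw [eS] at hscaled
    have hsum := hPadd _ _ hA hscaled
    have hNle : le 0 ((N : F) - (-(a * b))⁻¹) := (hsub _ _).mp hN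
    have hsum2 := hPadd _ _ hsum hNle
    have eFin : (-(a * b))⁻¹ - 2 * ((N : F) + 2) + ((N : F) + 2) ^ 2 * (-(a * b))
        + (1 / 2 + ((N : F) + 2) ^ 2 * (a * b)) + ((N : F) - (-(a * b))⁻¹)
        = -((N : F) + 7 / 2) := by ring
    rw [eFin] at hsum2
    have hfin := hPnatmul 2 _ hsum2
    have eFin2 : ((2 : ℕ) : F) * -((N : F) + 7 / 2) = -(((2 * N + 7 : ℕ)) : F) := by
      push_cast; ring
    rw [eFin2] at hfin
    have := hcontra _ hfin
    omega
end
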